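/- arXiv:1909.09228 — 6 statements merged into one kernel-verified Lean document; each statement's English description precedes it below -/
import Mathlib

section
/- Under these assumptions, for every agent i the belief μ_{it} converges almost surely, as t → ∞, to ( ∏_{j=1}^m Λ̃_j )^{1/m}, where Λ̃_j = [(R_j+K−1)! / ((K−1)! ∏_{k=1}^K r_{jk}!)] · ∏_{k=1}^K (π*_{jk})^{r_{jk}}. -/
open MeasureTheory ProbabilityTheory Filter Finset

/-- Number of times category `k` was observed among the first `t` signals
(the signal at time `τ ≥ 1` is `X (τ - 1)`, i.e. `X` is indexed from `0`). -/
def sigCount {Ω : Type*} {K : ℕ} (X : ℕ → Ω → Fin K) (k : Fin K) (t : ℕ) (x : Ω) : ℕ :=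
  ((Finset.range t).filter (fun τ => X τ x = k)).card

open Filter Finset

section Osc
variable {m : ℕ} (hne : (Finset.univ : Finset (Fin m)).Nonempty)

noncomputable def osc (v : Fin m → ℝ) : ℝ :=
  Finset.univ.sup' hne v - Finset.univ.inf' hne v

lemma sub_le_osc (v : Fin m → ℝ) (i j : Fin m) : v i - v j ≤ osc hne v :=
  sub_le_sub (Finset.le_sup' v (mem_univ i)) (Finset.inf'_le v (mem_univ j))

lemma osc_nonneg (v : Fin m → ℝ) : 0 ≤ osc hne v := by
  obtain ⟨i, -⟩ := id hne
  have := sub_le_osc hne v i i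
  linarith

lemma osc_le {v : Fin m → ℝ} {c : ℝ} (h : ∀ i j, v i - v j ≤ c) : osc hne v ≤ c := by
  obtain ⟨i, -, hi⟩ := Finset.exists_mem_eq_sup' hne v
  obtain ⟨j, -, hj⟩ := Finset.exists_mem_eq_inf' hne v
  rw [osc, hi, hj]; exact h i j

lemma osc_add_le (v w : Fin m → ℝ) : osc hne (v + w) ≤ osc hne v + osc hne w := by
  refine osc_le hne fun i j => ?_
  have h1 := sub_le_osc hne v i j
  have h2 := sub_le_osc hne w i j
  simp only [Pi.add_apply]; linarith

lemma osc_sum_le {α : Type*} (F : Finset α) (f : α → Fin m → ℝ) :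
    osc hne (∑ s ∈ F, f s) ≤ ∑ s ∈ F, osc hne (f s) := by
  classical
  induction F using Finset.induction with
  | empty => simp [osc]
  | insert _ _ hs ih =>
      rw [Finset.sum_insert hs, Finset.sum_insert hs]
      exact (osc_add_le hne _ _).trans (by linarith)

lemma osc_mulVec_le {δ : ℝ} (hδ : 0 ≤ δ) (B : Matrix (Fin m) (Fin m) ℝ)
    (hB : ∀ i j, δ ≤ B i j) (hrow : ∀ i, ∑ j, B i j = 1) (v : Fin m → ℝ) :
    osc hne (B.mulVec v) ≤ (1 - m * δ) * osc hne v := by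
  refine osc_le hne fun i j => ?_
  have hinf : ∀ k, Finset.univ.inf' hne v ≤ v k := fun k => Finset.inf'_le v (mem_univ k)
  have hosc : ∀ k, v k - Finset.univ.inf' hne v ≤ osc hne v := fun k =>
    sub_le_sub (Finset.le_sup' v (mem_univ k)) le_rfl
  set I := Finset.univ.inf' hne v with hI
  have key : B.mulVec v i - B.mulVec v j = ∑ k, (B i k - B j k) * (v k - I) := by
    simp only [Matrix.mulVec, dotProduct]
    have h1 : ∑ k, (B i k - B j k) * (v k - I)
        = ∑ k, (B i k * v k) - ∑ k, (B j k * v k)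
          - ((∑ k, B i k) * I - (∑ k, B j k) * I) := by
      simp only [sub_mul, mul_sub, Finset.sum_sub_distrib, Finset.sum_mul]
    rw [h1, hrow i, hrow j]
    ring
  rw [key]
  have step1 : ∑ k, (B i k - B j k) * (v k - I)
      ≤ ∑ k, (B i k - min (B i k) (B j k)) * osc hne v := by
    refine Finset.sum_le_sum fun k _ => ?_
    have h1 : (B i k - B j k) * (v k - I) ≤ (B i k - min (B i k) (B j k)) * (v k - I) :=
      mul_le_mul_of_nonneg_right (by have := min_le_right (B i k) (B j k); linarith)
        (by have := hinf k; linarith)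
    have h2 : (B i k - min (B i k) (B j k)) * (v k - I)
        ≤ (B i k - min (B i k) (B j k)) * osc hne v :=
      mul_le_mul_of_nonneg_left (hosc k) (by have := min_le_left (B i k) (B j k); linarith)
    linarith
  refine step1.trans ?_
  rw [← Finset.sum_mul]
  refine mul_le_mul_of_nonneg_right ?_ (osc_nonneg hne v)
  have : ∑ k, (B i k - min (B i k) (B j k)) = 1 - ∑ k, min (B i k) (B j k) := by
    rw [Finset.sum_sub_distrib, hrow i]
  rw [this]
  have : (m : ℝ) * δ ≤ ∑ k, min (B i k) (B j k) := by
    calc (m : ℝ) * δ = ∑ _k : Fin m, δ := by simp [mul_comm]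
    _ ≤ _ := Finset.sum_le_sum fun k _ => le_min (hB i k) (hB j k)
  linarith

end Osc

/-- If `a (t+N) ≤ ρ a t + ε t` with `0 ≤ ρ < 1`, `a ≥ 0`, `ε → 0`, then `a → 0`. -/
lemma tendsto_zero_of_contract {a ε : ℕ → ℝ} {ρ : ℝ} {N : ℕ} (hN : 1 ≤ N)
    (ha : ∀ t, 0 ≤ a t) (hρ0 : 0 ≤ ρ) (hρ1 : ρ < 1)
    (hrec : ∀ t, a (t + N) ≤ ρ * a t + ε t)
    (hε : Tendsto ε atTop (nhds 0)) : Tendsto a atTop (nhds 0) := by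
  rw [Metric.tendsto_atTop]
  intro η hη
  have h1ρ : 0 < 1 - ρ := by linarith
  set e := (1 - ρ) * η / 2 with he
  have hepos : 0 < e := by positivity
  obtain ⟨T, hT⟩ := (Metric.tendsto_atTop.1 hε) e hepos
  have hTe : ∀ s ≥ T, ε s ≤ e := fun s hs => by
    have := hT s hs; rw [Real.dist_eq, sub_zero] at this
    exact (abs_lt.1 this).2.le
  -- iterated bound
  have claim : ∀ k t, T ≤ t → a (t + k * N) ≤ ρ ^ k * a t + e / (1 - ρ) := by
    intro k
    induction k with
    | zero => intro t _; simp; nlinarith [ha t, div_nonneg hepos.le h1ρ.le]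
    | succ k ih =>
        intro t ht
        have h1 : a (t + (k + 1) * N) = a ((t + k * N) + N) := by ring_nf
        have h2 := hrec (t + k * N)
        have h3 := ih t ht
        have h4 : ε (t + k * N) ≤ e := hTe _ (by omega)
        have h5 : ρ * a (t + k * N) ≤ ρ * (ρ ^ k * a t + e / (1 - ρ)) :=
          mul_le_mul_of_nonneg_left h3 hρ0
        have h6 : ρ * (e / (1 - ρ)) + e = e / (1 - ρ) := by field_simp; ring
        rw [h1, pow_succ]
        calc a ((t + k * N) + N) ≤ ρ * a (t + k * N) + ε (t + k * N) := h2
          _ ≤ ρ * (ρ ^ k * a t + e / (1 - ρ)) + e := by linarith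
          _ = ρ ^ k * ρ * a t + (ρ * (e / (1 - ρ)) + e) := by ring
          _ = ρ ^ k * ρ * a t + e / (1 - ρ) := by rw [h6]
  -- bound over the window [T, T+N)
  have hNne : (Finset.range N).Nonempty := ⟨0, Finset.mem_range.2 (by omega)⟩
  set B := (Finset.range N).sup' hNne (fun s => a (T + s)) with hB
  have hBmem : ∀ s < N, a (T + s) ≤ B := fun s hs =>
    Finset.le_sup' (fun s => a (T + s)) (Finset.mem_range.2 hs)
  have hB0 : 0 ≤ B := le_trans (ha (T + 0)) (hBmem 0 (by omega))
  have heη : e / (1 - ρ) = η / 2 := by field_simp [he]; ring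
  -- choose k₀ with ρ^k₀ * B < η/2
  have hpow : Tendsto (fun k => ρ ^ k * B) atTop (nhds 0) := by
    simpa using (tendsto_pow_atTop_nhds_zero_of_lt_one hρ0 hρ1).mul_const B
  obtain ⟨k₀, hk₀⟩ := (Metric.tendsto_atTop.1 hpow) (η / 2) (by linarith)
  have hk₀' : ρ ^ k₀ * B < η / 2 := by
    have := hk₀ k₀ le_rfl; rw [Real.dist_eq, sub_zero] at this
    calc ρ ^ k₀ * B ≤ |ρ ^ k₀ * B| := le_abs_self _
      _ < η / 2 := this
  refine ⟨T + k₀ * N + N, fun t ht => ?_⟩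
  -- write t = T + s + k*N with s < N, k ≥ k₀
  obtain ⟨s, k, hs, hk, hteq⟩ : ∃ s k, s < N ∧ k₀ ≤ k ∧ t = (T + s) + k * N := by
    refine ⟨(t - T) % N, (t - T) / N, Nat.mod_lt _ (by omega), ?_, ?_⟩
    · rw [Nat.le_div_iff_mul_le (show 0 < N by omega)]
      omega
    · have h1 := Nat.div_add_mod (t - T) N
      have h2 : N * ((t - T) / N) = ((t - T) / N) * N := Nat.mul_comm _ _
      omega
  have hfin := claim k (T + s) (by omega)
  have : a t ≤ ρ ^ k * B + η / 2 := by
    rw [hteq]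
    refine hfin.trans ?_
    rw [heη]
    have := mul_le_mul_of_nonneg_left (hBmem s hs) (pow_nonneg hρ0 k)
    linarith
  have hρk : ρ ^ k * B ≤ ρ ^ k₀ * B :=
    mul_le_mul_of_nonneg_right (pow_le_pow_of_le_one hρ0 hρ1.le hk) hB0
  rw [Real.dist_eq, sub_zero, abs_of_nonneg (ha t)]
  linarith

section Core
variable {m : ℕ}

lemma pow_row_stochastic (A : Matrix (Fin m) (Fin m) ℝ)
    (hA_nonneg : ∀ i j, 0 ≤ A i j) (hA_row : ∀ i, ∑ j, A i j = 1) (n : ℕ) :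
    (∀ i j, 0 ≤ (A ^ n) i j) ∧ (∀ i, ∑ j, (A ^ n) i j = 1) := by
  induction n with
  | zero =>
      constructor
      · intro i j; simp [Matrix.one_apply]; split <;> norm_num
      · intro i; simp [Matrix.one_apply]
  | succ n ih =>
      constructor
      · intro i j
        rw [pow_succ, Matrix.mul_apply]
        exact Finset.sum_nonneg fun k _ => mul_nonneg (ih.1 i k) (hA_nonneg k j)
      · intro i
        simp only [pow_succ, Matrix.mul_apply]
        rw [Finset.sum_comm]
        calc ∑ k, ∑ j, (A ^ n) i k * A k j = ∑ k, (A ^ n) i k * ∑ j, A k j := by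
              simp [Finset.mul_sum]
          _ = 1 := by simp [hA_row, ih.2 i]
  
lemma mulVec_sum (A : Matrix (Fin m) (Fin m) ℝ) {α : Type*} (F : Finset α)
    (f : α → Fin m → ℝ) : A.mulVec (∑ s ∈ F, f s) = ∑ s ∈ F, A.mulVec (f s) := by
  ext i
  simp only [Matrix.mulVec, dotProduct, Finset.sum_apply, Finset.mul_sum]
  exact Finset.sum_comm

/-- Explicit solution of the linear recursion `u (t+1) = L t + A u t`. -/
lemma iterate_formula (A : Matrix (Fin m) (Fin m) ℝ) (L : ℕ → Fin m → ℝ)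
    (u : ℕ → Fin m → ℝ) (hu : ∀ t, u (t + 1) = L t + A.mulVec (u t)) :
    ∀ n t, u (t + n) = (A ^ n).mulVec (u t)
      + ∑ s ∈ Finset.range n, (A ^ (n - 1 - s)).mulVec (L (t + s)) := by
  intro n
  induction n with
  | zero => intro t; simp [Matrix.mulVec_one]
  | succ n ih =>
      intro t
      have h1 : t + (n + 1) = (t + n) + 1 := by omega
      rw [h1, hu (t + n), ih t]
      rw [Matrix.mulVec_add, mulVec_sum, Finset.sum_range_succ]
      have h2 : A.mulVec ((A ^ n).mulVec (u t)) = (A ^ (n + 1)).mulVec (u t) := by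
        rw [Matrix.mulVec_mulVec, ← pow_succ']
      have h3 : ∀ s ∈ Finset.range n,
          A.mulVec ((A ^ (n - 1 - s)).mulVec (L (t + s)))
            = (A ^ (n + 1 - 1 - s)).mulVec (L (t + s)) := by
        intro s hs
        rw [Matrix.mulVec_mulVec, ← pow_succ']
        have he : n - 1 - s + 1 = n + 1 - 1 - s := by
          have := Finset.mem_range.1 hs; omega
        rw [he]
      rw [Finset.sum_congr rfl h3]
      have h4 : (A ^ (n + 1 - 1 - n)) = (1 : Matrix (Fin m) (Fin m) ℝ) := by
        norm_num
      rw [h4, Matrix.one_mulVec, h2]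
      abel

/-- Core deterministic convergence lemma. -/
lemma core_lemma (hne : (Finset.univ : Finset (Fin m)).Nonempty)
    (A : Matrix (Fin m) (Fin m) ℝ)
    (hA_nonneg : ∀ i j, 0 ≤ A i j)
    (hA_row : ∀ i, ∑ j, A i j = 1) (hA_col : ∀ j, ∑ i, A i j = 1)
    {N : ℕ} (hN : 1 ≤ N) {δ : ℝ} (hδ : 0 < δ) (hAN : ∀ i j, δ ≤ (A ^ N) i j)
    (L : ℕ → Fin m → ℝ) (S : Fin m → ℝ)
    (hL : ∀ j, Tendsto (fun t => ∑ s ∈ Finset.range t, L s j) atTop (nhds (S j)))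
    (u : ℕ → Fin m → ℝ) (hu0 : u 0 = 0)
    (hu : ∀ t, u (t + 1) = L t + A.mulVec (u t)) :
    ∀ i, Tendsto (fun t => u t i) atTop (nhds ((∑ j, S j) / m)) := by
  have hm0 : 0 < (m : ℝ) := by
    obtain ⟨i, -⟩ := id hne
    exact_mod_cast Fin.pos i
  -- L tends to 0
  have hL0 : ∀ j, Tendsto (fun t => L t j) atTop (nhds 0) := by
    intro j
    have h1 : Tendsto (fun t => ∑ s ∈ Finset.range (t+1), L s j
        - ∑ s ∈ Finset.range t, L s j) atTop (nhds (S j - S j)) :=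
      ((hL j).comp (tendsto_add_atTop_nat 1)).sub (hL j)
    simpa [Finset.sum_range_succ] using h1
  -- osc of L tends to 0
  have hoscL : Tendsto (fun t => osc hne (L t)) atTop (nhds 0) := by
    have hbound : ∀ t, osc hne (L t) ≤ ∑ j, 2 * |L t j| := by
      intro t
      refine osc_le hne fun i j => ?_
      have h1 : |L t i| ≤ ∑ j, |L t j| :=
        Finset.single_le_sum (f := fun j => |L t j|) (fun j _ => abs_nonneg _) (mem_univ i)
      have h2 : |L t j| ≤ ∑ j, |L t j| :=
        Finset.single_le_sum (f := fun j => |L t j|) (fun j _ => abs_nonneg _) (mem_univ j)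
      have h3 : L t i - L t j ≤ |L t i| + |L t j| := by
        have := le_abs_self (L t i); have := neg_abs_le (L t j); linarith
      calc L t i - L t j ≤ |L t i| + |L t j| := h3
        _ ≤ 2 * ∑ j, |L t j| := by linarith
        _ = ∑ j, 2 * |L t j| := by rw [Finset.mul_sum]
    have hsum : Tendsto (fun t => ∑ j, 2 * |L t j|) atTop (nhds 0) := by
      have : Tendsto (fun t => ∑ j : Fin m, 2 * |L t j|) atTop (nhds (∑ j : Fin m, 2 * |(0:ℝ)|)) :=
        tendsto_finset_sum _ fun j _ => (((hL0 j).abs).const_mul 2)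
      simpa using this
    exact squeeze_zero (fun t => osc_nonneg hne _) hbound hsum
  -- osc of u tends to 0
  have hoscu : Tendsto (fun t => osc hne (u t)) atTop (nhds 0) := by
    have hrowN := (pow_row_stochastic A hA_nonneg hA_row N).2
    have hρ0 : 0 ≤ 1 - (m:ℝ) * δ := by
      have h1 : (m:ℝ) * δ = ∑ _j : Fin m, δ := by simp [mul_comm]
      have h2 : ∑ _j : Fin m, δ ≤ ∑ j, (A ^ N) (Classical.choice (by
        obtain ⟨i, -⟩ := id hne; exact ⟨i⟩ : Nonempty (Fin m))) j := by
        exact Finset.sum_le_sum fun j _ => hAN _ j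
      rw [hrowN _] at h2
      linarith [h1 ▸ h2]
    have hρ1 : 1 - (m:ℝ) * δ < 1 := by nlinarith
    refine tendsto_zero_of_contract (ε := fun t => ∑ s ∈ Finset.range N, osc hne (L (t + s))) hN (fun t => osc_nonneg hne _) hρ0 hρ1 ?_ ?_
    · intro t
      have hform := iterate_formula A L u hu N t
      have h1 : osc hne (u (t + N))
          ≤ osc hne ((A ^ N).mulVec (u t))
            + osc hne (∑ s ∈ Finset.range N, (A ^ (N - 1 - s)).mulVec (L (t + s))) := by
        rw [hform]; exact osc_add_le hne _ _
      have h2 : osc hne ((A ^ N).mulVec (u t)) ≤ (1 - m * δ) * osc hne (u t) :=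
        osc_mulVec_le hne hδ.le _ hAN hrowN _
      have h3 : osc hne (∑ s ∈ Finset.range N, (A ^ (N - 1 - s)).mulVec (L (t + s)))
          ≤ ∑ s ∈ Finset.range N, osc hne (L (t + s)) := by
        refine (osc_sum_le hne _ _).trans (Finset.sum_le_sum fun s _ => ?_)
        have hp := pow_row_stochastic A hA_nonneg hA_row (N - 1 - s)
        have := osc_mulVec_le hne le_rfl (A ^ (N - 1 - s))
          (fun i j => hp.1 i j) hp.2 (L (t + s))
        simpa using this
      calc osc hne (u (t + N)) ≤ _ := h1
        _ ≤ (1 - m * δ) * osc hne (u t) + ∑ s ∈ Finset.range N, osc hne (L (t + s)) := by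
            linarith
    · have : Tendsto (fun t => ∑ s ∈ Finset.range N, osc hne (L (t + s))) atTop
          (nhds (∑ _s ∈ Finset.range N, (0:ℝ))) :=
        tendsto_finset_sum _ fun s _ => hoscL.comp (tendsto_add_atTop_nat s)
      simpa using this
  -- the average of u
  have havg : Tendsto (fun t => (∑ j, u t j) / m) atTop (nhds ((∑ j, S j) / m)) := by
    have hsum_eq : ∀ t, ∑ j, u t j = ∑ s ∈ Finset.range t, ∑ j, L s j := by
      intro t
      induction t with
      | zero => simp [hu0]
      | succ t ih =>
          rw [Finset.sum_range_succ, ← ih]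
          rw [hu t]
          simp only [Pi.add_apply]
          rw [Finset.sum_add_distrib]
          have : ∑ j, A.mulVec (u t) j = ∑ j, u t j := by
            simp only [Matrix.mulVec, dotProduct]
            rw [Finset.sum_comm]
            calc ∑ k, ∑ j, A j k * u t k = ∑ k, (∑ j, A j k) * u t k := by
                  simp [Finset.sum_mul]
              _ = ∑ k, u t k := by simp [hA_col]
          rw [this]; ring
    have h1 : Tendsto (fun t => ∑ j, u t j) atTop (nhds (∑ j, S j)) := by
      have : Tendsto (fun t => ∑ j, ∑ s ∈ Finset.range t, L s j) atTop (nhds (∑ j, S j)) :=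
        tendsto_finset_sum _ fun j _ => hL j
      convert this using 1
      ext t
      rw [hsum_eq t, Finset.sum_comm]
    exact h1.div_const m
  -- combine
  intro i
  have hdev : Tendsto (fun t => u t i - (∑ j, u t j) / m) atTop (nhds 0) := by
    refine squeeze_zero_norm (fun t => ?_) hoscu
    rw [Real.norm_eq_abs, abs_le]
    constructor
    · have h1 : ∀ j, u t j - u t i ≤ osc hne (u t) := fun j => sub_le_osc hne _ j i
      have h2 : ∑ j, (u t j - u t i) ≤ ∑ _j : Fin m, osc hne (u t) :=
        Finset.sum_le_sum fun j _ => h1 j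
      rw [Finset.sum_sub_distrib] at h2
      simp only [Finset.sum_const, Finset.card_univ, Fintype.card_fin, nsmul_eq_mul] at h2
      have h4 : (∑ j, u t j) / m * m = ∑ j, u t j := div_mul_cancel₀ _ hm0.ne'
      nlinarith [h2, hm0, h4]
    · have h1 : ∀ j, u t i - u t j ≤ osc hne (u t) := fun j => sub_le_osc hne _ i j
      have h2 : ∑ j, (u t i - u t j) ≤ ∑ _j : Fin m, osc hne (u t) :=
        Finset.sum_le_sum fun j _ => h1 j
      rw [Finset.sum_sub_distrib] at h2
      simp only [Finset.sum_const, Finset.card_univ, Fintype.card_fin, nsmul_eq_mul] at h2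
      have h4 : (∑ j, u t j) / m * m = ∑ j, u t j := div_mul_cancel₀ _ hm0.ne'
      nlinarith [h2, hm0, h4]
  have := hdev.add havg
  simpa using this

end Core


/-- telescoping identity -/
lemma teleNat (c R : ℕ) :
    (∏ a ∈ Finset.range R, (c + 1 + a)) * c = (∏ a ∈ Finset.range R, (c + a)) * (c + R) := by
  induction R with
  | zero => simp
  | succ R ih =>
      rw [Finset.prod_range_succ, Finset.prod_range_succ]
      have : (∏ a ∈ Finset.range R, (c + 1 + a)) * (c + 1 + R) * c
          = ((∏ a ∈ Finset.range R, (c + 1 + a)) * c) * (c + 1 + R) := by ring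
      rw [this, ih]; ring

lemma prod_range_add_one (n : ℕ) : ∏ a ∈ Finset.range n, (a + 1) = n.factorial := by
  induction n with
  | zero => simp
  | succ n ih => rw [Finset.prod_range_succ, ih, Nat.factorial_succ]; ring

lemma factorial_prod (K R : ℕ) (hK : 1 ≤ K) :
    (K - 1).factorial * ∏ a ∈ Finset.range R, (K + a) = (R + K - 1).factorial := by
  induction R with
  | zero => simp
  | succ R ih =>
      rw [Finset.prod_range_succ, ← mul_assoc, ih]
      have h1 : R + 1 + K - 1 = (R + K - 1) + 1 := by omega
      rw [h1, Nat.factorial_succ]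
      have h2 : R + K - 1 + 1 = K + R := by omega
      rw [h2, mul_comm]

/-- the running uncertain-likelihood product, as an explicit formula in the counts `n`. -/
noncomputable def Pl (K : ℕ) (R : ℕ) (r : Fin K → ℕ) (t : ℕ) (n : Fin K → ℕ) : ℝ :=
  (((∏ a ∈ Finset.range R, (K + a) : ℕ) : ℝ) *
      ∏ k, ((∏ a ∈ Finset.range (r k), (n k + a + 1) : ℕ) : ℝ)) /
    (((∏ a ∈ Finset.range R, (t + K + a) : ℕ) : ℝ) *
      ∏ k, ((∏ a ∈ Finset.range (r k), (a + 1) : ℕ) : ℝ))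

lemma Pl_pos {K R : ℕ} (hK : 1 ≤ K) (r : Fin K → ℕ) (t : ℕ) (n : Fin K → ℕ) :
    0 < Pl K R r t n := by
  have h1 : (0:ℝ) < ((∏ a ∈ Finset.range R, (K + a) : ℕ) : ℝ) := by
    have : 0 < ∏ a ∈ Finset.range R, (K + a) := Finset.prod_pos fun a _ => by omega
    exact_mod_cast this
  have h2 : (0:ℝ) < ∏ k, ((∏ a ∈ Finset.range (r k), (n k + a + 1) : ℕ) : ℝ) :=
    Finset.prod_pos fun k _ => by
      have : 0 < ∏ a ∈ Finset.range (r k), (n k + a + 1) := Finset.prod_pos fun a _ => by omega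
      exact_mod_cast this
  have h3 : (0:ℝ) < ((∏ a ∈ Finset.range R, (t + K + a) : ℕ) : ℝ) := by
    have : 0 < ∏ a ∈ Finset.range R, (t + K + a) := Finset.prod_pos fun a _ => by omega
    exact_mod_cast this
  have h4 : (0:ℝ) < ∏ k, ((∏ a ∈ Finset.range (r k), (a + 1) : ℕ) : ℝ) :=
    Finset.prod_pos fun k _ => by
      have : 0 < ∏ a ∈ Finset.range (r k), (a + 1) := Finset.prod_pos fun a _ => by omega
      exact_mod_cast this
  exact div_pos (mul_pos h1 h2) (mul_pos h3 h4)

lemma Pl_zero {K R : ℕ} (hK : 1 ≤ K) (r : Fin K → ℕ) :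
    Pl K R r 0 (fun _ => 0) = 1 := by
  unfold Pl
  have h1 : ∀ a, 0 + K + a = K + a := fun a => by omega
  simp only [h1, zero_add]
  rw [div_self]
  have h3 : (0:ℝ) < ((∏ a ∈ Finset.range R, (K + a) : ℕ) : ℝ) := by
    have : 0 < ∏ a ∈ Finset.range R, (K + a) := Finset.prod_pos fun a _ => by omega
    exact_mod_cast this
  have h4 : (0:ℝ) < ∏ k, ((∏ a ∈ Finset.range (r k), (a + 1) : ℕ) : ℝ) :=
    Finset.prod_pos fun k _ => by
      have : 0 < ∏ a ∈ Finset.range (r k), (a + 1) := Finset.prod_pos fun a _ => by omega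
      exact_mod_cast this
  exact (mul_pos h3 h4).ne'

/-- one-step ratio identity. -/
lemma Pl_succ {K R : ℕ} (hK : 1 ≤ K) (r : Fin K → ℕ) (t : ℕ) (n : Fin K → ℕ) (k₀ : Fin K) :
    Pl K R r (t + 1) (Function.update n k₀ (n k₀ + 1)) =
      Pl K R r t n * ((((r k₀ + n k₀ + 1) * (t + K) : ℕ) : ℝ) /
        (((R + t + K) * (n k₀ + 1) : ℕ) : ℝ)) := by
  classical
  unfold Pl
  have hcn : (((r k₀ + n k₀ + 1) * (t + K) : ℕ) : ℝ)
      = ((r k₀ + n k₀ + 1 : ℕ) : ℝ) * ((t + K : ℕ) : ℝ) := by push_cast; ring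
  have hcd : (((R + t + K) * (n k₀ + 1) : ℕ) : ℝ)
      = ((R + t + K : ℕ) : ℝ) * ((n k₀ + 1 : ℕ) : ℝ) := by push_cast; ring
  rw [hcn, hcd]
  set Cn : ℝ := ((∏ a ∈ Finset.range R, (K + a) : ℕ) : ℝ) with hCn
  set E : ℝ := ∏ k, ((∏ a ∈ Finset.range (r k), (a + 1) : ℕ) : ℝ) with hE
  set Dt : ℝ := ((∏ a ∈ Finset.range R, (t + K + a) : ℕ) : ℝ) with hDt
  set D1 : ℝ := ((∏ a ∈ Finset.range R, (t + 1 + K + a) : ℕ) : ℝ) with hD1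
  set F0 : ℝ := ∏ k, ((∏ a ∈ Finset.range (r k), (n k + a + 1) : ℕ) : ℝ) with hF0
  set F1 : ℝ := ∏ k, ((∏ a ∈ Finset.range (r k),
    ((Function.update n k₀ (n k₀ + 1)) k + a + 1) : ℕ) : ℝ) with hF1
  set ν : ℝ := ((n k₀ + 1 : ℕ) : ℝ) with hν
  set ρ : ℝ := ((r k₀ + n k₀ + 1 : ℕ) : ℝ) with hρ
  set σ : ℝ := ((R + t + K : ℕ) : ℝ) with hσ
  set τ : ℝ := ((t + K : ℕ) : ℝ) with hτ
  have hEpos : (0:ℝ) < E := by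
    rw [hE]
    refine Finset.prod_pos fun k _ => ?_
    have : 0 < ∏ a ∈ Finset.range (r k), (a + 1) := Finset.prod_pos fun a _ => by omega
    exact_mod_cast this
  have hDtpos : (0:ℝ) < Dt := by
    rw [hDt]
    have : 0 < ∏ a ∈ Finset.range R, (t + K + a) := Finset.prod_pos fun a _ => by omega
    exact_mod_cast this
  have hD1pos : (0:ℝ) < D1 := by
    rw [hD1]
    have : 0 < ∏ a ∈ Finset.range R, (t + 1 + K + a) := Finset.prod_pos fun a _ => by omega
    exact_mod_cast this
  have hνpos : (0:ℝ) < ν := by rw [hν]; exact_mod_cast Nat.succ_pos _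
  have hσpos : (0:ℝ) < σ := by
    rw [hσ]
    have : 0 < R + t + K := by omega
    exact_mod_cast this
  -- key identity (i)
  have keyF : F1 * ν = F0 * ρ := by
    rw [hF1, hF0, hν, hρ]
    have hsplit1 : (∏ k, ((∏ a ∈ Finset.range (r k),
        ((Function.update n k₀ (n k₀ + 1)) k + a + 1) : ℕ) : ℝ))
        = ((∏ a ∈ Finset.range (r k₀), ((Function.update n k₀ (n k₀ + 1)) k₀ + a + 1) : ℕ) : ℝ) *
          ∏ k ∈ Finset.univ.erase k₀, ((∏ a ∈ Finset.range (r k),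
            ((Function.update n k₀ (n k₀ + 1)) k + a + 1) : ℕ) : ℝ) :=
      (Finset.mul_prod_erase Finset.univ _ (Finset.mem_univ k₀)).symm
    have hsplit0 : (∏ k, ((∏ a ∈ Finset.range (r k), (n k + a + 1) : ℕ) : ℝ))
        = ((∏ a ∈ Finset.range (r k₀), (n k₀ + a + 1) : ℕ) : ℝ) *
          ∏ k ∈ Finset.univ.erase k₀, ((∏ a ∈ Finset.range (r k), (n k + a + 1) : ℕ) : ℝ) :=
      (Finset.mul_prod_erase Finset.univ _ (Finset.mem_univ k₀)).symm
    rw [hsplit1, hsplit0]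
    have hrest : ∏ k ∈ Finset.univ.erase k₀, ((∏ a ∈ Finset.range (r k),
        ((Function.update n k₀ (n k₀ + 1)) k + a + 1) : ℕ) : ℝ)
        = ∏ k ∈ Finset.univ.erase k₀, ((∏ a ∈ Finset.range (r k), (n k + a + 1) : ℕ) : ℝ) := by
      refine Finset.prod_congr rfl fun k hk => ?_
      rw [Function.update_of_ne (Finset.ne_of_mem_erase hk)]
    rw [hrest, Function.update_self]
    have keynat : (∏ a ∈ Finset.range (r k₀), (n k₀ + 1 + a + 1)) * (n k₀ + 1)
        = (∏ a ∈ Finset.range (r k₀), (n k₀ + a + 1)) * (r k₀ + n k₀ + 1) := by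
      have h1 := teleNat (n k₀ + 1) (r k₀)
      have h2 : ∀ a ∈ Finset.range (r k₀), n k₀ + 1 + 1 + a = n k₀ + 1 + a + 1 :=
        fun a _ => by omega
      have h3 : ∀ a ∈ Finset.range (r k₀), n k₀ + 1 + a = n k₀ + a + 1 := fun a _ => by omega
      rw [Finset.prod_congr rfl h2, Finset.prod_congr rfl h3] at h1
      rw [h1]
      congr 1
      omega
    have hc2 : ((∏ a ∈ Finset.range (r k₀), (n k₀ + 1 + a + 1) : ℕ) : ℝ) * ((n k₀ + 1 : ℕ) : ℝ)
        = ((∏ a ∈ Finset.range (r k₀), (n k₀ + a + 1) : ℕ) : ℝ) * ((r k₀ + n k₀ + 1 : ℕ) : ℝ) := by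
      exact_mod_cast keynat
    linear_combination (∏ k ∈ Finset.univ.erase k₀,
      ((∏ a ∈ Finset.range (r k), (n k + a + 1) : ℕ) : ℝ)) * hc2
  -- key identity (ii)
  have keyD : D1 * τ = Dt * σ := by
    rw [hD1, hDt, hτ, hσ]
    have keynat : (∏ a ∈ Finset.range R, (t + 1 + K + a)) * (t + K)
        = (∏ a ∈ Finset.range R, (t + K + a)) * (R + t + K) := by
      have h1 := teleNat (t + K) R
      have h2 : ∀ a ∈ Finset.range R, t + K + 1 + a = t + 1 + K + a := fun a _ => by omega
      rw [Finset.prod_congr rfl h2] at h1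
      rw [h1]
      congr 1
      omega
    have hc2 : ((∏ a ∈ Finset.range R, (t + 1 + K + a) : ℕ) : ℝ) * ((t + K : ℕ) : ℝ)
        = ((∏ a ∈ Finset.range R, (t + K + a) : ℕ) : ℝ) * ((R + t + K : ℕ) : ℝ) := by
      exact_mod_cast keynat
    exact hc2
  rw [div_mul_div_comm, div_eq_div_iff (mul_pos hD1pos hEpos).ne' ?hBE]
  case hBE => exact (mul_pos (mul_pos hDtpos hEpos) (mul_pos hσpos hνpos)).ne'
  linear_combination (Cn * E * σ * Dt) * keyF - (Cn * E * F0 * ρ) * keyD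

/-- limit of `Pl` along counts with given frequencies. -/
lemma Pl_tendsto {K R : ℕ} (hK : 1 ≤ K) (r : Fin K → ℕ) (hR : R = ∑ k, r k)
    (π : Fin K → ℝ) (n : Fin K → ℕ → ℕ)
    (hfreq : ∀ k, Tendsto (fun t => ((n k t : ℕ) : ℝ) / t) atTop (nhds (π k))) :
    Tendsto (fun t => Pl K R r t (fun k => n k t)) atTop
      (nhds (((∏ a ∈ Finset.range R, (K + a) : ℕ) : ℝ)
        / (∏ k, (((r k).factorial : ℕ) : ℝ)) * ∏ k, π k ^ r k)) := by
  have hE : (∏ k, ((∏ a ∈ Finset.range (r k), (a + 1) : ℕ) : ℝ))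
      = ∏ k, (((r k).factorial : ℕ) : ℝ) := by
    refine Finset.prod_congr rfl fun k _ => ?_
    rw [prod_range_add_one]
  have hEpos : (0:ℝ) < ∏ k, (((r k).factorial : ℕ) : ℝ) :=
    Finset.prod_pos fun k _ => by exact_mod_cast (r k).factorial_pos
  have hCn : (0:ℝ) < ((∏ a ∈ Finset.range R, (K + a) : ℕ) : ℝ) := by
    have : 0 < ∏ a ∈ Finset.range R, (K + a) := Finset.prod_pos fun a _ => by omega
    exact_mod_cast this
  -- numerator over t^R
  have hnum : Tendsto (fun t : ℕ =>
      ∏ k, ∏ a ∈ Finset.range (r k), (((n k t + a + 1 : ℕ) : ℝ) / t)) atTop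
      (nhds (∏ k, π k ^ r k)) := by
    have : Tendsto (fun t : ℕ =>
        ∏ k, ∏ a ∈ Finset.range (r k), (((n k t + a + 1 : ℕ) : ℝ) / t)) atTop
        (nhds (∏ k, ∏ _a ∈ Finset.range (r k), π k)) := by
      refine tendsto_finset_prod _ fun k _ => tendsto_finset_prod _ fun a _ => ?_
      have h1 : Tendsto (fun t : ℕ => ((n k t : ℕ) : ℝ) / t + ((a + 1 : ℕ) : ℝ) / t) atTop
          (nhds (π k + 0)) :=
        (hfreq k).add (tendsto_const_div_atTop_nhds_zero_nat _)
      have h2 : ∀ t : ℕ, ((n k t + a + 1 : ℕ) : ℝ) / t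
          = ((n k t : ℕ) : ℝ) / t + ((a + 1 : ℕ) : ℝ) / t := by
        intro t; push_cast; ring
      rw [show π k = π k + 0 by ring]
      refine h1.congr fun t => ?_
      rw [← h2 t]
    simpa using this
  -- denominator over t^R
  have hden : Tendsto (fun t : ℕ =>
      ∏ a ∈ Finset.range R, (((t + K + a : ℕ) : ℝ) / t)) atTop
      (nhds 1) := by
    have : Tendsto (fun t : ℕ =>
        ∏ a ∈ Finset.range R, (((t + K + a : ℕ) : ℝ) / t)) atTop
        (nhds (∏ _a ∈ Finset.range R, (1:ℝ))) := by
      refine tendsto_finset_prod _ fun a _ => ?_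
      have h1 : Tendsto (fun t : ℕ => 1 + ((K + a : ℕ) : ℝ) / t) atTop (nhds (1 + 0)) :=
        tendsto_const_nhds.add (tendsto_const_div_atTop_nhds_zero_nat _)
      have h2 : ∀ᶠ t : ℕ in atTop, ((t + K + a : ℕ) : ℝ) / t = 1 + ((K + a : ℕ) : ℝ) / t := by
        filter_upwards [eventually_ge_atTop 1] with t ht
        have ht0 : (t:ℝ) ≠ 0 := by positivity
        push_cast
        field_simp
        ring
      rw [show (1:ℝ) = 1 + 0 by ring]
      exact Tendsto.congr' (h2.mono fun t h => h.symm) h1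
    simpa using this
  -- combine
  have hcomb : Tendsto (fun t : ℕ =>
      ((∏ a ∈ Finset.range R, (K + a) : ℕ) : ℝ) / (∏ k, (((r k).factorial : ℕ) : ℝ))
        * ((∏ k, ∏ a ∈ Finset.range (r k), (((n k t + a + 1 : ℕ) : ℝ) / t))
          / (∏ a ∈ Finset.range R, (((t + K + a : ℕ) : ℝ) / t)))) atTop
      (nhds (((∏ a ∈ Finset.range R, (K + a) : ℕ) : ℝ)
        / (∏ k, (((r k).factorial : ℕ) : ℝ)) * ∏ k, π k ^ r k)) := by
    have h := Tendsto.mul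
      (tendsto_const_nhds (x := ((∏ a ∈ Finset.range R, (K + a) : ℕ) : ℝ)
        / (∏ k, (((r k).factorial : ℕ) : ℝ))))
      (hnum.div hden one_ne_zero)
    simpa using h
  refine Tendsto.congr' ?_ hcomb
  filter_upwards [eventually_ge_atTop 1] with t ht
  have ht0 : (t:ℝ) ≠ 0 := by
    have : (0:ℝ) < t := by exact_mod_cast ht
    exact this.ne'
  unfold Pl
  have hDpos : (0:ℝ) < ((∏ a ∈ Finset.range R, (t + K + a) : ℕ) : ℝ) := by
    have : 0 < ∏ a ∈ Finset.range R, (t + K + a) := Finset.prod_pos fun a _ => by omega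
    exact_mod_cast this
  -- rewrite numerator and denominator
  have hnum_eq : (∏ k, ∏ a ∈ Finset.range (r k), (((n k t + a + 1 : ℕ) : ℝ) / t))
      = (∏ k, ((∏ a ∈ Finset.range (r k), (n k t + a + 1) : ℕ) : ℝ)) / (t:ℝ) ^ R := by
    rw [eq_div_iff (by positivity)]
    have hpow : ((t:ℝ)) ^ R = ∏ k, ∏ _a ∈ Finset.range (r k), (t:ℝ) := by
      rw [hR]
      simp [Finset.prod_const, Finset.prod_pow_eq_pow_sum]
    rw [hpow, ← Finset.prod_mul_distrib]
    refine Finset.prod_congr rfl fun k _ => ?_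
    rw [← Finset.prod_mul_distrib]
    push_cast
    refine Finset.prod_congr rfl fun a _ => ?_
    field_simp
  have hden_eq : (∏ a ∈ Finset.range R, (((t + K + a : ℕ) : ℝ) / t))
      = ((∏ a ∈ Finset.range R, (t + K + a) : ℕ) : ℝ) / (t:ℝ) ^ R := by
    rw [eq_div_iff (by positivity)]
    have hpow : ((t:ℝ)) ^ R = ∏ _a ∈ Finset.range R, (t:ℝ) := by
      simp [Finset.prod_const]
    rw [hpow, ← Finset.prod_mul_distrib]
    push_cast
    refine Finset.prod_congr rfl fun a _ => ?_
    field_simp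
  rw [hnum_eq, hden_eq, hE]
  have htR : ((t:ℝ)) ^ R ≠ 0 := by positivity
  field_simp

lemma sigCount_succ {Ω : Type*} {K : ℕ} (X : ℕ → Ω → Fin K) (k : Fin K) (t : ℕ) (x : Ω) :
    sigCount X k (t + 1) x = sigCount X k t x + if X t x = k then 1 else 0 := by
  unfold sigCount
  rw [Finset.range_add_one, Finset.filter_insert]
  split <;> simp [Finset.card_insert_of_notMem, Finset.notMem_range_self]

lemma freq_tendsto {Ω : Type*} [MeasurableSpace Ω] (P : Measure Ω) [IsProbabilityMeasure P]
    {K : ℕ} (Y : ℕ → Ω → Fin K) (hmeas : ∀ t, Measurable (Y t))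
    (hindep : Pairwise fun s t => IndepFun (Y s) (Y t) P)
    (π : Fin K → ℝ) (hπpos : ∀ k, 0 ≤ π k)
    (hlaw : ∀ t k, P {x | Y t x = k} = ENNReal.ofReal (π k)) (k : Fin K) :
    ∀ᵐ x ∂P, Tendsto (fun t => ((sigCount Y k t x : ℕ) : ℝ) / t) atTop (nhds (π k)) := by
  classical
  set f : Fin K → ℝ := fun a => if a = k then 1 else 0 with hf
  have hfmeas : Measurable f := measurable_of_countable f
  set Z : ℕ → Ω → ℝ := fun t => f ∘ Y t with hZ
  have hZmeas : ∀ t, Measurable (Z t) := fun t => hfmeas.comp (hmeas t)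
  have hint : Integrable (Z 0) P := by
    have hb : ∀ x, ‖Z 0 x‖ ≤ 1 := by
      intro x
      simp only [hZ, hf, Function.comp_apply]
      split <;> simp
    exact (integrable_const (1:ℝ)).mono' (hZmeas 0).aestronglyMeasurable
      (ae_of_all _ hb)
  have hZindep : Pairwise (Function.onFun (IndepFun · · P) Z) := fun s t hst =>
    (hindep hst).comp hfmeas hfmeas
  have hident_Y : ∀ t, IdentDistrib (Y t) (Y 0) P P := by
    intro t
    refine ⟨(hmeas t).aemeasurable, (hmeas 0).aemeasurable, ?_⟩
    refine MeasureTheory.Measure.ext_of_singleton fun a => ?_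
    rw [Measure.map_apply (hmeas t) (measurableSet_singleton a),
      Measure.map_apply (hmeas 0) (measurableSet_singleton a)]
    have h1 : Y t ⁻¹' {a} = {x | Y t x = a} := rfl
    have h2 : Y 0 ⁻¹' {a} = {x | Y 0 x = a} := rfl
    rw [h1, h2, hlaw t a, hlaw 0 a]
  have hident : ∀ t, IdentDistrib (Z t) (Z 0) P P := fun t =>
    (hident_Y t).comp hfmeas
  have hslln := strong_law_ae_real Z hint hZindep hident
  -- expectation
  have hexp : ∫ x, Z 0 x ∂P = π k := by
    have hset : MeasurableSet {x | Y 0 x = k} := (hmeas 0) (measurableSet_singleton k)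
    have h1 : Z 0 = Set.indicator {x | Y 0 x = k} (fun _ => (1:ℝ)) := by
      ext x
      simp only [hZ, hf, Function.comp_apply, Set.indicator]
      by_cases h : Y 0 x = k <;> simp [h]
    rw [h1, MeasureTheory.integral_indicator_const _ hset, measureReal_def, hlaw 0 k]
    simp [ENNReal.toReal_ofReal (hπpos k)]
  rw [hexp] at hslln
  filter_upwards [hslln] with x hx
  have hsum : ∀ t, ∑ s ∈ Finset.range t, Z s x = ((sigCount Y k t x : ℕ) : ℝ) := by
    intro t
    unfold sigCount
    rw [← Finset.sum_boole]
    rfl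
  refine hx.congr fun t => ?_
  rw [hsum t]


/-- Main theorem (log-linear rule with uncertain models): the beliefs converge a.s. to
`(∏_j Λ̃_j)^{1/m}` where `Λ̃_j = [(R_j+K−1)!/((K−1)! ∏ₖ r_{jk}!)] ∏ₖ (π*_{jk})^{r_{jk}}`. -/
theorem loglinear_uncertain_beliefs_tendsto
    {Ω : Type*} [MeasurableSpace Ω] (P : Measure Ω) [IsProbabilityMeasure P]
    (m : ℕ) (hm : 1 ≤ m) (K : ℕ) (hK : 2 ≤ K)
    (A : Matrix (Fin m) (Fin m) ℝ)
    (hA_nonneg : ∀ i j, 0 ≤ A i j)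
    (hA_row : ∀ i, ∑ j, A i j = 1) (hA_col : ∀ j, ∑ i, A i j = 1)
    (hA_prim : ∃ N : ℕ, 1 ≤ N ∧ ∀ i j, 0 < (A ^ N) i j)
    (πstar : Fin m → Fin K → ℝ)
    (hstar_pos : ∀ i k, 0 < πstar i k) (hstar_sum : ∀ i, ∑ k, πstar i k = 1)
    (X : Fin m → ℕ → Ω → Fin K) (hX_meas : ∀ i t, Measurable (X i t))
    (hX_indep : iIndepFun
      (fun p : Fin m × ℕ => X p.1 p.2) P)
    (hX_law : ∀ i t k, P {x | X i t x = k} = ENNReal.ofReal (πstar i k))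
    (r : Fin m → Fin K → ℕ) (R : Fin m → ℕ) (hR : ∀ i, R i = ∑ k, r i k)
    (μ : ℕ → Fin m → Ω → ℝ)
    (hμ0 : ∀ i x, μ 0 i x = 1)
    (hμ : ∀ t i x, μ (t + 1) i x =
      (((r i (X i t x) + sigCount (X i) (X i t x) t x + 1) * (t + 1 + K - 1) : ℕ) : ℝ) /
          (((R i + (t + 1) + K - 1) * (sigCount (X i) (X i t x) t x + 1) : ℕ) : ℝ) *
        ∏ j, (μ t j x) ^ (A i j)) :
    ∀ i : Fin m, ∀ᵐ x ∂P, Tendsto (fun t => μ t i x) atTop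
      (nhds ((∏ j, ((((R j + K - 1).factorial : ℕ) : ℝ) /
            ((((K - 1).factorial : ℕ) : ℝ) * ∏ k, (((r j k).factorial : ℕ) : ℝ)) *
          ∏ k, πstar j k ^ r j k)) ^ ((1 : ℝ) / (m : ℝ)))) := by
  have hK1 : 1 ≤ K := by omega
  have hne : (Finset.univ : Finset (Fin m)).Nonempty := ⟨⟨0, hm⟩, Finset.mem_univ _⟩
  obtain ⟨N, hN1, hANpos⟩ := hA_prim
  -- the uniform lower bound on the entries of A^N
  set δ : ℝ := (Finset.univ : Finset (Fin m)).inf' hne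
    (fun i => Finset.univ.inf' hne fun j => (A ^ N) i j) with hδdef
  have hδpos : 0 < δ := by
    rw [hδdef, Finset.lt_inf'_iff]
    intro i _
    rw [Finset.lt_inf'_iff]
    intro j _
    exact hANpos i j
  have hAN : ∀ i j, δ ≤ (A ^ N) i j := by
    intro i j
    refine le_trans (Finset.inf'_le _ (Finset.mem_univ i)) ?_
    exact Finset.inf'_le _ (Finset.mem_univ j)
  -- limits of the likelihood products
  set Λ : Fin m → ℝ := fun j => ((∏ a ∈ Finset.range (R j), (K + a) : ℕ) : ℝ)
    / (∏ k, (((r j k).factorial : ℕ) : ℝ)) * ∏ k, πstar j k ^ r j k with hΛdef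
  have hΛpos : ∀ j, 0 < Λ j := by
    intro j
    rw [hΛdef]
    have h1 : (0:ℝ) < ((∏ a ∈ Finset.range (R j), (K + a) : ℕ) : ℝ) := by
      have : 0 < ∏ a ∈ Finset.range (R j), (K + a) := Finset.prod_pos fun a _ => by omega
      exact_mod_cast this
    have h2 : (0:ℝ) < ∏ k, (((r j k).factorial : ℕ) : ℝ) :=
      Finset.prod_pos fun k _ => by exact_mod_cast (r j k).factorial_pos
    have h3 : (0:ℝ) < ∏ k, πstar j k ^ r j k :=
      Finset.prod_pos fun k _ => pow_pos (hstar_pos j k) _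
    positivity
  -- identify the limit value in the statement
  have hval : (∏ j, ((((R j + K - 1).factorial : ℕ) : ℝ) /
        ((((K - 1).factorial : ℕ) : ℝ) * ∏ k, (((r j k).factorial : ℕ) : ℝ)) *
      ∏ k, πstar j k ^ r j k)) = ∏ j, Λ j := by
    refine Finset.prod_congr rfl fun j _ => ?_
    have hfac := factorial_prod K (R j) hK1
    have hcast : (((R j + K - 1).factorial : ℕ) : ℝ)
        = (((K - 1).factorial : ℕ) : ℝ) * ((∏ a ∈ Finset.range (R j), (K + a) : ℕ) : ℝ) := by
      exact_mod_cast hfac.symm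
    rw [hΛdef, hcast]
    have hKf : (((K - 1).factorial : ℕ) : ℝ) ≠ 0 := by
      exact_mod_cast (K - 1).factorial_ne_zero
    have hrf : (∏ k, (((r j k).factorial : ℕ) : ℝ)) ≠ 0 :=
      (Finset.prod_pos fun k _ => by exact_mod_cast (r j k).factorial_pos).ne'
    field_simp
  -- almost sure empirical frequencies
  have hfreq : ∀ᵐ x ∂P, ∀ j k,
      Tendsto (fun t => ((sigCount (X j) k t x : ℕ) : ℝ) / t) atTop (nhds (πstar j k)) := by
    rw [ae_all_iff]
    intro j
    rw [ae_all_iff]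
    intro k
    refine freq_tendsto P (X j) (hX_meas j) ?_ (πstar j)
      (fun k' => (hstar_pos j k').le) (hX_law j) k
    intro s t hst
    exact hX_indep.indepFun (show ((j, s) : Fin m × ℕ) ≠ (j, t) by simp [hst])
  intro i
  filter_upwards [hfreq] with x hx
  -- deterministic part
  -- the likelihood product process
  have hPLpos : ∀ j t, 0 < Pl K (R j) (r j) t (fun k => sigCount (X j) k t x) :=
    fun j t => Pl_pos hK1 (r j) t _
  have hPL0 : ∀ j, Pl K (R j) (r j) 0 (fun k => sigCount (X j) k 0 x) = 1 := by
    intro j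
    have h0 : (fun k => sigCount (X j) k 0 x) = fun _ => 0 := by
      funext k; simp [sigCount]
    rw [h0, Pl_zero hK1]
  have hPLsucc : ∀ j t,
      Pl K (R j) (r j) (t + 1) (fun k => sigCount (X j) k (t + 1) x)
        = Pl K (R j) (r j) t (fun k => sigCount (X j) k t x) *
          ((((r j (X j t x) + sigCount (X j) (X j t x) t x + 1) * (t + 1 + K - 1) : ℕ) : ℝ) /
            (((R j + (t + 1) + K - 1) * (sigCount (X j) (X j t x) t x + 1) : ℕ) : ℝ)) := by
    intro j t
    have hupdate : (fun k => sigCount (X j) k (t + 1) x)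
        = Function.update (fun k => sigCount (X j) k t x) (X j t x)
            (sigCount (X j) (X j t x) t x + 1) := by
      funext k
      rw [sigCount_succ]
      by_cases h : k = X j t x
      · subst h; simp
      · rw [Function.update_of_ne h]
        have h' : ¬ X j t x = k := fun hh => h hh.symm
        simp [h']
    have e1 : t + 1 + K - 1 = t + K := by omega
    have e2 : R j + (t + 1) + K - 1 = R j + t + K := by omega
    rw [hupdate, e1, e2, Pl_succ hK1]
  -- positivity of beliefs
  have hμpos : ∀ t j, 0 < μ t j x := by
    intro t
    induction t with
    | zero => intro j; rw [hμ0]; norm_num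
    | succ t ih =>
        intro j
        rw [hμ]
        refine mul_pos (div_pos ?_ ?_) (Finset.prod_pos fun j' _ =>
          Real.rpow_pos_of_pos (ih j') _)
        · have : 0 < (r j (X j t x) + sigCount (X j) (X j t x) t x + 1) * (t + 1 + K - 1) :=
            Nat.mul_pos (by omega) (by omega)
          exact_mod_cast this
        · have : 0 < (R j + (t + 1) + K - 1) * (sigCount (X j) (X j t x) t x + 1) :=
            Nat.mul_pos (by omega) (by omega)
          exact_mod_cast this
  -- log-coordinates
  set u : ℕ → Fin m → ℝ := fun t j => Real.log (μ t j x) with hudef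
  set L : ℕ → Fin m → ℝ := fun t j =>
    Real.log (Pl K (R j) (r j) (t + 1) (fun k => sigCount (X j) k (t + 1) x))
      - Real.log (Pl K (R j) (r j) t (fun k => sigCount (X j) k t x)) with hLdef
  have hu0 : u 0 = 0 := by
    funext j; simp [hudef, hμ0]
  have hurec : ∀ t, u (t + 1) = L t + A.mulVec (u t) := by
    intro t
    funext j
    have hfactor : (((r j (X j t x) + sigCount (X j) (X j t x) t x + 1)
          * (t + 1 + K - 1) : ℕ) : ℝ) /
        (((R j + (t + 1) + K - 1) * (sigCount (X j) (X j t x) t x + 1) : ℕ) : ℝ)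
        = Pl K (R j) (r j) (t + 1) (fun k => sigCount (X j) k (t + 1) x)
          / Pl K (R j) (r j) t (fun k => sigCount (X j) k t x) := by
      symm
      rw [hPLsucc j t]
      exact mul_div_cancel_left₀ _ (hPLpos j t).ne'
    have hprodpos : ∀ j' : Fin m, j' ∈ Finset.univ → (μ t j' x) ^ (A j j') ≠ 0 :=
      fun j' _ => (Real.rpow_pos_of_pos (hμpos t j') _).ne'
    have : u (t + 1) j = Real.log (μ (t + 1) j x) := rfl
    rw [this, hμ, hfactor,
      Real.log_mul (div_pos (hPLpos j (t+1)) (hPLpos j t)).ne'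
        (Finset.prod_ne_zero_iff.2 hprodpos),
      Real.log_div (hPLpos j (t+1)).ne' (hPLpos j t).ne',
      Real.log_prod hprodpos]
    have hlogpow : ∀ j' : Fin m, Real.log ((μ t j' x) ^ (A j j'))
        = A j j' * Real.log (μ t j' x) := fun j' => Real.log_rpow (hμpos t j') _
    simp only [Pi.add_apply, hLdef]
    rw [Finset.sum_congr rfl fun j' _ => hlogpow j']
    rfl
  -- partial sums of L converge
  have hLsum : ∀ j, Tendsto (fun t => ∑ s ∈ Finset.range t, L s j) atTop
      (nhds (Real.log (Λ j))) := by
    intro j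
    have htel : ∀ t, ∑ s ∈ Finset.range t, L s j
        = Real.log (Pl K (R j) (r j) t (fun k => sigCount (X j) k t x)) := by
      intro t
      rw [hLdef]
      rw [Finset.sum_range_sub
        (f := fun s => Real.log (Pl K (R j) (r j) s (fun k => sigCount (X j) k s x)))]
      rw [hPL0 j, Real.log_one, sub_zero]
    have hPLlim : Tendsto (fun t => Pl K (R j) (r j) t (fun k => sigCount (X j) k t x))
        atTop (nhds (Λ j)) :=
      Pl_tendsto hK1 (r j) (hR j) (πstar j) (fun k t => sigCount (X j) k t x)
        (fun k => hx j k)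
    have := hPLlim.log (hΛpos j).ne'
    exact this.congr fun t => (htel t).symm
  -- core convergence
  have hcore := core_lemma hne A hA_nonneg hA_row hA_col hN1 hδpos hAN L
    (fun j => Real.log (Λ j)) hLsum u hu0 hurec
  -- conclude
  have hgoalval : (∏ j, ((((R j + K - 1).factorial : ℕ) : ℝ) /
        ((((K - 1).factorial : ℕ) : ℝ) * ∏ k, (((r j k).factorial : ℕ) : ℝ)) *
      ∏ k, πstar j k ^ r j k)) ^ ((1 : ℝ) / (m : ℝ))
      = Real.exp ((∑ j, Real.log (Λ j)) / m) := by
    rw [hval]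
    have hppos : 0 < ∏ j, Λ j := Finset.prod_pos fun j _ => hΛpos j
    rw [Real.rpow_def_of_pos hppos,
      Real.log_prod (fun j _ => (hΛpos j).ne')]
    rw [mul_one_div]
  rw [hgoalval]
  have hexp := (Real.continuous_exp.continuousAt
    (x := (∑ j, Real.log (Λ j)) / m)).tendsto.comp (hcore i)
  refine hexp.congr fun t => ?_
  simp only [Function.comp_apply, hudef]
  exact Real.exp_log (hμpos t i)
end

section
/- As t → ∞, the uncertain likelihood ratio Λ_θ(t) converges almost surely to Λ̃ = [(R+K−1)! / ((K−1)! ∏_{k=1}^K r_k!)] · ∏_{k=1}^K (π*_k)^{r_k}. -/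
open MeasureTheory ProbabilityTheory Filter Finset

open Topology


lemma fact_add_eq (m n : ℕ) : (m + n).factorial = n.factorial * ∏ j ∈ Finset.range m, (n + j + 1) := by
  induction m with
  | zero => simp
  | succ m ih =>
    rw [Finset.prod_range_succ, ← mul_assoc, ← ih]
    have : m + 1 + n = (m + n) + 1 := by omega
    rw [this, Nat.factorial_succ]
    ring

lemma tendsto_ratio_one (d : ℝ) (hd : 0 < d) :
    Tendsto (fun t : ℕ => (t : ℝ) / ((t : ℝ) + d)) atTop (𝓝 1) := by
  have h1 : Tendsto (fun t : ℕ => (t : ℝ) + d) atTop atTop :=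
    tendsto_atTop_add_const_right _ d tendsto_natCast_atTop_atTop
  have h2 : Tendsto (fun t : ℕ => d / ((t : ℝ) + d)) atTop (𝓝 0) :=
    Tendsto.div_atTop tendsto_const_nhds h1
  have h3 := (tendsto_const_nhds (x := (1:ℝ)) (f := atTop)).sub h2
  rw [sub_zero] at h3
  refine h3.congr fun t => ?_
  have hpos : (0:ℝ) < (t : ℝ) + d := by positivity
  field_simp
  ring

lemma det_tendsto (K R : ℕ) (hK : 1 ≤ K) (r : Fin K → ℕ) (hR : R = ∑ k, r k)
    (π : Fin K → ℝ) (n : Fin K → ℕ → ℕ)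
    (hn : ∀ k, Tendsto (fun t => (n k t : ℝ) / t) atTop (𝓝 (π k))) :
    Tendsto (fun t =>
      (((t + K - 1).factorial * (R + K - 1).factorial : ℕ) : ℝ) /
          (((K - 1).factorial * (R + t + K - 1).factorial : ℕ) : ℝ) *
        ∏ k, (((r k + n k t).factorial : ℕ) : ℝ) /
          (((r k).factorial * (n k t).factorial : ℕ) : ℝ))
      atTop
      (𝓝 ((((R + K - 1).factorial : ℕ) : ℝ) /
          ((((K - 1).factorial : ℕ) : ℝ) * ∏ k, (((r k).factorial : ℕ) : ℝ)) *
        ∏ k, π k ^ r k)) := by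
  set C : ℝ := (((R + K - 1).factorial : ℕ) : ℝ) /
      ((((K - 1).factorial : ℕ) : ℝ) * ∏ k, (((r k).factorial : ℕ) : ℝ)) with hC
  -- the auxiliary function
  set g : ℕ → ℝ := fun t => C *
      (∏ k, ∏ j ∈ Finset.range (r k), ((n k t : ℝ) + j + 1) / t) *
      (∏ j ∈ Finset.range R, (t : ℝ) / (((t + K - 1 : ℕ) : ℝ) + j + 1)) with hg
  have hg_tendsto : Tendsto g atTop (𝓝 (C * (∏ k, π k ^ r k) * 1)) := by
    refine Tendsto.mul (Tendsto.mul tendsto_const_nhds ?_) ?_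
    · have : ∀ k : Fin K, Tendsto (fun t => ∏ j ∈ Finset.range (r k), ((n k t : ℝ) + j + 1) / t)
          atTop (𝓝 (π k ^ r k)) := by
        intro k
        have hlim : Tendsto (fun t => ∏ j ∈ Finset.range (r k), ((n k t : ℝ) + j + 1) / t)
            atTop (𝓝 (∏ _j ∈ Finset.range (r k), π k)) := by
          refine tendsto_finset_prod _ fun j _ => ?_
          have h0 : Tendsto (fun t : ℕ => ((j : ℝ) + 1) / t) atTop (𝓝 0) :=
            tendsto_const_div_atTop_nhds_zero_nat _
          have := (hn k).add h0
          rw [add_zero] at this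
          refine this.congr fun t => ?_
          rw [← add_div]
          ring_nf
        simpa using hlim
      exact tendsto_finset_prod _ fun k _ => this k
    · have : Tendsto (fun t : ℕ => ∏ j ∈ Finset.range R, (t : ℝ) / (((t + K - 1 : ℕ) : ℝ) + j + 1))
          atTop (𝓝 (∏ _j ∈ Finset.range R, (1:ℝ))) := by
        refine tendsto_finset_prod _ fun j _ => ?_
        have hc : ∀ t : ℕ, ((t + K - 1 : ℕ) : ℝ) = (t : ℝ) + ((K - 1 : ℕ) : ℝ) := by
          intro t
          have : t + K - 1 = t + (K - 1) := by omega
          rw [this]; push_cast; ring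
        have := tendsto_ratio_one (((K - 1 : ℕ) : ℝ) + j + 1) (by positivity)
        refine this.congr fun t => ?_
        rw [hc t]; ring_nf
      simpa using this
  rw [mul_one] at hg_tendsto
  refine Tendsto.congr' ?_ hg_tendsto
  filter_upwards [eventually_ge_atTop 1] with t ht
  have htR : (0:ℝ) < (t:ℝ) := by exact_mod_cast ht
  -- rewrite factorials
  have haR : R + t + K - 1 = R + (t + K - 1) := by omega
  have key1 : (((R + t + K - 1).factorial : ℕ) : ℝ) =
      (((t + K - 1).factorial : ℕ) : ℝ) * ∏ j ∈ Finset.range R, (((t + K - 1 : ℕ) : ℝ) + j + 1) := by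
    rw [haR, fact_add_eq R (t + K - 1)]
    push_cast
    ring
  have key2 : ∀ k : Fin K, (((r k + n k t).factorial : ℕ) : ℝ) =
      (((n k t).factorial : ℕ) : ℝ) * ∏ j ∈ Finset.range (r k), ((n k t : ℝ) + j + 1) := by
    intro k
    rw [fact_add_eq (r k) (n k t)]
    push_cast
    ring
  -- abbreviations
  set A : ℝ := (((t + K - 1).factorial : ℕ) : ℝ) with hA
  set F : ℝ := (((R + K - 1).factorial : ℕ) : ℝ) with hF
  set G : ℝ := (((K - 1).factorial : ℕ) : ℝ) with hG
  set PR : ℝ := ∏ j ∈ Finset.range R, (((t + K - 1 : ℕ) : ℝ) + j + 1) with hPR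
  have hA0 : A ≠ 0 := by positivity
  have hG0 : G ≠ 0 := by positivity
  have hPR0 : PR ≠ 0 := by
    rw [hPR]
    refine ne_of_gt (Finset.prod_pos fun j _ => ?_)
    positivity
  have hN0 : ∀ k : Fin K, (((n k t).factorial : ℕ) : ℝ) ≠ 0 := fun k => by positivity
  have hr0 : ∀ k : Fin K, (((r k).factorial : ℕ) : ℝ) ≠ 0 := fun k => by positivity
  -- compute g t
  rw [hg]
  simp only
  -- RHS manipulation
  have rhs1 : (∏ k, ∏ j ∈ Finset.range (r k), ((n k t : ℝ) + j + 1) / t) =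
      (∏ k, ∏ j ∈ Finset.range (r k), ((n k t : ℝ) + j + 1)) / (t : ℝ) ^ R := by
    rw [hR]
    rw [← Finset.prod_pow_eq_pow_sum, ← Finset.prod_div_distrib]
    refine Finset.prod_congr rfl fun k _ => ?_
    rw [Finset.prod_div_distrib, Finset.prod_const, Finset.card_range]
  have rhs2 : (∏ j ∈ Finset.range R, (t : ℝ) / (((t + K - 1 : ℕ) : ℝ) + j + 1)) =
      (t : ℝ) ^ R / PR := by
    rw [hPR, Finset.prod_div_distrib, Finset.prod_const, Finset.card_range]
  rw [rhs1, rhs2]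
  -- LHS manipulation
  push_cast [key1, key2]
  rw [Finset.prod_div_distrib, Finset.prod_mul_distrib, Finset.prod_mul_distrib]
  rw [hC]
  have htr : (t : ℝ) ^ R ≠ 0 := by positivity
  have hQ0 : (∏ k, (((r k).factorial : ℕ) : ℝ)) ≠ 0 := Finset.prod_ne_zero_iff.mpr fun k _ => hr0 k
  have hNN0 : (∏ k, (((n k t).factorial : ℕ) : ℝ)) ≠ 0 := Finset.prod_ne_zero_iff.mpr fun k _ => hN0 k
  field_simp
  ring

lemma slln_sigCount {Ω : Type*} [MeasurableSpace Ω] (P : Measure Ω) [IsProbabilityMeasure P]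
    (K : ℕ) (π : Fin K → ℝ) (hπ_pos : ∀ k, 0 < π k)
    (X : ℕ → Ω → Fin K) (hX_meas : ∀ t, Measurable (X t))
    (hX_indep : iIndepFun X P)
    (hX_law : ∀ t k, P {x | X t x = k} = ENNReal.ofReal (π k)) (k : Fin K) :
    ∀ᵐ x ∂P, Tendsto (fun t => (sigCount X k t x : ℝ) / t) atTop (𝓝 (π k)) := by
  set φ : Fin K → ℝ := fun a => if a = k then 1 else 0 with hφ
  have hφ_meas : Measurable φ := measurable_of_countable φ
  set Y : ℕ → Ω → ℝ := fun i x => φ (X i x) with hY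
  have hYmeas : ∀ i, Measurable (Y i) := fun i => hφ_meas.comp (hX_meas i)
  have hident : ∀ i, IdentDistrib (Y i) (Y 0) P P := by
    intro i
    have hXid : IdentDistrib (X i) (X 0) P P := by
      refine ⟨(hX_meas i).aemeasurable, (hX_meas 0).aemeasurable, ?_⟩
      refine MeasureTheory.Measure.ext_of_singleton fun a => ?_
      rw [Measure.map_apply (hX_meas i) (measurableSet_singleton a),
        Measure.map_apply (hX_meas 0) (measurableSet_singleton a)]
      have h1 : X i ⁻¹' {a} = {x | X i x = a} := rfl
      have h2 : X 0 ⁻¹' {a} = {x | X 0 x = a} := rfl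
      rw [h1, h2, hX_law i a, hX_law 0 a]
    exact hXid.comp hφ_meas
  have hindep : Pairwise (Function.onFun (IndepFun · · P) Y) := by
    intro i j hij
    exact (hX_indep.indepFun hij).comp hφ_meas hφ_meas
  have hint : Integrable (Y 0) P := by
    refine Integrable.mono' (integrable_const (1:ℝ)) (hYmeas 0).aestronglyMeasurable ?_
    refine ae_of_all _ fun x => ?_
    simp only [hY, hφ]
    split_ifs <;> simp
  have hmean : P[Y 0] = π k := by
    have hs : MeasurableSet {x | X 0 x = k} := (hX_meas 0) (measurableSet_singleton k)
    have : Y 0 = Set.indicator {x | X 0 x = k} (fun _ => (1:ℝ)) := by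
      funext x
      simp [hY, hφ, Set.indicator_apply]
    rw [this, integral_indicator_const _ hs, measureReal_def, hX_law 0 k, smul_eq_mul, mul_one,
      ENNReal.toReal_ofReal (hπ_pos k).le]
  have := strong_law_ae_real Y hint hindep hident
  rw [hmean] at this
  filter_upwards [this] with x hx
  refine hx.congr fun t => ?_
  congr 1
  rw [Finset.sum_boole]
  rfl

/-- The uncertain likelihood ratio `Λ_θ(t)` converges almost surely to
`Λ̃ = [(R+K−1)!/((K−1)! ∏ₖ rₖ!)] ∏ₖ (π*ₖ)^{rₖ}`. -/
theorem uncertainLR_tendsto_ae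
    {Ω : Type*} [MeasurableSpace Ω] (P : Measure Ω) [IsProbabilityMeasure P]
    (K : ℕ) (hK : 2 ≤ K)
    (π : Fin K → ℝ) (hπ_pos : ∀ k, 0 < π k) (hπ_sum : ∑ k, π k = 1)
    (X : ℕ → Ω → Fin K) (hX_meas : ∀ t, Measurable (X t))
    (hX_indep : iIndepFun X P)
    (hX_law : ∀ t k, P {x | X t x = k} = ENNReal.ofReal (π k))
    (r : Fin K → ℕ) (R : ℕ) (hR : R = ∑ k, r k) :
    ∀ᵐ x ∂P, Tendsto
      (fun t =>
        (((t + K - 1).factorial * (R + K - 1).factorial : ℕ) : ℝ) /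
            (((K - 1).factorial * (R + t + K - 1).factorial : ℕ) : ℝ) *
          ∏ k, (((r k + sigCount X k t x).factorial : ℕ) : ℝ) /
            (((r k).factorial * (sigCount X k t x).factorial : ℕ) : ℝ))
      atTop
      (nhds ((((R + K - 1).factorial : ℕ) : ℝ) /
          ((((K - 1).factorial : ℕ) : ℝ) * ∏ k, (((r k).factorial : ℕ) : ℝ)) *
        ∏ k, π k ^ r k)) := by
  have hae : ∀ᵐ x ∂P, ∀ k : Fin K, Tendsto (fun t => (sigCount X k t x : ℝ) / t) atTop (𝓝 (π k)) := by
    rw [MeasureTheory.ae_all_iff]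
    exact fun k => slln_sigCount P K π hπ_pos X hX_meas hX_indep hX_law k
  filter_upwards [hae] with x hx
  exact det_tendsto K R (by omega) r hR π (fun k t => sigCount X k t x) hx
end

section
/- For every t ≥ 1, every count vector n ∈ ℕ^K with ∑_{k=1}^K n_k = t − 1, and every category k, the uncertain likelihood update satisfies 1/(R + K) ≤ (r_k + n_k + 1)(t + K − 1) / ((R + t + K − 1)(n_k + 1)) ≤ max_{k'} r_{k'} + 1. -/
open Finset

/-- Bounds on the uncertain likelihood update: for every `t ≥ 1`, every count vector
`n` with `∑ₖ nₖ = t − 1`, and every category `k`,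
`1/(R+K) ≤ (r_k + n_k + 1)(t + K − 1)/((R + t + K − 1)(n_k + 1)) ≤ maxₖ' r_{k'} + 1`. -/
theorem uncertain_update_bounds (K : ℕ) (hK : 2 ≤ K)
    (r : Fin K → ℕ) (R : ℕ) (hR : R = ∑ k, r k)
    (t : ℕ) (ht : 1 ≤ t) (n : Fin K → ℕ) (hn : ∑ k, n k = t - 1) (k : Fin K) :
    (1 : ℝ) / (R + K) ≤
        (((r k + n k + 1) * (t + K - 1) : ℕ) : ℝ) /
          (((R + t + K - 1) * (n k + 1) : ℕ) : ℝ) ∧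
      (((r k + n k + 1) * (t + K - 1) : ℕ) : ℝ) /
          (((R + t + K - 1) * (n k + 1) : ℕ) : ℝ) ≤ ((Finset.univ.sup r : ℕ) : ℝ) + 1 := by
  obtain ⟨s, rfl⟩ : ∃ s, t = s + 1 := ⟨t - 1, (Nat.succ_pred_eq_of_pos ht).symm⟩
  simp only [Nat.add_sub_cancel] at hn
  have h1 : s + 1 + K - 1 = s + K := by omega
  have h2 : R + (s + 1) + K - 1 = R + s + K := by omega
  rw [h1, h2]
  have hnk : n k ≤ s := hn ▸ Finset.single_le_sum (fun i _ => Nat.zero_le (n i)) (mem_univ k)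
  have hrk : r k ≤ R := hR ▸ Finset.single_le_sum (fun i _ => Nat.zero_le (r i)) (mem_univ k)
  have hrM : r k ≤ Finset.univ.sup r := Finset.le_sup (mem_univ k)
  set M := Finset.univ.sup r with hM
  have hDpos : (0 : ℝ) < (((R + s + K) * (n k + 1) : ℕ) : ℝ) := by
    have : 0 < (R + s + K) * (n k + 1) := by positivity
    exact_mod_cast this
  have hRKpos : (0 : ℝ) < (R : ℝ) + K := by
    have : (0:ℝ) < (K:ℝ) := by exact_mod_cast (by omega : 0 < K)
    positivity
  constructor
  · rw [div_le_div_iff₀ hRKpos hDpos, one_mul]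
    have key : (R + s + K) * (n k + 1) ≤ ((r k + n k + 1) * (s + K)) * (R + K) := by
      have hA : R + s + K ≤ (R + K) * (s + K) := by nlinarith [Nat.le_of_lt_succ (Nat.lt_succ_of_le hK)]
      have hB : n k + 1 ≤ r k + n k + 1 := by omega
      calc (R + s + K) * (n k + 1) ≤ ((R + K) * (s + K)) * (r k + n k + 1) :=
            Nat.mul_le_mul hA hB
        _ = ((r k + n k + 1) * (s + K)) * (R + K) := by ring
    calc (((R + s + K) * (n k + 1) : ℕ) : ℝ)
        ≤ ((((r k + n k + 1) * (s + K)) * (R + K) : ℕ) : ℝ) := by exact_mod_cast key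
      _ = (((r k + n k + 1) * (s + K) : ℕ) : ℝ) * ((R : ℝ) + K) := by push_cast; ring
  · rw [div_le_iff₀ hDpos]
    have key : (r k + n k + 1) * (s + K) ≤ (M + 1) * ((R + s + K) * (n k + 1)) := by
      have hA : r k + n k + 1 ≤ (M + 1) * (n k + 1) := by nlinarith
      have hB : s + K ≤ R + s + K := by omega
      calc (r k + n k + 1) * (s + K) ≤ ((M + 1) * (n k + 1)) * (R + s + K) :=
            Nat.mul_le_mul hA hB
        _ = (M + 1) * ((R + s + K) * (n k + 1)) := by ring
    calc (((r k + n k + 1) * (s + K) : ℕ) : ℝ)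
        ≤ (((M + 1) * ((R + s + K) * (n k + 1)) : ℕ) : ℝ) := by exact_mod_cast key
      _ = ((M : ℝ) + 1) * (((R + s + K) * (n k + 1) : ℕ) : ℝ) := by push_cast; ring
end

section
/- If there exists at least one agent i with π_{iθ} ≠ π*_i, then for every agent i the log-linear belief μ_{it} converges to 0 in probability as t → ∞, i.e., for every ε > 0, P(μ_{it} > ε) → 0. -/
open MeasureTheory ProbabilityTheory Filter Finset
open scoped ENNReal

set_option linter.unusedSectionVars false
set_option maxHeartbeats 1000000

namespace LogLinearAux


variable {ι : Type*} [Fintype ι] [Nonempty ι] [DecidableEq ι]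

noncomputable def osup (v : ι → ℝ) : ℝ := Finset.univ.sup' Finset.univ_nonempty v
noncomputable def oinf (v : ι → ℝ) : ℝ := Finset.univ.inf' Finset.univ_nonempty v

lemma oinf_le (v : ι → ℝ) (i : ι) : oinf v ≤ v i := Finset.inf'_le _ (Finset.mem_univ i)
lemma le_osup (v : ι → ℝ) (i : ι) : v i ≤ osup v := Finset.le_sup' _ (Finset.mem_univ i)
lemma oinf_le_osup (v : ι → ℝ) : oinf v ≤ osup v :=
  (oinf_le v (Classical.arbitrary ι)).trans (le_osup v _)

lemma osup_le {v : ι → ℝ} {c : ℝ} (h : ∀ i, v i ≤ c) : osup v ≤ c :=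
  Finset.sup'_le _ _ fun i _ => h i
lemma le_oinf {v : ι → ℝ} {c : ℝ} (h : ∀ i, c ≤ v i) : c ≤ oinf v :=
  Finset.le_inf' _ _ fun i _ => h i

lemma exists_oinf (v : ι → ℝ) : ∃ i, oinf v = v i := by
  obtain ⟨i, _, h⟩ := Finset.exists_mem_eq_inf' Finset.univ_nonempty v
  exact ⟨i, h⟩
lemma exists_osup (v : ι → ℝ) : ∃ i, osup v = v i := by
  obtain ⟨i, _, h⟩ := Finset.exists_mem_eq_sup' Finset.univ_nonempty v
  exact ⟨i, h⟩

lemma mulVec_upper {δ : ℝ} (hδ0 : 0 ≤ δ) {B : ι → ι → ℝ} (hB : ∀ i k, δ ≤ B i k)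
    (hrow : ∀ i, ∑ k, B i k = 1) (v : ι → ℝ) (i : ι) :
    ∑ k, B i k * v k ≤ osup v - δ * (osup v - oinf v) := by
  obtain ⟨k0, hk0⟩ := exists_oinf v
  have hB0 : ∀ i' k, 0 ≤ B i' k := fun i' k => le_trans hδ0 (hB i' k)
  have hsplit : B i k0 * v k0 + ∑ k ∈ Finset.univ.erase k0, B i k * v k = ∑ k, B i k * v k :=
    Finset.add_sum_erase _ (fun k => B i k * v k) (Finset.mem_univ k0)
  have hsplitB : B i k0 + ∑ k ∈ Finset.univ.erase k0, B i k = 1 := by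
    rw [Finset.add_sum_erase _ (fun k => B i k) (Finset.mem_univ k0)]; exact hrow i
  have hle : ∑ k ∈ Finset.univ.erase k0, B i k * v k ≤
      (∑ k ∈ Finset.univ.erase k0, B i k) * osup v := by
    rw [Finset.sum_mul]
    exact Finset.sum_le_sum fun k _ => mul_le_mul_of_nonneg_left (le_osup v k) (hB0 i k)
  have h1 : ∑ k, B i k * v k ≤ B i k0 * oinf v + (1 - B i k0) * osup v := by
    rw [← hsplit, ← hk0]
    have : (∑ k ∈ Finset.univ.erase k0, B i k) = 1 - B i k0 := by linarith
    rw [this] at hle; linarith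
  have h2 : oinf v ≤ osup v := oinf_le_osup v
  nlinarith [hB i k0]

lemma mulVec_lower {δ : ℝ} (hδ0 : 0 ≤ δ) {B : ι → ι → ℝ} (hB : ∀ i k, δ ≤ B i k)
    (hrow : ∀ i, ∑ k, B i k = 1) (v : ι → ℝ) (i : ι) :
    oinf v + δ * (osup v - oinf v) ≤ ∑ k, B i k * v k := by
  obtain ⟨k0, hk0⟩ := exists_osup v
  have hB0 : ∀ i' k, 0 ≤ B i' k := fun i' k => le_trans hδ0 (hB i' k)
  have hsplit : B i k0 * v k0 + ∑ k ∈ Finset.univ.erase k0, B i k * v k = ∑ k, B i k * v k :=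
    Finset.add_sum_erase _ (fun k => B i k * v k) (Finset.mem_univ k0)
  have hsplitB : B i k0 + ∑ k ∈ Finset.univ.erase k0, B i k = 1 := by
    rw [Finset.add_sum_erase _ (fun k => B i k) (Finset.mem_univ k0)]; exact hrow i
  have hle : (∑ k ∈ Finset.univ.erase k0, B i k) * oinf v ≤
      ∑ k ∈ Finset.univ.erase k0, B i k * v k := by
    rw [Finset.sum_mul]
    exact Finset.sum_le_sum fun k _ => mul_le_mul_of_nonneg_left (oinf_le v k) (hB0 i k)
  have h1 : B i k0 * osup v + (1 - B i k0) * oinf v ≤ ∑ k, B i k * v k := by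
    rw [← hsplit, ← hk0]
    have : (∑ k ∈ Finset.univ.erase k0, B i k) = 1 - B i k0 := by linarith
    rw [this] at hle; linarith
  have h2 : oinf v ≤ osup v := oinf_le_osup v
  nlinarith [hB i k0]

lemma mulVec_osc {δ : ℝ} (hδ0 : 0 ≤ δ) {B : ι → ι → ℝ} (hB : ∀ i k, δ ≤ B i k)
    (hrow : ∀ i, ∑ k, B i k = 1) (v : ι → ℝ) :
    osup (fun i => ∑ k, B i k * v k) - oinf (fun i => ∑ k, B i k * v k) ≤
      (1 - 2 * δ) * (osup v - oinf v) := by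
  have h1 : osup (fun i => ∑ k, B i k * v k) ≤ osup v - δ * (osup v - oinf v) :=
    osup_le fun i => mulVec_upper hδ0 hB hrow v i
  have h2 : oinf v + δ * (osup v - oinf v) ≤ oinf (fun i => ∑ k, B i k * v k) :=
    le_oinf fun i => mulVec_lower hδ0 hB hrow v i
  linarith

lemma sum_contract {φ : ℕ → ℝ} {N : ℕ} (hN : 1 ≤ N) {γ : ℝ} (hγ0 : 0 ≤ γ) (hγ1 : γ < 1)
    (h1 : ∀ n, φ n ≤ 1) (h0 : ∀ n, 0 ≤ φ n) (hc : ∀ n, φ (n + N) ≤ γ * φ n) (t : ℕ) :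
    ∑ n ∈ Finset.range t, φ n ≤ N / (1 - γ) := by
  have h3 : (0:ℝ) < 1 - γ := by linarith
  induction t using Nat.strong_induction_on with
  | _ t ih =>
    rcases le_or_gt t N with h | h
    · have hs : ∑ n ∈ Finset.range t, φ n ≤ (t : ℝ) := by
        calc ∑ n ∈ Finset.range t, φ n ≤ ∑ _n ∈ Finset.range t, (1:ℝ) :=
              Finset.sum_le_sum fun n _ => h1 n
          _ = t := by simp
      have h2 : (t:ℝ) ≤ N := Nat.cast_le.2 h
      rw [le_div_iff₀ h3]
      have hs0 : (0:ℝ) ≤ ∑ n ∈ Finset.range t, φ n :=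
        Finset.sum_nonneg fun n _ => h0 n
      nlinarith
    · have ht : t = N + (t - N) := by omega
      rw [ht, Finset.sum_range_add]
      have hA : ∑ n ∈ Finset.range N, φ n ≤ (N:ℝ) := by
        calc ∑ n ∈ Finset.range N, φ n ≤ ∑ _n ∈ Finset.range N, (1:ℝ) :=
              Finset.sum_le_sum fun n _ => h1 n
          _ = N := by simp
      have hB : ∑ n ∈ Finset.range (t - N), φ (N + n) ≤
          γ * ∑ n ∈ Finset.range (t - N), φ n := by
        rw [Finset.mul_sum]
        exact Finset.sum_le_sum fun n _ => by rw [add_comm]; exact hc n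
      have hC := ih (t - N) (by omega)
      have hD : γ * ∑ n ∈ Finset.range (t - N), φ n ≤ γ * (N / (1 - γ)) :=
        mul_le_mul_of_nonneg_left hC hγ0
      have key : (N:ℝ) + γ * (N / (1 - γ)) = N / (1 - γ) := by
        field_simp; ring
      linarith

lemma mixing {m : ℕ} (hm : 1 ≤ m) (A : Matrix (Fin m) (Fin m) ℝ)
    (hA_nonneg : ∀ i j, 0 ≤ A i j) (hA_row : ∀ i, ∑ j, A i j = 1)
    (hA_col : ∀ j, ∑ i, A i j = 1) {N : ℕ} (hN : 1 ≤ N)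
    (hNpos : ∀ i j, 0 < (A ^ N) i j) :
    ∃ C : ℝ, 0 ≤ C ∧ ∀ (i : Fin m) (t : ℕ),
      ∑ s ∈ Finset.range t, ∑ j, |(A ^ s) i j - 1 / m| ≤ C := by
  haveI : Nonempty (Fin m) := ⟨⟨0, hm⟩⟩
  have hpow_nonneg : ∀ n i j, 0 ≤ (A ^ n) i j := by
    intro n
    induction n with
    | zero => intro i j; rw [pow_zero]; rw [Matrix.one_apply]; split_ifs <;> norm_num
    | succ n ih =>
      intro i j
      rw [pow_succ', Matrix.mul_apply]
      exact Finset.sum_nonneg fun k _ => mul_nonneg (hA_nonneg i k) (ih k j)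
  have hpow_row : ∀ n i, ∑ j, (A ^ n) i j = 1 := by
    intro n
    induction n with
    | zero => intro i; simp [Matrix.one_apply]
    | succ n ih =>
      intro i
      simp only [pow_succ', Matrix.mul_apply]
      rw [Finset.sum_comm]
      have : ∀ k, ∑ j, A i k * (A ^ n) k j = A i k := by
        intro k; rw [← Finset.mul_sum, ih k, mul_one]
      rw [Finset.sum_congr rfl fun k _ => this k]
      exact hA_row i
  have hpow_col : ∀ n j, ∑ i, (A ^ n) i j = 1 := by
    intro n
    induction n with
    | zero => intro j; simp [Matrix.one_apply]
    | succ n ih =>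
      intro j
      simp only [pow_succ', Matrix.mul_apply]
      rw [Finset.sum_comm]
      have : ∀ k, ∑ i, A i k * (A ^ n) k j = (A ^ n) k j := by
        intro k; rw [← Finset.sum_mul, hA_col k, one_mul]
      rw [Finset.sum_congr rfl fun k _ => this k]
      exact ih j
  have hpow_le_one : ∀ n i j, (A ^ n) i j ≤ 1 := by
    intro n i j
    calc (A ^ n) i j ≤ ∑ j', (A ^ n) i j' :=
          Finset.single_le_sum (fun j' _ => hpow_nonneg n i j') (Finset.mem_univ j)
      _ = 1 := hpow_row n i
  set d : ℝ := min (oinf fun i => oinf fun k => (A ^ N) i k) 4⁻¹ with hd_def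
  have hd_pos : 0 < d := by
    apply lt_min _ (by norm_num)
    obtain ⟨i, hi⟩ := exists_oinf (fun i => oinf fun k => (A ^ N) i k)
    rw [hi]
    obtain ⟨k, hk⟩ := exists_oinf (fun k => (A ^ N) i k)
    rw [hk]
    exact hNpos i k
  have hd_le : ∀ i k, d ≤ (A ^ N) i k := fun i k =>
    le_trans (min_le_left _ _) (le_trans (oinf_le _ i) (oinf_le _ k))
  have hd4 : d ≤ 4⁻¹ := min_le_right _ _
  set γ : ℝ := 1 - 2 * d with hγ_def
  have hγ0 : 0 ≤ γ := by rw [hγ_def]; linarith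
  have hγ1 : γ < 1 := by rw [hγ_def]; linarith
  set φ : Fin m → ℕ → ℝ := fun j n =>
    osup (fun i => (A ^ n) i j) - oinf (fun i => (A ^ n) i j) with hφ_def
  have hφ0 : ∀ j n, 0 ≤ φ j n := fun j n => by
    simp only [hφ_def, sub_nonneg]; exact oinf_le_osup _
  have hφ1 : ∀ j n, φ j n ≤ 1 := by
    intro j n
    have h1 : osup (fun i => (A ^ n) i j) ≤ 1 := osup_le fun i => hpow_le_one n i j
    have h2 : (0:ℝ) ≤ oinf (fun i => (A ^ n) i j) := le_oinf fun i => hpow_nonneg n i j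
    simp only [hφ_def]; linarith
  have hφc : ∀ j n, φ j (n + N) ≤ γ * φ j n := by
    intro j n
    have hcol : (fun i => (A ^ (n + N)) i j) =
        fun i => ∑ k, (A ^ N) i k * (A ^ n) k j := by
      funext i
      rw [add_comm, pow_add, Matrix.mul_apply]
    simp only [hφ_def, hcol]
    exact mulVec_osc hd_pos.le hd_le (hpow_row N) _
  have habs : ∀ n (i : Fin m) j, |(A ^ n) i j - 1 / m| ≤ φ j n := by
    intro n i j
    have hmpos : (0:ℝ) < m := by exact_mod_cast hm
    have hsum := hpow_col n j
    have hio : oinf (fun i' => (A ^ n) i' j) ≤ 1 / m := by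
      have h := Finset.sum_le_sum (s := (Finset.univ : Finset (Fin m)))
        (f := fun _ : Fin m => oinf (fun i' => (A ^ n) i' j))
        (g := fun i' => (A ^ n) i' j) (fun i' _ => oinf_le _ i')
      rw [Finset.sum_const, Finset.card_univ, Fintype.card_fin, nsmul_eq_mul, hsum] at h
      rw [le_div_iff₀ hmpos]
      linarith
    have hos : 1 / (m:ℝ) ≤ osup (fun i' => (A ^ n) i' j) := by
      have h := Finset.sum_le_sum (s := (Finset.univ : Finset (Fin m)))
        (f := fun i' => (A ^ n) i' j)
        (g := fun _ : Fin m => osup (fun i' => (A ^ n) i' j)) (fun i' _ => le_osup (fun i' => (A ^ n) i' j) i')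
      rw [Finset.sum_const, Finset.card_univ, Fintype.card_fin, nsmul_eq_mul, hsum] at h
      rw [div_le_iff₀ hmpos]
      linarith
    have hlo := oinf_le (fun i' => (A ^ n) i' j) i
    have hhi := le_osup (fun i' => (A ^ n) i' j) i
    simp only [hφ_def]
    rw [abs_le]
    constructor <;> linarith
  have hNN : (0:ℝ) ≤ (N:ℝ) / (1 - γ) := by
    have h3 : (0:ℝ) < 1 - γ := by linarith
    positivity
  refine ⟨m * (N / (1 - γ)), by positivity, fun i t => ?_⟩
  calc ∑ s ∈ Finset.range t, ∑ j, |(A ^ s) i j - 1 / m|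
      ≤ ∑ s ∈ Finset.range t, ∑ j, φ j s :=
        Finset.sum_le_sum fun s _ => Finset.sum_le_sum fun j _ => habs s i j
    _ = ∑ j, ∑ s ∈ Finset.range t, φ j s := Finset.sum_comm
    _ ≤ ∑ _j : Fin m, N / (1 - γ) :=
        Finset.sum_le_sum fun j _ => sum_contract hN hγ0 hγ1 (hφ1 j) (hφ0 j) (hφc j) t
    _ = m * (N / (1 - γ)) := by rw [Finset.sum_const, Finset.card_univ, Fintype.card_fin, nsmul_eq_mul]



variable {Ω : Type*} {K : ℕ}

lemma sigCount_succ (X : ℕ → Ω → Fin K) (k : Fin K) (t : ℕ) (x : Ω) :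
    sigCount X k (t + 1) x = sigCount X k t x + (if X t x = k then 1 else 0) := by
  unfold sigCount
  rw [Finset.range_add_one, Finset.filter_insert]
  split_ifs with h
  · rw [Finset.card_insert_of_notMem (by simp)]
  · rw [add_zero]

lemma sigCount_le (X : ℕ → Ω → Fin K) (k : Fin K) (t : ℕ) (x : Ω) :
    sigCount X k t x ≤ t :=
  le_trans (Finset.card_filter_le _ _) (le_of_eq (Finset.card_range t))

lemma sum_sigCount (X : ℕ → Ω → Fin K) (t : ℕ) (x : Ω) :
    ∑ k, sigCount X k t x = t := by
  induction t with
  | zero => simp [sigCount]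
  | succ t ih =>
    have : ∀ k, sigCount X k (t+1) x = sigCount X k t x + (if X t x = k then 1 else 0) :=
      fun k => sigCount_succ X k t x
    rw [Finset.sum_congr rfl fun k _ => this k, Finset.sum_add_distrib, ih,
      Finset.sum_ite_eq Finset.univ (X t x) (fun _ => 1)]
    simp

lemma prod_comp_eq_prod_pow (X : ℕ → Ω → Fin K) (t : ℕ) (x : Ω) (f : Fin K → ℝ) :
    ∏ s ∈ Finset.range t, f (X s x) = ∏ k, f k ^ sigCount X k t x := by
  induction t with
  | zero => simp [sigCount]
  | succ t ih =>
    rw [Finset.prod_range_succ, ih]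
    have : ∀ k, f k ^ sigCount X k (t+1) x =
        f k ^ sigCount X k t x * (if X t x = k then f k else 1) := by
      intro k
      rw [sigCount_succ, pow_add]
      split_ifs <;> simp
    rw [Finset.prod_congr rfl fun k _ => this k, Finset.prod_mul_distrib,
      Finset.prod_ite_eq Finset.univ (X t x) f]
    simp

lemma prod_denom (X : ℕ → Ω → Fin K) (t : ℕ) (x : Ω) :
    ∏ s ∈ Finset.range t, ((sigCount X (X s x) s x + 1 : ℕ) : ℝ)
      = ∏ k, (Nat.factorial (sigCount X k t x) : ℝ) := by
  induction t with
  | zero => simp [sigCount]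
  | succ t ih =>
    rw [Finset.prod_range_succ, ih]
    have key : ∀ k, (Nat.factorial (sigCount X k (t+1) x) : ℝ) =
        (Nat.factorial (sigCount X k t x) : ℝ) *
          (if X t x = k then ((sigCount X k t x + 1 : ℕ) : ℝ) else 1) := by
      intro k
      rw [sigCount_succ]
      split_ifs with h
      · rw [Nat.factorial_succ]; push_cast; ring
      · simp
    rw [Finset.prod_congr rfl fun k _ => key k, Finset.prod_mul_distrib,
      Finset.prod_ite_eq Finset.univ (X t x) (fun k => ((sigCount X k t x + 1 : ℕ) : ℝ))]
    simp

lemma mult_bound (π : Fin K → ℝ) (hπ0 : ∀ k, 0 ≤ π k) (hπ1 : ∑ k, π k ≤ 1) :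
    ∀ (t : ℕ) (n : Fin K → ℕ), (∑ k, n k) = t →
      (Nat.factorial t : ℝ) * ∏ k, π k ^ n k ≤ ∏ k, (Nat.factorial (n k) : ℝ) := by
  intro t
  induction t with
  | zero =>
    intro n hn
    have : ∀ k, n k = 0 := by
      intro k
      have := Finset.sum_eq_zero_iff.1 hn
      exact this k (Finset.mem_univ k)
    simp [this]
  | succ t ih =>
    intro n hn
    have hcast : ((t+1 : ℕ) : ℝ) = ∑ k, (n k : ℝ) := by
      rw [← hn]; push_cast; rfl
    have hfac : (Nat.factorial (t+1) : ℝ) * ∏ k, π k ^ n k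
        = ∑ k, (n k : ℝ) * (Nat.factorial t * ∏ j, π j ^ n j) := by
      rw [Nat.factorial_succ]
      push_cast
      rw [← Finset.sum_mul, ← hcast]
      push_cast
      ring
    rw [hfac]
    have hterm : ∀ k, (n k : ℝ) * (Nat.factorial t * ∏ j, π j ^ n j) ≤ π k * ∏ j, (Nat.factorial (n j) : ℝ) := by
      intro k
      rcases Nat.eq_zero_or_pos (n k) with h0 | hpos
      · rw [h0]
        simp only [Nat.cast_zero, zero_mul]
        exact mul_nonneg (hπ0 k) (Finset.prod_nonneg fun j _ => Nat.cast_nonneg _)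
      · set n' : Fin K → ℕ := Function.update n k (n k - 1) with hn'def
        have hsum' : ∑ j, n' j = t := by
          rw [hn'def, Finset.sum_update_of_mem (Finset.mem_univ k), ← Finset.erase_eq]
          have h2 := hn
          rw [← Finset.add_sum_erase _ n (Finset.mem_univ k)] at h2
          omega
        have hIH := ih n' hsum'
        have hprodπ : ∏ j, π j ^ n j = π k * ∏ j, π j ^ n' j := by
          rw [← Finset.mul_prod_erase _ (fun j => π j ^ n j) (Finset.mem_univ k),
            ← Finset.mul_prod_erase _ (fun j => π j ^ n' j) (Finset.mem_univ k)]
          have h1 : ∀ j ∈ Finset.univ.erase k, π j ^ n' j = π j ^ n j := by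
            intro j hj
            rw [hn'def, Function.update_of_ne (Finset.ne_of_mem_erase hj)]
          rw [Finset.prod_congr rfl h1, ← mul_assoc]
          congr 1
          rw [hn'def, Function.update_self, ← pow_succ']
          congr 1
          omega
        have hprodfac : (n k : ℝ) * ∏ j, (Nat.factorial (n' j) : ℝ) = ∏ j, (Nat.factorial (n j) : ℝ) := by
          rw [← Finset.mul_prod_erase _ (fun j => (Nat.factorial (n' j) : ℝ)) (Finset.mem_univ k),
            ← Finset.mul_prod_erase _ (fun j => (Nat.factorial (n j) : ℝ)) (Finset.mem_univ k)]
          have h1 : ∀ j ∈ Finset.univ.erase k, (Nat.factorial (n' j) : ℝ) = (Nat.factorial (n j) : ℝ) := by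
            intro j hj
            rw [hn'def, Function.update_of_ne (Finset.ne_of_mem_erase hj)]
          rw [Finset.prod_congr rfl h1, ← mul_assoc]
          congr 1
          rw [hn'def, Function.update_self, ← Nat.cast_mul]
          congr 1
          have h2 : n k - 1 + 1 = n k := by omega
          calc n k * Nat.factorial (n k - 1) = (n k - 1 + 1) * Nat.factorial (n k - 1) := by rw [h2]
            _ = Nat.factorial (n k - 1 + 1) := (Nat.factorial_succ _).symm
            _ = Nat.factorial (n k) := by rw [h2]
        calc (n k : ℝ) * (Nat.factorial t * ∏ j, π j ^ n j)
            = π k * ((n k : ℝ) * (Nat.factorial t * ∏ j, π j ^ n' j)) := by rw [hprodπ]; ring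
          _ ≤ π k * ((n k : ℝ) * ∏ j, (Nat.factorial (n' j) : ℝ)) := by
              apply mul_le_mul_of_nonneg_left _ (hπ0 k)
              exact mul_le_mul_of_nonneg_left hIH (Nat.cast_nonneg _)
          _ = π k * ∏ j, (Nat.factorial (n j) : ℝ) := by rw [hprodfac]
    calc ∑ k, (n k : ℝ) * (Nat.factorial t * ∏ j, π j ^ n j)
        ≤ ∑ k, π k * ∏ j, (Nat.factorial (n j) : ℝ) := Finset.sum_le_sum fun k _ => hterm k
      _ = (∑ k, π k) * ∏ j, (Nat.factorial (n j) : ℝ) := by rw [Finset.sum_mul]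
      _ ≤ 1 * ∏ j, (Nat.factorial (n j) : ℝ) := by
          apply mul_le_mul_of_nonneg_right hπ1
          exact Finset.prod_nonneg fun j _ => Nat.cast_nonneg _
      _ = ∏ j, (Nat.factorial (n j) : ℝ) := one_mul _

lemma fact_prod1 (Kk : ℕ) (hK : 1 ≤ Kk) (t : ℕ) :
    Nat.factorial (Kk - 1) * ∏ s ∈ Finset.range t, (s + Kk) = Nat.factorial (t + Kk - 1) := by
  induction t with
  | zero => simp
  | succ t ih =>
    rw [Finset.prod_range_succ, ← mul_assoc, ih]
    have h1 : t + 1 + Kk - 1 = (t + Kk - 1) + 1 := by omega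
    rw [h1, Nat.factorial_succ]
    have h2 : t + Kk - 1 + 1 = t + Kk := by omega
    rw [h2]
    ring

lemma fact_prod2 (t j : ℕ) : Nat.factorial (t + j) ≤ Nat.factorial t * (t + j) ^ j := by
  induction j with
  | zero => simp
  | succ j ih =>
    have h1 : t + (j+1) = (t + j) + 1 := by omega
    rw [h1, Nat.factorial_succ]
    calc (t + j + 1) * Nat.factorial (t + j) ≤ (t + j + 1) * (Nat.factorial t * (t + j) ^ j) :=
          Nat.mul_le_mul_left _ ih
      _ ≤ (t + j + 1) * (Nat.factorial t * (t + j + 1) ^ j) := by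
          apply Nat.mul_le_mul_left
          apply Nat.mul_le_mul_left
          exact Nat.pow_le_pow_left (by omega) j
      _ = Nat.factorial t * (t + j + 1) ^ (j + 1) := by ring



lemma lintegral_indep_prod {Ω : Type*} [MeasurableSpace Ω] (P : Measure Ω) [IsProbabilityMeasure P]
    {ι : Type*} (F : ι → Ω → ℝ≥0∞) (hmeas : ∀ p, Measurable (F p))
    (hindep : iIndepFun F P) (S : Finset ι) :
    ∫⁻ x, ∏ p ∈ S, F p x ∂P = ∏ p ∈ S, ∫⁻ x, F p x ∂P := by
  classical
  induction S using Finset.induction_on with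
  | empty => simp
  | @insert a S ha ih =>
    rw [Finset.prod_insert ha]
    have hprodmeas : Measurable (fun x => ∏ p ∈ S, F p x) :=
      Finset.measurable_prod S fun p _ => hmeas p
    have hindep2 : IndepFun (F a) (fun x => ∏ p ∈ S, F p x) P := by
      have h := hindep.indepFun_finsetProd_of_notMem hmeas ha
      have hfe : (∏ j ∈ S, F j) = fun x => ∏ p ∈ S, F p x := by
        funext x; rw [Finset.prod_apply]
      rw [hfe] at h
      exact h.symm
    calc ∫⁻ x, ∏ p ∈ insert a S, F p x ∂P
        = ∫⁻ x, F a x * ∏ p ∈ S, F p x ∂P := by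
          congr 1; funext x; rw [Finset.prod_insert ha]
      _ = (∫⁻ x, F a x ∂P) * ∫⁻ x, ∏ p ∈ S, F p x ∂P :=
          lintegral_mul_eq_lintegral_mul_lintegral_of_indepFun (hmeas a) hprodmeas hindep2
      _ = (∫⁻ x, F a x ∂P) * ∏ p ∈ S, ∫⁻ x, F p x ∂P := by rw [ih]

lemma lintegral_comp_fin {Ω : Type*} [MeasurableSpace Ω] (P : Measure Ω) [IsProbabilityMeasure P]
    {K : ℕ} (X : Ω → Fin K) (hX : Measurable X) (h : Fin K → ℝ≥0∞) :
    ∫⁻ x, h (X x) ∂P = ∑ k, h k * P {x | X x = k} := by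
  have hps : ∀ k : Fin K, MeasurableSet {x | X x = k} := by
    intro k
    exact hX (measurableSet_singleton k)
  have hpt : (fun x => h (X x)) =
      fun x => ∑ k, Set.indicator {x' | X x' = k} (fun _ => h k) x := by
    funext x
    rw [Finset.sum_eq_single (X x)]
    · rw [Set.indicator_of_mem (by exact rfl : x ∈ {x' | X x' = X x})]
    · intro k _ hk
      rw [Set.indicator_of_notMem]
      intro hmem
      exact hk (hmem.symm ▸ rfl)
    · intro h'; exact absurd (Finset.mem_univ (X x)) h'
  rw [hpt, lintegral_finset_sum]
  · apply Finset.sum_congr rfl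
    intro k _
    rw [lintegral_indicator (hps k), setLIntegral_const]
  · intro k _
    exact measurable_const.indicator (hps k)

end LogLinearAux

open LogLinearAux

/-- If at least one certain agent has `π_{iθ} ≠ π*_i`, then for every agent the
log-linear beliefs converge to `0` in probability: `P(μ_{it} > ε) → 0` for all `ε > 0`. -/
theorem loglinear_certain_beliefs_tendsto_zero_in_prob
    {Ω : Type*} [MeasurableSpace Ω] (P : Measure Ω) [IsProbabilityMeasure P]
    (m : ℕ) (hm : 1 ≤ m) (K : ℕ) (hK : 2 ≤ K)
    (A : Matrix (Fin m) (Fin m) ℝ)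
    (hA_nonneg : ∀ i j, 0 ≤ A i j)
    (hA_row : ∀ i, ∑ j, A i j = 1) (hA_col : ∀ j, ∑ i, A i j = 1)
    (hA_prim : ∃ N : ℕ, 1 ≤ N ∧ ∀ i j, 0 < (A ^ N) i j)
    (πstar πθ : Fin m → Fin K → ℝ)
    (hstar_pos : ∀ i k, 0 < πstar i k) (hstar_sum : ∀ i, ∑ k, πstar i k = 1)
    (hθ_pos : ∀ i k, 0 < πθ i k) (hθ_sum : ∀ i, ∑ k, πθ i k = 1)
    (X : Fin m → ℕ → Ω → Fin K) (hX_meas : ∀ i t, Measurable (X i t))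
    (hX_indep : iIndepFun
      (fun p : Fin m × ℕ => X p.1 p.2) P)
    (hX_law : ∀ i t k, P {x | X i t x = k} = ENNReal.ofReal (πstar i k))
    (μ : ℕ → Fin m → Ω → ℝ)
    (hμ0 : ∀ i x, μ 0 i x = 1)
    (hμ : ∀ t i x, μ (t + 1) i x =
      πθ i (X i t x) * (((t + 1 + K - 1 : ℕ)) : ℝ) /
          (((sigCount (X i) (X i t x) t x + 1 : ℕ)) : ℝ) *
        ∏ j, (μ t j x) ^ (A i j))
    (hmismatch : ∃ i, πθ i ≠ πstar i) :
    ∀ i : Fin m, ∀ ε : ℝ, 0 < ε →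
      Tendsto (fun t => P {x | ε < μ t i x}) atTop (nhds 0) := by
  classical
  intro i ε hε
  obtain ⟨N, hN1, hNpos⟩ := hA_prim
  obtain ⟨i0, hi0⟩ := hmismatch
  haveI : Nonempty (Fin m) := ⟨⟨0, hm⟩⟩
  haveI : Nonempty (Fin K) := ⟨⟨0, by omega⟩⟩
  have hm0 : (0:ℝ) < m := by exact_mod_cast hm
  -- positivity of beliefs
  have hfac_pos : ∀ (j : Fin m) (s : ℕ) (x : Ω),
      0 < πθ j (X j s x) * ((s + K : ℕ) : ℝ) /
        ((sigCount (X j) (X j s x) s x + 1 : ℕ) : ℝ) := by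
    intro j s x
    apply div_pos
    · apply mul_pos (hθ_pos j _)
      have h1 : (0:ℕ) < s + K := by omega
      exact_mod_cast h1
    · have h1 : (0:ℕ) < sigCount (X j) (X j s x) s x + 1 := by omega
      exact_mod_cast h1
  have hμpos : ∀ (t : ℕ) (j : Fin m) (x : Ω), 0 < μ t j x := by
    intro t
    induction t with
    | zero => intro j x; rw [hμ0]; norm_num
    | succ t ih =>
      intro j x
      rw [hμ t j x]
      apply mul_pos
      · have h2 : (t + 1 + K - 1 : ℕ) = t + K := by omega
        rw [h2]
        exact hfac_pos j t x
      · exact Finset.prod_pos fun j' _ => Real.rpow_pos_of_pos (ih j' x) _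
  -- the per-step log-likelihood terms
  set g : Fin m → ℕ → Ω → ℝ := fun j s x =>
    Real.log (πθ j (X j s x) * ((s + K : ℕ) : ℝ) /
      ((sigCount (X j) (X j s x) s x + 1 : ℕ) : ℝ)) with hg_def
  -- the log-linear recursion in closed form
  have hL : ∀ (t : ℕ) (i' : Fin m) (x : Ω), Real.log (μ t i' x) =
      ∑ s ∈ Finset.range t, ∑ j, (A ^ (t - 1 - s)) i' j * g j s x := by
    intro t
    induction t with
    | zero => intro i' x; rw [hμ0]; simp
    | succ t ih =>
      intro i' x
      have h2 : (t + 1 + K - 1 : ℕ) = t + K := by omega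
      have hppos : 0 < ∏ j, μ t j x ^ A i' j :=
        Finset.prod_pos fun j _ => Real.rpow_pos_of_pos (hμpos t j x) _
      rw [hμ t i' x, h2,
        Real.log_mul (ne_of_gt (hfac_pos i' t x)) (ne_of_gt hppos),
        Real.log_prod (fun j _ => ne_of_gt (Real.rpow_pos_of_pos (hμpos t j x) _))]
      have hlogpow : ∀ j : Fin m, Real.log (μ t j x ^ A i' j) = A i' j * Real.log (μ t j x) :=
        fun j => Real.log_rpow (hμpos t j x) _
      rw [Finset.sum_congr rfl fun j _ => hlogpow j]
      have hsub : ∑ j, A i' j * Real.log (μ t j x) =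
          ∑ s ∈ Finset.range t, ∑ k, (A ^ (t - s)) i' k * g k s x := by
        calc ∑ j, A i' j * Real.log (μ t j x)
            = ∑ j, A i' j * ∑ s ∈ Finset.range t, ∑ k, (A ^ (t - 1 - s)) j k * g k s x :=
              Finset.sum_congr rfl fun j _ => by rw [ih j x]
          _ = ∑ j, ∑ s ∈ Finset.range t, ∑ k, A i' j * ((A ^ (t - 1 - s)) j k * g k s x) := by
              refine Finset.sum_congr rfl fun j _ => ?_
              rw [Finset.mul_sum]
              exact Finset.sum_congr rfl fun s _ => by rw [Finset.mul_sum]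
          _ = ∑ s ∈ Finset.range t, ∑ j, ∑ k, A i' j * ((A ^ (t - 1 - s)) j k * g k s x) :=
              Finset.sum_comm
          _ = ∑ s ∈ Finset.range t, ∑ k, ∑ j, A i' j * ((A ^ (t - 1 - s)) j k * g k s x) :=
              Finset.sum_congr rfl fun s _ => Finset.sum_comm
          _ = ∑ s ∈ Finset.range t, ∑ k, (A ^ (t - s)) i' k * g k s x := by
              refine Finset.sum_congr rfl fun s hs => Finset.sum_congr rfl fun k _ => ?_
              have hts : t - s = (t - 1 - s) + 1 := by
                have := Finset.mem_range.1 hs; omega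
              rw [hts, pow_succ', Matrix.mul_apply, Finset.sum_mul]
              exact Finset.sum_congr rfl fun j _ => by ring
      rw [hsub, Finset.sum_range_succ]
      have hlast : ∑ j, (A ^ (t + 1 - 1 - t)) i' j * g j t x = g i' t x := by
        have h3 : t + 1 - 1 - t = 0 := by omega
        rw [h3, pow_zero, Finset.sum_eq_single i']
        · rw [Matrix.one_apply_eq, one_mul]
        · intro j _ hj
          rw [Matrix.one_apply_ne (Ne.symm hj), zero_mul]
        · intro h; exact absurd (Finset.mem_univ i') h
      rw [hlast]
      have h4 : ∀ s ∈ Finset.range t, ∑ j, (A ^ (t + 1 - 1 - s)) i' j * g j s x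
          = ∑ k, (A ^ (t - s)) i' k * g k s x := by
        intro s hs
        have : t + 1 - 1 - s = t - s := by omega
        rw [this]
      rw [Finset.sum_congr rfl h4]
      ring
  -- uniform bound on the log-likelihood terms
  set pm : ℝ := oinf (fun q : Fin m × Fin K => πθ q.1 q.2) with hpm_def
  have hpm_pos : 0 < pm := by
    obtain ⟨q, hq⟩ := exists_oinf (fun q : Fin m × Fin K => πθ q.1 q.2)
    rw [hpm_def, hq]
    exact hθ_pos q.1 q.2
  have hpm_le : ∀ j k, pm ≤ πθ j k := fun j k =>
    oinf_le (fun q : Fin m × Fin K => πθ q.1 q.2) (j, k)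
  have hθle1 : ∀ (j : Fin m) (k : Fin K), πθ j k ≤ 1 := by
    intro j k
    calc πθ j k ≤ ∑ k', πθ j k' :=
          Finset.single_le_sum (fun k' _ => (hθ_pos j k').le) (Finset.mem_univ k)
      _ = 1 := hθ_sum j
  have hpm1 : pm ≤ 1 := le_trans (hpm_le (Classical.arbitrary _) (Classical.arbitrary _))
    (hθle1 _ _)
  set Cπ : ℝ := -Real.log pm with hCπ_def
  have hCπ0 : 0 ≤ Cπ := by
    rw [hCπ_def, neg_nonneg]
    exact Real.log_nonpos hpm_pos.le hpm1
  set b : ℕ → ℝ := fun t => Real.log ((t + K : ℕ) : ℝ) + Cπ with hb_def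
  have hcast1 : ∀ t : ℕ, (1:ℝ) ≤ ((t + K : ℕ) : ℝ) := by
    intro t
    have h1 : (1:ℕ) ≤ t + K := by omega
    exact_mod_cast h1
  have hb0 : ∀ t, 0 ≤ b t := fun t =>
    add_nonneg (Real.log_nonneg (hcast1 t)) hCπ0
  have hgb : ∀ (t : ℕ) (j : Fin m) (s : ℕ) (x : Ω), s < t → |g j s x| ≤ b t := by
    intro t j s x hst
    have hc2pos : (0:ℝ) < ((sigCount (X j) (X j s x) s x + 1 : ℕ) : ℝ) := by
      have h1 : (0:ℕ) < sigCount (X j) (X j s x) s x + 1 := by omega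
      exact_mod_cast h1
    have hc2ge1 : (1:ℝ) ≤ ((sigCount (X j) (X j s x) s x + 1 : ℕ) : ℝ) := by
      have h1 : (1:ℕ) ≤ sigCount (X j) (X j s x) s x + 1 := by omega
      exact_mod_cast h1
    have hc1pos : (0:ℝ) < ((s + K : ℕ) : ℝ) := lt_of_lt_of_le one_pos (hcast1 s)
    have hc2c1 : ((sigCount (X j) (X j s x) s x + 1 : ℕ) : ℝ) ≤ ((s + K : ℕ) : ℝ) := by
      have h1 : sigCount (X j) (X j s x) s x + 1 ≤ s + K := by
        have := sigCount_le (X j) (X j s x) s x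
        omega
      exact_mod_cast h1
    have hvpos := hfac_pos j s x
    have hvupper : πθ j (X j s x) * ((s + K : ℕ) : ℝ) /
        ((sigCount (X j) (X j s x) s x + 1 : ℕ) : ℝ) ≤ ((s + K : ℕ) : ℝ) := by
      rw [div_le_iff₀ hc2pos]
      have h1 := hθle1 j (X j s x)
      nlinarith [hc1pos]
    have hlower : pm ≤ πθ j (X j s x) * ((s + K : ℕ) : ℝ) /
        ((sigCount (X j) (X j s x) s x + 1 : ℕ) : ℝ) := by
      rw [le_div_iff₀ hc2pos]
      have h1 := hpm_le j (X j s x)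
      nlinarith [hpm_pos]
    have hsK_le : ((s + K : ℕ) : ℝ) ≤ ((t + K : ℕ) : ℝ) := by
      have h1 : s + K ≤ t + K := by omega
      exact_mod_cast h1
    rw [abs_le]
    constructor
    · have h1 : Real.log pm ≤ g j s x := by
        rw [hg_def]
        exact Real.log_le_log hpm_pos hlower
      have h2 : 0 ≤ Real.log ((t + K : ℕ) : ℝ) := Real.log_nonneg (hcast1 t)
      rw [hb_def, hCπ_def] at *
      simp only [] at h1 ⊢
      linarith
    · have h1 : g j s x ≤ Real.log ((s + K : ℕ) : ℝ) := by
        rw [hg_def]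
        exact Real.log_le_log hvpos hvupper
      have h2 : Real.log ((s + K : ℕ) : ℝ) ≤ Real.log ((t + K : ℕ) : ℝ) :=
        Real.log_le_log hc1pos hsK_le
      rw [hb_def]
      simp only []
      linarith
  -- mixing bound
  obtain ⟨Cm, hCm0, hCm⟩ := mixing hm A hA_nonneg hA_row hA_col hN1 hNpos
  -- products of likelihood updates
  set Pl : Fin m → ℕ → Ω → ℝ := fun j t x => ∏ s ∈ Finset.range t,
    (πθ j (X j s x) * ((s + K : ℕ) : ℝ) /
      ((sigCount (X j) (X j s x) s x + 1 : ℕ) : ℝ)) with hPl_def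
  have hPl_pos : ∀ j t x, 0 < Pl j t x := fun j t x =>
    Finset.prod_pos fun s _ => hfac_pos j s x
  have hsum_g : ∀ j t x, ∑ s ∈ Finset.range t, g j s x = Real.log (Pl j t x) := by
    intro j t x
    rw [hPl_def]
    rw [Real.log_prod fun s _ => (hfac_pos j s x).ne']
  set Rj : Fin m → ℕ → Ω → ℝ := fun j t x => ∏ s ∈ Finset.range t,
    (πθ j (X j s x) / πstar j (X j s x)) with hRj_def
  have hRj_pos : ∀ j t x, 0 < Rj j t x := fun j t x =>
    Finset.prod_pos fun s _ => div_pos (hθ_pos j _) (hstar_pos j _)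
  have hPl_le : ∀ j t x, Pl j t x ≤ ((t + K : ℕ) : ℝ) ^ (K - 1) * Rj j t x := by
    intro j t x
    have hsplit : Pl j t x = Rj j t x * ∏ s ∈ Finset.range t,
        (πstar j (X j s x) * ((s + K : ℕ) : ℝ) /
          ((sigCount (X j) (X j s x) s x + 1 : ℕ) : ℝ)) := by
      rw [hPl_def, hRj_def, ← Finset.prod_mul_distrib]
      refine Finset.prod_congr rfl fun s _ => ?_
      have h1 : πstar j (X j s x) ≠ 0 := (hstar_pos j _).ne'
      field_simp
    rw [hsplit]
    have hPs : ∏ s ∈ Finset.range t,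
        (πstar j (X j s x) * ((s + K : ℕ) : ℝ) /
          ((sigCount (X j) (X j s x) s x + 1 : ℕ) : ℝ)) ≤ ((t + K : ℕ) : ℝ) ^ (K - 1) := by
      have h1 : ∏ s ∈ Finset.range t,
          (πstar j (X j s x) * ((s + K : ℕ) : ℝ) /
            ((sigCount (X j) (X j s x) s x + 1 : ℕ) : ℝ))
          = (∏ s ∈ Finset.range t, πstar j (X j s x)) *
            (∏ s ∈ Finset.range t, ((s + K : ℕ) : ℝ)) /
            ∏ s ∈ Finset.range t, ((sigCount (X j) (X j s x) s x + 1 : ℕ) : ℝ) := by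
        rw [Finset.prod_div_distrib, Finset.prod_mul_distrib]
      rw [h1, prod_comp_eq_prod_pow (X j) t x (fun k => πstar j k), prod_denom (X j) t x]
      set n : Fin K → ℕ := fun k => sigCount (X j) k t x with hn_def
      have hnsum : ∑ k, n k = t := sum_sigCount (X j) t x
      have hmult := mult_bound (fun k => πstar j k) (fun k => (hstar_pos j k).le)
        (le_of_eq (hstar_sum j)) t n hnsum
      have hPC2pos : (0:ℝ) < ∏ k, (Nat.factorial (n k) : ℝ) :=
        Finset.prod_pos fun k _ => by exact_mod_cast Nat.factorial_pos (n k)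
      have hT1pos : (0:ℝ) < (Nat.factorial t : ℝ) := by exact_mod_cast Nat.factorial_pos t
      have hPP0 : (0:ℝ) ≤ ∏ k, πstar j k ^ n k :=
        Finset.prod_nonneg fun k _ => pow_nonneg (hstar_pos j k).le _
      have hC1nat : ∏ s ∈ Finset.range t, (s + K) ≤ Nat.factorial (t + K - 1) := by
        have h2 := fact_prod1 K (by omega) t
        calc ∏ s ∈ Finset.range t, (s + K)
            ≤ Nat.factorial (K - 1) * ∏ s ∈ Finset.range t, (s + K) :=
              Nat.le_mul_of_pos_left _ (Nat.factorial_pos _)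
          _ = Nat.factorial (t + K - 1) := h2
      have hC1fac : Nat.factorial (t + K - 1) ≤ Nat.factorial t * (t + K) ^ (K - 1) := by
        have h3 : t + K - 1 = t + (K - 1) := by omega
        rw [h3]
        calc Nat.factorial (t + (K - 1)) ≤ Nat.factorial t * (t + (K - 1)) ^ (K - 1) :=
              fact_prod2 t (K - 1)
          _ ≤ Nat.factorial t * (t + K) ^ (K - 1) := by
              apply Nat.mul_le_mul_left
              exact Nat.pow_le_pow_left (by omega) _
      have hC1 : (∏ s ∈ Finset.range t, ((s + K : ℕ) : ℝ))
          ≤ (Nat.factorial t : ℝ) * ((t + K : ℕ) : ℝ) ^ (K - 1) := by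
        rw [← Nat.cast_prod]
        have h4 : (∏ s ∈ Finset.range t, (s + K)) ≤ Nat.factorial t * (t + K) ^ (K - 1) :=
          le_trans hC1nat hC1fac
        exact_mod_cast h4
      rw [div_le_iff₀ hPC2pos]
      have hXnn : (0:ℝ) ≤ ((t + K : ℕ) : ℝ) ^ (K - 1) :=
        pow_nonneg (by positivity) _
      calc (∏ k, πstar j k ^ n k) * ∏ s ∈ Finset.range t, ((s + K : ℕ) : ℝ)
          ≤ (∏ k, πstar j k ^ n k) * ((Nat.factorial t : ℝ) * ((t + K : ℕ) : ℝ) ^ (K - 1)) :=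
            mul_le_mul_of_nonneg_left hC1 hPP0
        _ = ((Nat.factorial t : ℝ) * ∏ k, πstar j k ^ n k) * ((t + K : ℕ) : ℝ) ^ (K - 1) := by
            ring
        _ ≤ (∏ k, (Nat.factorial (n k) : ℝ)) * ((t + K : ℕ) : ℝ) ^ (K - 1) :=
            mul_le_mul_of_nonneg_right hmult hXnn
        _ = ((t + K : ℕ) : ℝ) ^ (K - 1) * ∏ k, (Nat.factorial (n k) : ℝ) := mul_comm _ _
    calc Rj j t x * ∏ s ∈ Finset.range t,
        (πstar j (X j s x) * ((s + K : ℕ) : ℝ) /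
          ((sigCount (X j) (X j s x) s x + 1 : ℕ) : ℝ))
        ≤ Rj j t x * ((t + K : ℕ) : ℝ) ^ (K - 1) :=
          mul_le_mul_of_nonneg_left hPs (hRj_pos j t x).le
      _ = ((t + K : ℕ) : ℝ) ^ (K - 1) * Rj j t x := mul_comm _ _
  -- Hellinger affinities
  set ρ : Fin m → ℝ := fun j => ∑ k, Real.sqrt (πθ j k * πstar j k) with hρ_def
  have hρ_pos : ∀ j, 0 < ρ j := by
    intro j
    rw [hρ_def]
    exact Finset.sum_pos (fun k _ => Real.sqrt_pos.2 (mul_pos (hθ_pos j k) (hstar_pos j k)))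
      Finset.univ_nonempty
  have hid : ∀ j, ∑ k, (Real.sqrt (πθ j k) - Real.sqrt (πstar j k)) ^ 2 = 2 - 2 * ρ j := by
    intro j
    have h1 : ∀ k, (Real.sqrt (πθ j k) - Real.sqrt (πstar j k)) ^ 2
        = πθ j k + πstar j k - 2 * Real.sqrt (πθ j k * πstar j k) := by
      intro k
      have e1 : Real.sqrt (πθ j k) * Real.sqrt (πstar j k)
          = Real.sqrt (πθ j k * πstar j k) := (Real.sqrt_mul (hθ_pos j k).le _).symm
      rw [sub_sq, Real.sq_sqrt (hθ_pos j k).le, Real.sq_sqrt (hstar_pos j k).le,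
        mul_assoc, e1]
      ring
    rw [Finset.sum_congr rfl fun k _ => h1 k]
    rw [Finset.sum_sub_distrib, Finset.sum_add_distrib, hθ_sum j, hstar_sum j,
      ← Finset.mul_sum, hρ_def]
    ring
  have hρ_le : ∀ j, ρ j ≤ 1 := by
    intro j
    have h1 : (0:ℝ) ≤ ∑ k, (Real.sqrt (πθ j k) - Real.sqrt (πstar j k)) ^ 2 :=
      Finset.sum_nonneg fun k _ => sq_nonneg _
    rw [hid j] at h1
    linarith
  have hρ_lt : ρ i0 < 1 := by
    by_contra hcon
    push_neg at hcon
    have hsq : ∑ k, (Real.sqrt (πθ i0 k) - Real.sqrt (πstar i0 k)) ^ 2 ≤ 0 := by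
      rw [hid i0]; linarith
    apply hi0
    funext k
    have hterm : (Real.sqrt (πθ i0 k) - Real.sqrt (πstar i0 k)) ^ 2 = 0 := by
      have h1 : ∀ k' ∈ Finset.univ, (0:ℝ) ≤ (Real.sqrt (πθ i0 k') - Real.sqrt (πstar i0 k')) ^ 2 :=
        fun k' _ => sq_nonneg _
      have h2 := Finset.single_le_sum h1 (Finset.mem_univ k)
      nlinarith [sq_nonneg (Real.sqrt (πθ i0 k) - Real.sqrt (πstar i0 k))]
    have h3 : Real.sqrt (πθ i0 k) = Real.sqrt (πstar i0 k) := by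
      have := pow_eq_zero_iff (n := 2) (by norm_num) |>.1 hterm
      linarith [this]
    calc πθ i0 k = Real.sqrt (πθ i0 k) ^ 2 := (Real.sq_sqrt (hθ_pos i0 k).le).symm
      _ = Real.sqrt (πstar i0 k) ^ 2 := by rw [h3]
      _ = πstar i0 k := Real.sq_sqrt (hstar_pos i0 k).le
  -- the ENNReal-valued product random variables
  set f : Fin m → Fin K → ℝ := fun j k => Real.sqrt (πθ j k / πstar j k) with hf_def
  set F : Fin m × ℕ → Ω → ENNReal := fun p x => ENNReal.ofReal (f p.1 (X p.1 p.2 x)) with hF_def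
  have hFmeas : ∀ p, Measurable (F p) := fun p =>
    (measurable_of_countable (fun k => ENNReal.ofReal (f p.1 k))).comp (hX_meas p.1 p.2)
  have hFindep : iIndepFun F P :=
    hX_indep.comp (fun p k => ENNReal.ofReal (f p.1 k)) (fun p => measurable_of_countable _)
  have hsingle : ∀ (j : Fin m) (s : ℕ), ∫⁻ x, F (j, s) x ∂P = ENNReal.ofReal (ρ j) := by
    intro j s
    have h1 : (fun x => F (j, s) x) = fun x => (fun k => ENNReal.ofReal (f j k)) (X j s x) := rfl
    rw [h1, lintegral_comp_fin P (X j s) (hX_meas j s) (fun k => ENNReal.ofReal (f j k))]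
    have h2 : ∀ k : Fin K, ENNReal.ofReal (f j k) * P {x | X j s x = k}
        = ENNReal.ofReal (Real.sqrt (πθ j k * πstar j k)) := by
      intro k
      rw [hX_law j s k, ← ENNReal.ofReal_mul (by rw [hf_def]; exact Real.sqrt_nonneg _)]
      congr 1
      rw [hf_def]
      have hb0' : (0:ℝ) < πstar j k := hstar_pos j k
      simp only []
      rw [Real.sqrt_div (hθ_pos j k).le, div_mul_eq_mul_div, mul_div_assoc, Real.div_sqrt,
        ← Real.sqrt_mul (hθ_pos j k).le]
    rw [Finset.sum_congr rfl fun k _ => h2 k,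
      ← ENNReal.ofReal_sum_of_nonneg (fun k _ => Real.sqrt_nonneg _), hρ_def]
  have hint : ∀ t : ℕ, ∫⁻ x, ∏ p ∈ Finset.univ ×ˢ Finset.range t, F p x ∂P
      = ENNReal.ofReal ((∏ j, ρ j) ^ t) := by
    intro t
    rw [lintegral_indep_prod P F hFmeas hFindep, Finset.prod_product]
    calc ∏ j, ∏ s ∈ Finset.range t, ∫⁻ x, F (j, s) x ∂P
        = ∏ j, ∏ _s ∈ Finset.range t, ENNReal.ofReal (ρ j) :=
          Finset.prod_congr rfl fun j _ => Finset.prod_congr rfl fun s _ => hsingle j s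
      _ = ∏ j, ENNReal.ofReal (ρ j) ^ t := by
          simp [Finset.prod_const, Finset.card_range]
      _ = ∏ j, ENNReal.ofReal (ρ j ^ t) :=
          Finset.prod_congr rfl fun j _ => (ENNReal.ofReal_pow (hρ_pos j).le t).symm
      _ = ENNReal.ofReal (∏ j, ρ j ^ t) :=
          (ENNReal.ofReal_prod_of_nonneg fun j _ => pow_nonneg (hρ_pos j).le t).symm
      _ = ENNReal.ofReal ((∏ j, ρ j) ^ t) := by rw [Finset.prod_pow]
  -- the real-valued square-root product
  set Yr : ℕ → Ω → ℝ := fun t x => ∏ p ∈ Finset.univ ×ˢ Finset.range t, f p.1 (X p.1 p.2 x)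
    with hYr_def
  have hYr0 : ∀ t x, 0 ≤ Yr t x := fun t x =>
    Finset.prod_nonneg fun p _ => Real.sqrt_nonneg _
  have hYofReal : ∀ t x, ENNReal.ofReal (Yr t x) = ∏ p ∈ Finset.univ ×ˢ Finset.range t, F p x := by
    intro t x
    rw [hYr_def]
    exact ENNReal.ofReal_prod_of_nonneg fun p _ => Real.sqrt_nonneg _
  have hYsq : ∀ t x, (Yr t x) ^ 2 = ∏ j, Rj j t x := by
    intro t x
    rw [hYr_def]
    simp only []
    rw [← Finset.prod_pow]
    have h1 : ∀ p ∈ Finset.univ ×ˢ Finset.range t,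
        f p.1 (X p.1 p.2 x) ^ 2 = πθ p.1 (X p.1 p.2 x) / πstar p.1 (X p.1 p.2 x) := by
      intro p _
      rw [hf_def]
      exact Real.sq_sqrt (div_pos (hθ_pos p.1 _) (hstar_pos p.1 _)).le
    rw [Finset.prod_congr rfl h1, Finset.prod_product, hRj_def]
  -- tail event inclusion and Markov bound
  set βt : ℕ → ℝ := fun t => ((K - 1 : ℕ) : ℝ) * Real.log ((t + K : ℕ) : ℝ) + Cm * b t
    with hβt_def
  set c : ℕ → ℝ := fun t => Real.exp ((m / 2 : ℝ) * (Real.log ε - βt t)) with hc_def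
  have hc_pos : ∀ t, 0 < c t := fun t => Real.exp_pos _
  have hincl : ∀ (t : ℕ) (x : Ω), ε < μ t i x →
      ENNReal.ofReal (c t) ≤ ENNReal.ofReal (Yr t x) := by
    intro t x hx
    have hLle : Real.log (μ t i x) ≤
        (1 / m : ℝ) * ∑ j, Real.log (Pl j t x) + Cm * b t := by
      rw [hL t i x]
      have hpart1 : ∑ s ∈ Finset.range t, ∑ j, (1 / m : ℝ) * g j s x
          = (1 / m : ℝ) * ∑ j, Real.log (Pl j t x) := by
        rw [Finset.sum_comm, Finset.mul_sum]
        refine Finset.sum_congr rfl fun j _ => ?_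
        rw [← Finset.mul_sum, hsum_g j t x]
      have hpart2 : ∑ s ∈ Finset.range t, ∑ j, ((A ^ (t - 1 - s)) i j - 1 / m) * g j s x
          ≤ Cm * b t := by
        have h5 : ∀ s ∈ Finset.range t, ∑ j, ((A ^ (t - 1 - s)) i j - 1 / m) * g j s x
            ≤ ∑ j, |(A ^ (t - 1 - s)) i j - 1 / m| * b t := by
          intro s hs
          refine Finset.sum_le_sum fun j _ => ?_
          calc ((A ^ (t - 1 - s)) i j - 1 / m) * g j s x
              ≤ |((A ^ (t - 1 - s)) i j - 1 / m) * g j s x| := le_abs_self _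
            _ = |(A ^ (t - 1 - s)) i j - 1 / m| * |g j s x| := abs_mul _ _
            _ ≤ |(A ^ (t - 1 - s)) i j - 1 / m| * b t :=
                mul_le_mul_of_nonneg_left (hgb t j s x (Finset.mem_range.1 hs)) (abs_nonneg _)
        calc ∑ s ∈ Finset.range t, ∑ j, ((A ^ (t - 1 - s)) i j - 1 / m) * g j s x
            ≤ ∑ s ∈ Finset.range t, ∑ j, |(A ^ (t - 1 - s)) i j - 1 / m| * b t :=
              Finset.sum_le_sum h5
          _ = (∑ s ∈ Finset.range t, ∑ j, |(A ^ (t - 1 - s)) i j - 1 / m|) * b t := by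
              rw [Finset.sum_mul]
              exact Finset.sum_congr rfl fun s _ => (Finset.sum_mul _ _ _).symm
          _ = (∑ s ∈ Finset.range t, ∑ j, |(A ^ s) i j - 1 / m|) * b t := by
              rw [Finset.sum_range_reflect (fun s => ∑ j, |(A ^ s) i j - 1 / m|) t]
          _ ≤ Cm * b t := mul_le_mul_of_nonneg_right (hCm i t) (hb0 t)
      calc ∑ s ∈ Finset.range t, ∑ j, (A ^ (t - 1 - s)) i j * g j s x
          = (∑ s ∈ Finset.range t, ∑ j, (1 / m : ℝ) * g j s x)
            + ∑ s ∈ Finset.range t, ∑ j, ((A ^ (t - 1 - s)) i j - 1 / m) * g j s x := by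
            rw [← Finset.sum_add_distrib]
            refine Finset.sum_congr rfl fun s _ => ?_
            rw [← Finset.sum_add_distrib]
            exact Finset.sum_congr rfl fun j _ => by ring
        _ ≤ (1 / m : ℝ) * ∑ j, Real.log (Pl j t x) + Cm * b t := by
            rw [hpart1]
            exact add_le_add_right hpart2 _
    have hlogPl : ∀ j, Real.log (Pl j t x) ≤
        ((K - 1 : ℕ) : ℝ) * Real.log ((t + K : ℕ) : ℝ) + Real.log (Rj j t x) := by
      intro j
      have hpowpos : (0:ℝ) < ((t + K : ℕ) : ℝ) ^ (K - 1) :=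
        pow_pos (lt_of_lt_of_le one_pos (hcast1 t)) _
      have h1 := Real.log_le_log (hPl_pos j t x) (hPl_le j t x)
      rw [Real.log_mul hpowpos.ne' (hRj_pos j t x).ne', Real.log_pow] at h1
      exact h1
    have h2 : (1 / m : ℝ) * ∑ j, Real.log (Pl j t x) ≤
        ((K - 1 : ℕ) : ℝ) * Real.log ((t + K : ℕ) : ℝ)
          + (1 / m : ℝ) * ∑ j, Real.log (Rj j t x) := by
      have hs := Finset.sum_le_sum fun j (_ : j ∈ Finset.univ) => hlogPl j
      rw [Finset.sum_add_distrib, Finset.sum_const, Finset.card_univ, Fintype.card_fin,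
        nsmul_eq_mul] at hs
      have h6 := mul_le_mul_of_nonneg_left hs (by positivity : (0:ℝ) ≤ 1 / m)
      rw [mul_add] at h6
      have hmm : (1 / m : ℝ) * ((m : ℝ) * (((K - 1 : ℕ) : ℝ) * Real.log ((t + K : ℕ) : ℝ)))
          = ((K - 1 : ℕ) : ℝ) * Real.log ((t + K : ℕ) : ℝ) := by
        field_simp
      rw [hmm] at h6
      exact h6
    have hlogsum : ∑ j, Real.log (Rj j t x) = Real.log (∏ j, Rj j t x) :=
      (Real.log_prod fun j _ => (hRj_pos j t x).ne').symm
    have h3 : Real.log ε - βt t < (1 / m : ℝ) * Real.log (∏ j, Rj j t x) := by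
      have hlogμ : Real.log ε < Real.log (μ t i x) := Real.log_lt_log hε hx
      rw [hβt_def]
      simp only []
      rw [← hlogsum]
      linarith
    have h4 : Real.exp ((m : ℝ) * (Real.log ε - βt t)) < ∏ j, Rj j t x := by
      have h7 : (m : ℝ) * (Real.log ε - βt t) < Real.log (∏ j, Rj j t x) := by
        have h8 := mul_lt_mul_of_pos_left h3 hm0
        have h9 : (m : ℝ) * ((1 / m : ℝ) * Real.log (∏ j, Rj j t x))
            = Real.log (∏ j, Rj j t x) := by field_simp
        rw [h9] at h8
        exact h8
      calc Real.exp ((m : ℝ) * (Real.log ε - βt t))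
          < Real.exp (Real.log (∏ j, Rj j t x)) := Real.exp_lt_exp.2 h7
        _ = ∏ j, Rj j t x := Real.exp_log (Finset.prod_pos fun j _ => hRj_pos j t x)
    have h5 : c t ≤ Yr t x := by
      have hsq : (c t) ^ 2 = Real.exp ((m : ℝ) * (Real.log ε - βt t)) := by
        rw [hc_def]
        simp only []
        rw [sq, ← Real.exp_add]
        congr 1
        ring
      have h10 := Real.sqrt_le_sqrt h4.le
      rw [← hsq, Real.sqrt_sq (hc_pos t).le, ← hYsq t x, Real.sqrt_sq (hYr0 t x)] at h10
      exact h10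
    exact ENNReal.ofReal_le_ofReal h5
  set ρbar : ℝ := ∏ j, ρ j with hρbar_def
  have hρbar_pos : 0 < ρbar := Finset.prod_pos fun j _ => hρ_pos j
  have hρbar_lt : ρbar < 1 := by
    calc ρbar = ρ i0 * ∏ j ∈ Finset.univ.erase i0, ρ j :=
          (Finset.mul_prod_erase _ _ (Finset.mem_univ i0)).symm
      _ ≤ ρ i0 * 1 := by
          apply mul_le_mul_of_nonneg_left _ (hρ_pos i0).le
          exact Finset.prod_le_one (fun j _ => (hρ_pos j).le) (fun j _ => hρ_le j)
      _ < 1 := by rw [mul_one]; exact hρ_lt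
  have hmarkov : ∀ t : ℕ, P {x | ε < μ t i x} ≤ ENNReal.ofReal (ρbar ^ t / c t) := by
    intro t
    have hYmeas : Measurable (fun x => ENNReal.ofReal (Yr t x)) := by
      have h1 : (fun x => ENNReal.ofReal (Yr t x))
          = fun x => ∏ p ∈ Finset.univ ×ˢ Finset.range t, F p x := by
        funext x; exact hYofReal t x
      rw [h1]
      exact Finset.measurable_prod _ fun p _ => hFmeas p
    have h2 := mul_meas_ge_le_lintegral₀ (μ := P) hYmeas.aemeasurable (ENNReal.ofReal (c t))
    have h3 : ∫⁻ x, ENNReal.ofReal (Yr t x) ∂P = ENNReal.ofReal (ρbar ^ t) := by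
      calc ∫⁻ x, ENNReal.ofReal (Yr t x) ∂P
          = ∫⁻ x, ∏ p ∈ Finset.univ ×ˢ Finset.range t, F p x ∂P := by
            congr 1; funext x; exact hYofReal t x
        _ = ENNReal.ofReal ((∏ j, ρ j) ^ t) := hint t
        _ = ENNReal.ofReal (ρbar ^ t) := by rw [hρbar_def]
    rw [h3] at h2
    have hc_ne : ENNReal.ofReal (c t) ≠ 0 := by
      simp only [ne_eq, ENNReal.ofReal_eq_zero, not_le]
      exact hc_pos t
    calc P {x | ε < μ t i x}
        ≤ P {x | ENNReal.ofReal (c t) ≤ ENNReal.ofReal (Yr t x)} :=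
          measure_mono fun x hx => hincl t x hx
      _ ≤ ENNReal.ofReal (ρbar ^ t) / ENNReal.ofReal (c t) := by
          rw [ENNReal.le_div_iff_mul_le (Or.inl hc_ne) (Or.inl ENNReal.ofReal_ne_top)]
          rw [mul_comm]
          exact h2
      _ = ENNReal.ofReal (ρbar ^ t / c t) := (ENNReal.ofReal_div_of_pos (hc_pos t)).symm
  -- final limit computation
  set CE : ℝ := Real.exp (-(m / 2 : ℝ) * Real.log ε) with hCE_def
  set q : ℝ := (m / 2 : ℝ) * (((K - 1 : ℕ) : ℝ) + Cm) with hq_def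
  set CC : ℝ := Real.exp ((m / 2 : ℝ) * Cm * Cπ) with hCC_def
  set Q : ℕ := ⌈q⌉₊ with hQ_def
  have hbound : ∀ t : ℕ, ρbar ^ t / c t ≤ CE * CC * (((t + K : ℕ) : ℝ) ^ Q * ρbar ^ t) := by
    intro t
    have h1 : ρbar ^ t / c t
        = ρbar ^ t * Real.exp ((m / 2 : ℝ) * βt t) * CE := by
      rw [hc_def, hCE_def]
      simp only []
      rw [div_eq_mul_inv, ← Real.exp_neg, mul_assoc, ← Real.exp_add]
      congr 2
      ring
    have hlog0 : 0 ≤ Real.log ((t + K : ℕ) : ℝ) := Real.log_nonneg (hcast1 t)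
    have h2 : Real.exp ((m / 2 : ℝ) * βt t) ≤ ((t + K : ℕ) : ℝ) ^ Q * CC := by
      have hβ : (m / 2 : ℝ) * βt t
          = q * Real.log ((t + K : ℕ) : ℝ) + (m / 2 : ℝ) * Cm * Cπ := by
        rw [hβt_def, hb_def, hq_def]
        simp only []
        ring
      rw [hβ, Real.exp_add]
      have h4 : Real.exp (q * Real.log ((t + K : ℕ) : ℝ)) ≤ ((t + K : ℕ) : ℝ) ^ Q := by
        calc Real.exp (q * Real.log ((t + K : ℕ) : ℝ))
            ≤ Real.exp ((Q : ℝ) * Real.log ((t + K : ℕ) : ℝ)) :=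
              Real.exp_le_exp.2 (mul_le_mul_of_nonneg_right (Nat.le_ceil q) hlog0)
          _ = Real.exp (Real.log ((t + K : ℕ) : ℝ)) ^ Q := Real.exp_nat_mul _ Q
          _ = ((t + K : ℕ) : ℝ) ^ Q := by
              rw [Real.exp_log (lt_of_lt_of_le one_pos (hcast1 t))]
      rw [hCC_def]
      exact mul_le_mul_of_nonneg_right h4 (Real.exp_pos _).le
    calc ρbar ^ t / c t = ρbar ^ t * Real.exp ((m / 2 : ℝ) * βt t) * CE := h1
      _ ≤ ρbar ^ t * (((t + K : ℕ) : ℝ) ^ Q * CC) * CE := by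
          apply mul_le_mul_of_nonneg_right _ (Real.exp_pos _).le
          exact mul_le_mul_of_nonneg_left h2 (pow_nonneg hρbar_pos.le t)
      _ = CE * CC * (((t + K : ℕ) : ℝ) ^ Q * ρbar ^ t) := by ring
  have htendE : Tendsto (fun t : ℕ => CE * CC * (((t + K : ℕ) : ℝ) ^ Q * ρbar ^ t))
      atTop (nhds 0) := by
    have h1 : Tendsto (fun n : ℕ => (n : ℝ) ^ Q * ρbar ^ n) atTop (nhds 0) :=
      tendsto_pow_const_mul_const_pow_of_abs_lt_one Q (by rwa [abs_of_pos hρbar_pos])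
    have h2 : Tendsto (fun t : ℕ => ((t + K : ℕ) : ℝ) ^ Q * ρbar ^ (t + K)) atTop (nhds 0) :=
      h1.comp (tendsto_add_atTop_nat K)
    have h3 : (fun t : ℕ => ((t + K : ℕ) : ℝ) ^ Q * ρbar ^ t)
        = fun t : ℕ => (((t + K : ℕ) : ℝ) ^ Q * ρbar ^ (t + K)) * (ρbar ^ K)⁻¹ := by
      funext t
      rw [pow_add]
      field_simp
    have h4 : Tendsto (fun t : ℕ => ((t + K : ℕ) : ℝ) ^ Q * ρbar ^ t) atTop (nhds 0) := by
      rw [h3]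
      simpa using h2.mul_const (ρbar ^ K)⁻¹
    simpa using h4.const_mul (CE * CC)
  have hupper : ∀ t : ℕ, P {x | ε < μ t i x}
      ≤ ENNReal.ofReal (CE * CC * (((t + K : ℕ) : ℝ) ^ Q * ρbar ^ t)) :=
    fun t => (hmarkov t).trans (ENNReal.ofReal_le_ofReal (hbound t))
  have htend0 : Tendsto (fun t : ℕ =>
      ENNReal.ofReal (CE * CC * (((t + K : ℕ) : ℝ) ^ Q * ρbar ^ t))) atTop (nhds 0) := by
    have := ENNReal.tendsto_ofReal (a := 0) htendE
    simpa using this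
  exact tendsto_of_tendsto_of_tendsto_of_le_of_le tendsto_const_nhds htend0
    (fun t => zero_le) hupper
end

section
/- Suppose the network is fully connected, i.e., A_{ij} = 1/m for all i, j, and there exists at least one agent i with π_{iθ} ≠ π*_i. Then for every agent i, (1/t) log μ_{it} converges in probability to −D_CA(Π*‖Π_θ), where D_CA(Π*‖Π_θ) = −∑_{k_1=1}^K ⋯ ∑_{k_m=1}^K (∏_{i=1}^m π*_{i k_i}) · log( (1/m) ∑_{i=1}^m π_{i k_i θ}/π*_{i k_i} ) is the Centralized Average divergence. -/
open MeasureTheory ProbabilityTheory Filter Finset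

/-- Centralized Average divergence: `D_CA(Π*‖Π_θ) =
−∑_{k_1,…,k_m} (∏ᵢ π*_{i kᵢ}) log((1/m) ∑ᵢ π_{i kᵢ θ}/π*_{i kᵢ})`. -/
noncomputable def DCA {m K : ℕ} (πstar πθ : Fin m → Fin K → ℝ) : ℝ :=
  -∑ κ : Fin m → Fin K,
      (∏ i, πstar i (κ i)) * Real.log ((1 / (m : ℝ)) * ∑ i, πθ i (κ i) / πstar i (κ i))

/-- If termwise logs are close, logs of sums are close. -/
lemma aux_log_sum_close {m : ℕ} (hm : 0 < m) (a b : Fin m → ℝ) (e : ℝ)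
    (ha : ∀ i, 0 < a i) (hb : ∀ i, 0 < b i)
    (hle : ∀ i, |Real.log (a i) - Real.log (b i)| ≤ e) :
    |Real.log (∑ i, a i) - Real.log (∑ i, b i)| ≤ e := by
  have hsa : 0 < ∑ i, a i := Finset.sum_pos (fun i _ => ha i)
    (by simpa using Finset.univ_nonempty_iff.2 (Fin.pos_iff_nonempty.mp hm))
  have hsb : 0 < ∑ i, b i := Finset.sum_pos (fun i _ => hb i)
    (by simpa using Finset.univ_nonempty_iff.2 (Fin.pos_iff_nonempty.mp hm))
  have h1 : ∑ i, a i ≤ Real.exp e * ∑ i, b i := by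
    rw [Finset.mul_sum]
    refine Finset.sum_le_sum fun i _ => ?_
    have : Real.log (a i) ≤ e + Real.log (b i) := by
      have := (abs_le.1 (hle i)).2; linarith
    calc a i = Real.exp (Real.log (a i)) := (Real.exp_log (ha i)).symm
      _ ≤ Real.exp (e + Real.log (b i)) := Real.exp_le_exp.2 this
      _ = Real.exp e * b i := by rw [Real.exp_add, Real.exp_log (hb i)]
  have h2 : ∑ i, b i ≤ Real.exp e * ∑ i, a i := by
    rw [Finset.mul_sum]
    refine Finset.sum_le_sum fun i _ => ?_
    have : Real.log (b i) ≤ e + Real.log (a i) := by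
      have := (abs_le.1 (hle i)).1; linarith
    calc b i = Real.exp (Real.log (b i)) := (Real.exp_log (hb i)).symm
      _ ≤ Real.exp (e + Real.log (a i)) := Real.exp_le_exp.2 this
      _ = Real.exp e * a i := by rw [Real.exp_add, Real.exp_log (ha i)]
  rw [abs_le]
  constructor
  · have := Real.log_le_log hsb h2
    rw [Real.log_mul (Real.exp_ne_zero e) (ne_of_gt hsa), Real.log_exp] at this
    linarith
  · have := Real.log_le_log hsa h1
    rw [Real.log_mul (Real.exp_ne_zero e) (ne_of_gt hsb), Real.log_exp] at this
    linarith

lemma aux_logdiv (K : ℕ) (hK : 1 ≤ K) :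
    Tendsto (fun t : ℕ => Real.log ((t:ℝ) + K) / ((t:ℝ)+1)) atTop (nhds 0) := by
  have h1 : Tendsto (fun t : ℕ => Real.log ((t:ℝ)+K) / ((t:ℝ)+K)) atTop (nhds 0) := by
    have := (Real.isLittleO_log_id_atTop.tendsto_div_nhds_zero).comp
      (tendsto_atTop_add_const_right atTop (K:ℝ) tendsto_natCast_atTop_atTop)
    exact this
  have hKpos : (0:ℝ) < K := by exact_mod_cast hK
  refine squeeze_zero (fun t => ?_) (fun t => ?_) (by simpa using h1.const_mul (K:ℝ))
  · have h1K : (1:ℝ) ≤ (t:ℝ) + K := by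
      have h : (1:ℝ) ≤ (K:ℝ) := by exact_mod_cast hK
      have h' : (0:ℝ) ≤ (t:ℝ) := Nat.cast_nonneg t
      linarith
    have := Real.log_nonneg h1K
    positivity
  · have h1K : (1:ℝ) ≤ (t:ℝ) + K := by
      have h : (1:ℝ) ≤ (K:ℝ) := by exact_mod_cast hK
      have h' : (0:ℝ) ≤ (t:ℝ) := Nat.cast_nonneg t
      linarith
    have hlog : 0 ≤ Real.log ((t:ℝ)+K) := Real.log_nonneg h1K
    have hineq : 1/((t:ℝ)+1) ≤ (K:ℝ)/((t:ℝ)+K) := by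
      rw [div_le_div_iff₀ (by positivity) (by positivity)]
      have h : (1:ℝ) ≤ (K:ℝ) := by exact_mod_cast hK
      nlinarith [Nat.cast_nonneg (α := ℝ) t]
    calc Real.log ((t:ℝ)+K) / ((t:ℝ)+1) = Real.log ((t:ℝ)+K) * (1/((t:ℝ)+1)) := by ring
      _ ≤ Real.log ((t:ℝ)+K) * ((K:ℝ)/((t:ℝ)+K)) :=
          mul_le_mul_of_nonneg_left hineq hlog
      _ = (K:ℝ) * (Real.log ((t:ℝ)+K) / ((t:ℝ)+K)) := by ring

lemma aux_logbound (C : ℝ) (K : ℕ) (hK : 1 ≤ K) (b : ℕ → ℝ)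
    (hb : ∀ t, |b t| ≤ C + Real.log ((t:ℝ) + K)) :
    Tendsto (fun t : ℕ => b t / ((t:ℝ)+1)) atTop (nhds 0) := by
  have hC : Tendsto (fun t : ℕ => C / ((t:ℝ)+1)) atTop (nhds 0) := by
    have := (tendsto_const_div_atTop_nhds_zero_nat C).comp (tendsto_add_atTop_nat 1)
    refine this.congr fun t => ?_
    simp [Function.comp]
  have hsum := hC.add (aux_logdiv K hK)
  rw [add_zero] at hsum
  refine squeeze_zero_norm (fun t => ?_) hsum
  have ht1 : (0:ℝ) < (t:ℝ)+1 := by positivity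
  rw [Real.norm_eq_abs, abs_div, abs_of_pos ht1, ← add_div]
  gcongr
  exact hb t

lemma aux_det (c : ℝ) (b lL Y E : ℕ → ℝ) (f : ℕ → ℝ)
    (hb : Tendsto (fun t : ℕ => b t / ((t:ℝ)+1)) atTop (nhds 0))
    (hLY : ∀ τ, |lL τ - Y τ| ≤ E τ)
    (hE : Tendsto E atTop (nhds 0))
    (hY : Tendsto (fun t : ℕ => (∑ τ ∈ range t, Y τ) / (t:ℝ)) atTop (nhds c))
    (hf : ∀ t, f (t+1) = b t + ∑ τ ∈ range t, lL τ) :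
    Tendsto (fun t : ℕ => (1/(t:ℝ)) * f t) atTop (nhds c) := by
  have hdiff : Tendsto (fun τ => lL τ - Y τ) atTop (nhds 0) :=
    squeeze_zero_norm hLY hE
  have hces := hdiff.cesaro
  have havgL : Tendsto (fun t : ℕ => (∑ τ ∈ range t, lL τ) / (t:ℝ)) atTop (nhds c) := by
    have : (fun t : ℕ => (∑ τ ∈ range t, lL τ) / (t:ℝ)) =
        fun t : ℕ => ((t:ℝ)⁻¹ * ∑ τ ∈ range t, (lL τ - Y τ)) + (∑ τ ∈ range t, Y τ) / (t:ℝ) := by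
      funext t
      rw [Finset.sum_sub_distrib]
      field_simp
      ring
    rw [this]
    simpa using hces.add hY
  have hratio : Tendsto (fun t : ℕ => (t:ℝ)/((t:ℝ)+1)) atTop (nhds 1) :=
    tendsto_natCast_div_add_atTop (1:ℝ)
  have h2 : Tendsto (fun t : ℕ => (∑ τ ∈ range t, lL τ) / ((t:ℝ)+1)) atTop (nhds c) := by
    have heq : (fun t : ℕ => (∑ τ ∈ range t, lL τ) / ((t:ℝ)+1)) =
        fun t : ℕ => ((∑ τ ∈ range t, lL τ) / (t:ℝ)) * ((t:ℝ)/((t:ℝ)+1)) := by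
      funext t
      rcases Nat.eq_zero_or_pos t with h | h
      · subst h; simp
      · have ht : (t:ℝ) ≠ 0 := Nat.cast_ne_zero.2 h.ne'
        have ht1 : (t:ℝ)+1 ≠ 0 := by positivity
        field_simp
    rw [heq]
    simpa using havgL.mul hratio
  have h3 : Tendsto (fun t : ℕ => f (t+1) / ((t:ℝ)+1)) atTop (nhds c) := by
    have heq : (fun t : ℕ => f (t+1) / ((t:ℝ)+1)) =
        fun t : ℕ => b t / ((t:ℝ)+1) + (∑ τ ∈ range t, lL τ) / ((t:ℝ)+1) := by
      funext t; rw [hf t, add_div]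
    rw [heq]
    simpa using hb.add h2
  rw [← tendsto_add_atTop_iff_nat 1]
  refine h3.congr fun t => ?_
  push_cast
  ring

lemma aux_ratio_tendsto (K : ℕ) (hK : 1 ≤ K) (p : ℝ) (hp : 0 < p) (n : ℕ → ℕ)
    (hn : Tendsto (fun τ : ℕ => (n τ : ℝ)/(τ:ℝ)) atTop (nhds p)) :
    Tendsto (fun τ : ℕ => |Real.log (((τ:ℝ)+K) * p / ((n τ : ℝ)+1))|) atTop (nhds 0) := by
  have hinv : Tendsto (fun τ : ℕ => ((τ:ℝ))⁻¹) atTop (nhds 0) :=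
    tendsto_inv_atTop_nhds_zero_nat
  have hA : Tendsto (fun τ : ℕ => ((τ:ℝ)+K)/(τ:ℝ)) atTop (nhds 1) := by
    have h := hinv.const_mul (K:ℝ)
    have h' : Tendsto (fun τ : ℕ => 1 + (K:ℝ) * ((τ:ℝ))⁻¹) atTop (nhds 1) := by
      simpa using (tendsto_const_nhds (x := (1:ℝ)) (f := atTop)).add h
    refine h'.congr' ?_
    filter_upwards [eventually_ge_atTop 1] with τ hτ
    have ht : (τ:ℝ) ≠ 0 := Nat.cast_ne_zero.2 (by omega)
    field_simp
  have hB : Tendsto (fun τ : ℕ => ((n τ : ℝ)+1)/(τ:ℝ)) atTop (nhds p) := by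
    have h := hn.add hinv
    rw [add_zero] at h
    refine h.congr' ?_
    filter_upwards [eventually_ge_atTop 1] with τ hτ
    have ht : (τ:ℝ) ≠ 0 := Nat.cast_ne_zero.2 (by omega)
    rw [add_div, one_div]
  have hr : Tendsto (fun τ : ℕ => ((τ:ℝ)+K) * p / ((n τ : ℝ)+1)) atTop (nhds 1) := by
    have h := (hA.mul (tendsto_const_nhds (x := p))).div hB hp.ne'
    rw [one_mul, div_self hp.ne'] at h
    refine h.congr' ?_
    filter_upwards [eventually_ge_atTop 1] with τ hτ
    have ht : (τ:ℝ) ≠ 0 := Nat.cast_ne_zero.2 (by omega)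
    have hn1 : ((n τ : ℝ)+1) ≠ 0 := by positivity
    simp only [Pi.div_apply]
    field_simp
  have hlog : Tendsto (fun τ : ℕ => Real.log (((τ:ℝ)+K) * p / ((n τ : ℝ)+1))) atTop (nhds 0) := by
    have := (Real.continuousAt_log one_ne_zero).tendsto.comp hr
    simpa [Function.comp_def] using this
  simpa using hlog.abs

/-- On the fully connected network, with certain models and a mismatched agent,
`(1/t) log μ_{it}` converges in probability to `−D_CA(Π*‖Π_θ)`. -/
theorem degroot_fully_connected_rate
    {Ω : Type*} [MeasurableSpace Ω] (P : Measure Ω) [IsProbabilityMeasure P]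
    (m : ℕ) (hm : 1 ≤ m) (K : ℕ) (hK : 2 ≤ K)
    (πstar πθ : Fin m → Fin K → ℝ)
    (hstar_pos : ∀ i k, 0 < πstar i k) (hstar_sum : ∀ i, ∑ k, πstar i k = 1)
    (hθ_pos : ∀ i k, 0 < πθ i k) (hθ_sum : ∀ i, ∑ k, πθ i k = 1)
    (X : Fin m → ℕ → Ω → Fin K) (hX_meas : ∀ i t, Measurable (X i t))
    (hX_indep : iIndepFun
      (fun p : Fin m × ℕ => X p.1 p.2) P)
    (hX_law : ∀ i t k, P {x | X i t x = k} = ENNReal.ofReal (πstar i k))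
    (μ : ℕ → Fin m → Ω → ℝ)
    (hμ0 : ∀ i x, μ 0 i x = 1)
    (hμ : ∀ t i x, μ (t + 1) i x =
      πθ i (X i t x) * (((t + 1 + K - 1 : ℕ)) : ℝ) /
          (((sigCount (X i) (X i t x) t x + 1 : ℕ)) : ℝ) *
        ∑ j, (1 / (m : ℝ)) * μ t j x)
    (hmismatch : ∃ i, πθ i ≠ πstar i) :
    ∀ i : Fin m, ∀ ε : ℝ, 0 < ε →
      Tendsto (fun t : ℕ =>
          P {x | ε < |(1 / (t : ℝ)) * Real.log (μ t i x) - (-(DCA πstar πθ))|})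
        atTop (nhds 0) := by
  classical
  intro i ε hε
  have hm0 : 0 < m := hm
  have hmR : (0:ℝ) < m := by exact_mod_cast hm
  have hK1 : 1 ≤ K := by omega
  set c : ℝ := -(DCA πstar πθ) with hc
  set g : (Fin m → Fin K) → ℝ :=
    fun κ => Real.log ((1/(m:ℝ)) * ∑ j, πθ j (κ j) / πstar j (κ j)) with hg
  set V : ℕ → Ω → (Fin m → Fin K) := fun τ x j => X j τ x with hV
  set Y : ℕ → Ω → ℝ := fun τ x => g (V τ x) with hY
  have hVmeas : ∀ τ, Measurable (V τ) :=
    fun τ => measurable_pi_lambda _ (fun j => hX_meas j τ)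
  have hgmeas : Measurable g := Measurable.of_discrete
  have hYmeas : ∀ τ, Measurable (Y τ) := fun τ => hgmeas.comp (hVmeas τ)
  -- law of V τ
  have hVlaw : ∀ τ (κ : Fin m → Fin K),
      P {x | V τ x = κ} = ∏ j, ENNReal.ofReal (πstar j (κ j)) := by
    intro τ κ
    have hset : {x | V τ x = κ} =
        ⋂ p ∈ Finset.image (fun j : Fin m => (j, τ)) Finset.univ,
          X p.1 p.2 ⁻¹' {κ p.1} := by
      ext x
      simp [hV, funext_iff]
    rw [hset, hX_indep.meas_biInter (fun p _ => ⟨{κ p.1}, trivial, rfl⟩)]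
    rw [Finset.prod_image (fun a _ b _ h => (Prod.ext_iff.1 h).1)]
    refine Finset.prod_congr rfl fun j _ => ?_
    exact hX_law j τ (κ j)
  -- expectation of Y 0
  have hEY : ∫ x, Y 0 x ∂P = c := by
    have hmeasset : ∀ κ : Fin m → Fin K, MeasurableSet {x | V 0 x = κ} :=
      fun κ => (hVmeas 0) (MeasurableSet.singleton κ)
    have hrep : (fun x => Y 0 x) = fun x => ∑ κ : Fin m → Fin K,
        Set.indicator {x' | V 0 x' = κ} (fun _ => g κ) x := by
      funext x
      simp only [Set.indicator_apply, Set.mem_setOf_eq]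
      rw [Finset.sum_ite_eq]
      simp [hY]
    calc ∫ x, Y 0 x ∂P
        = ∑ κ : Fin m → Fin K,
            ∫ x, Set.indicator {x' | V 0 x' = κ} (fun _ => g κ) x ∂P := by
          rw [hrep]
          exact integral_finset_sum _ (fun κ _ => (integrable_const (g κ)).indicator (hmeasset κ))
      _ = ∑ κ : Fin m → Fin K, (P {x' | V 0 x' = κ}).toReal * g κ := by
          refine Finset.sum_congr rfl fun κ _ => ?_
          rw [integral_indicator_const _ (hmeasset κ), smul_eq_mul, measureReal_def]
      _ = c := by
          rw [hc, DCA, neg_neg]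
          refine Finset.sum_congr rfl fun κ _ => ?_
          rw [hVlaw 0 κ, ENNReal.toReal_prod]
          congr 1
          exact Finset.prod_congr rfl fun j _ => ENNReal.toReal_ofReal (hstar_pos j (κ j)).le
  -- independence of the Y's
  have hYindep : Pairwise (Function.onFun (IndepFun · · P) Y) := by
    intro τ σ hne
    have hdisj : Disjoint (Finset.image (fun j : Fin m => (j, τ)) Finset.univ)
        (Finset.image (fun j : Fin m => (j, σ)) Finset.univ) := by
      simp only [Finset.disjoint_left, Finset.mem_image]
      rintro p ⟨a, -, rfl⟩ ⟨b, -, hb⟩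
      exact hne ((Prod.ext_iff.1 hb).2.symm)
    have base := hX_indep.indepFun_finset _ _ hdisj (fun p => hX_meas p.1 p.2)
    have hφτ : Measurable (fun f :
        (↥(Finset.image (fun j : Fin m => (j, τ)) Finset.univ)) → Fin K =>
        g (fun j => f ⟨(j, τ), Finset.mem_image_of_mem _ (Finset.mem_univ j)⟩)) :=
      Measurable.of_discrete
    have hφσ : Measurable (fun f :
        (↥(Finset.image (fun j : Fin m => (j, σ)) Finset.univ)) → Fin K =>
        g (fun j => f ⟨(j, σ), Finset.mem_image_of_mem _ (Finset.mem_univ j)⟩)) :=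
      Measurable.of_discrete
    exact base.comp hφτ hφσ
  -- identical distribution
  have hYident : ∀ τ, IdentDistrib (Y τ) (Y 0) P P := by
    intro τ
    have hident : IdentDistrib (V τ) (V 0) P P := by
      refine ⟨(hVmeas τ).aemeasurable, (hVmeas 0).aemeasurable, ?_⟩
      refine Measure.ext_of_singleton fun κ => ?_
      rw [Measure.map_apply (hVmeas τ) (MeasurableSet.singleton κ),
          Measure.map_apply (hVmeas 0) (MeasurableSet.singleton κ)]
      have h1 : V τ ⁻¹' {κ} = {x | V τ x = κ} := rfl
      have h2 : V 0 ⁻¹' {κ} = {x | V 0 x = κ} := rfl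
      rw [h1, h2, hVlaw, hVlaw]
    exact hident.comp hgmeas
  have hYint : Integrable (Y 0) P := by
    refine Integrable.mono' (integrable_const (∑ κ : Fin m → Fin K, |g κ|))
      (hYmeas 0).aestronglyMeasurable (ae_of_all _ fun x => ?_)
    rw [Real.norm_eq_abs]
    exact Finset.single_le_sum (f := fun κ => |g κ|) (fun κ _ => abs_nonneg _)
      (Finset.mem_univ (V 0 x))
  have hG2 : ∀ᵐ x ∂P,
      Tendsto (fun t : ℕ => (∑ τ ∈ range t, Y τ x) / (t:ℝ)) atTop (nhds c) := by
    have := strong_law_ae_real Y hYint hYindep hYident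
    rw [show P[Y 0] = c from hEY] at this
    exact this
  -- empirical frequencies
  have hG1 : ∀ᵐ x ∂P, ∀ (j : Fin m) (k : Fin K),
      Tendsto (fun t : ℕ => (sigCount (X j) k t x : ℝ) / (t:ℝ)) atTop
        (nhds (πstar j k)) := by
    rw [ae_all_iff]
    intro j
    rw [ae_all_iff]
    intro k
    set Z : ℕ → Ω → ℝ := fun τ x => if X j τ x = k then (1:ℝ) else 0 with hZ
    have hZmeas : ∀ τ, Measurable (Z τ) := fun τ =>
      (Measurable.of_discrete (f := fun k' : Fin K => if k' = k then (1:ℝ) else 0)).comp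
        (hX_meas j τ)
    have hidX : ∀ τ, IdentDistrib (X j τ) (X j 0) P P := by
      intro τ
      refine ⟨(hX_meas j τ).aemeasurable, (hX_meas j 0).aemeasurable, ?_⟩
      refine Measure.ext_of_singleton fun k' => ?_
      rw [Measure.map_apply (hX_meas j τ) (MeasurableSet.singleton k'),
          Measure.map_apply (hX_meas j 0) (MeasurableSet.singleton k')]
      show P {x | X j τ x = k'} = P {x | X j 0 x = k'}
      rw [hX_law, hX_law]
    have hZident : ∀ τ, IdentDistrib (Z τ) (Z 0) P P := fun τ =>
      (hidX τ).comp (Measurable.of_discrete (f := fun k' : Fin K => if k' = k then (1:ℝ) else 0))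
    have hZindep : Pairwise (Function.onFun (IndepFun · · P) Z) := by
      intro τ σ hne
      exact (hX_indep.indepFun
          (show ((j,τ) : Fin m × ℕ) ≠ (j,σ) by simp [hne])).comp
        (Measurable.of_discrete (f := fun k' : Fin K => if k' = k then (1:ℝ) else 0))
        (Measurable.of_discrete (f := fun k' : Fin K => if k' = k then (1:ℝ) else 0))
    have hZint : Integrable (Z 0) P := by
      refine Integrable.mono' (integrable_const 1) (hZmeas 0).aestronglyMeasurable
        (ae_of_all _ fun x => ?_)
      rw [Real.norm_eq_abs]
      simp only [hZ]
      split <;> simp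
    have hEZ : ∫ x, Z 0 x ∂P = πstar j k := by
      have hzi : Z 0 = Set.indicator {x | X j 0 x = k} (fun _ => (1:ℝ)) := by
        funext x; simp [hZ, Set.indicator_apply]
      rw [hzi, integral_indicator_const _ (show MeasurableSet {x | X j 0 x = k} from
        (hX_meas j 0) (MeasurableSet.singleton k)),
        smul_eq_mul, mul_one]
      show (P {x | X j 0 x = k}).toReal = _
      rw [hX_law, ENNReal.toReal_ofReal (hstar_pos j k).le]
    have hsl := strong_law_ae_real Z hZint hZindep hZident
    rw [show P[Z 0] = πstar j k from hEZ] at hsl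
    filter_upwards [hsl] with x hx
    refine hx.congr fun t => ?_
    congr 1
    rw [sigCount, Finset.card_filter]
    push_cast
    rfl
  have hcnt_le : ∀ (j : Fin m) (k : Fin K) t x, sigCount (X j) k t x ≤ t := by
    intro j k t x
    simpa [sigCount] using Finset.card_filter_le (Finset.range t) (fun τ => X j τ x = k)
  -- measurability of beliefs
  have hμmeas : ∀ t j, Measurable (fun x => μ t j x) := by
    intro t
    induction t with
    | zero => intro j; simpa [hμ0] using measurable_const
    | succ t ih =>
      intro j
      have hcnt : Measurable (fun x => (sigCount (X j) (X j t x) t x : ℝ)) := by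
        have hrepr : (fun x => (sigCount (X j) (X j t x) t x : ℝ)) =
            fun x => ∑ τ ∈ range t, if X j τ x = X j t x then (1:ℝ) else 0 := by
          funext x
          rw [sigCount, Finset.card_filter]
          push_cast
          rfl
        rw [hrepr]
        refine Finset.measurable_sum _ fun τ _ => ?_
        have hset : MeasurableSet {x | X j τ x = X j t x} := by
          have hrw : {x | X j τ x = X j t x} =
              ⋃ k : Fin K, (X j τ ⁻¹' {k}) ∩ (X j t ⁻¹' {k}) := by
            ext x
            simp [Set.mem_iUnion, eq_comm]
          rw [hrw]
          exact MeasurableSet.iUnion fun k =>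
            ((hX_meas j τ) (MeasurableSet.singleton k)).inter
              ((hX_meas j t) (MeasurableSet.singleton k))
        exact Measurable.ite hset measurable_const measurable_const
      have hA : Measurable (fun x => πθ j (X j t x)) :=
        Measurable.of_discrete.comp (hX_meas j t)
      have hsum : Measurable (fun x => ∑ j', (1/(m:ℝ)) * μ t j' x) :=
        Finset.measurable_sum _ fun j' _ => (ih j').const_mul _
      have hrw2 : (fun x => μ (t+1) j x) = fun x =>
          πθ j (X j t x) * ((t + 1 + K - 1 : ℕ) : ℝ) /
            ((sigCount (X j) (X j t x) t x : ℝ) + 1) *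
            ∑ j', (1/(m:ℝ)) * μ t j' x := by
        funext x
        rw [hμ t j x]
        push_cast
        ring
      rw [hrw2]
      exact ((hA.mul measurable_const).div (hcnt.add measurable_const)).mul hsum
  -- a.e. convergence
  have hae : ∀ᵐ x ∂P,
      Tendsto (fun t : ℕ => (1/(t:ℝ)) * Real.log (μ t i x)) atTop (nhds c) := by
    have hKR : (0:ℝ) < K := by exact_mod_cast hK1
    have hne : Nonempty (Fin m) := Fin.pos_iff_nonempty.mp hm0
    have huniv : (Finset.univ : Finset (Fin m)).Nonempty := Finset.univ_nonempty
    filter_upwards [hG1, hG2] with x h1 h2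
    set ℓt : Fin m → ℕ → ℝ := fun j τ =>
      πθ j (X j τ x) * ((τ:ℝ)+K) / ((sigCount (X j) (X j τ x) τ x : ℝ)+1) with hℓt
    have hℓpos : ∀ j τ, 0 < ℓt j τ := by
      intro j τ
      have hτK : (0:ℝ) < (τ:ℝ)+K := by positivity
      exact div_pos (mul_pos (hθ_pos _ _) hτK) (by positivity)
    have hμx : ∀ t j, μ (t+1) j x = ℓt j t * ∑ j', (1/(m:ℝ)) * μ t j' x := by
      intro t j
      rw [hμ t j x]
      simp only [hℓt]
      have hcast : (t + 1 + K - 1 : ℕ) = t + K := by omega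
      rw [hcast]
      push_cast
      ring
    set Lx : ℕ → ℝ := fun τ => (1/(m:ℝ)) * ∑ j', ℓt j' τ with hLx
    have hLpos : ∀ τ, 0 < Lx τ :=
      fun τ => mul_pos (by positivity) (Finset.sum_pos (fun j' _ => hℓpos j' τ) huniv)
    have key : ∀ t, (∀ j, 0 < μ t j x) ∧
        (∑ j', (1/(m:ℝ)) * μ t j' x) = ∏ τ ∈ range t, Lx τ := by
      intro t
      induction t with
      | zero =>
        refine ⟨fun j => by rw [hμ0]; norm_num, ?_⟩
        simp only [hμ0, range_zero, Finset.prod_empty, mul_one]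
        rw [Finset.sum_const, card_univ, Fintype.card_fin, nsmul_eq_mul]
        field_simp
      | succ t ih =>
        obtain ⟨hp, hs⟩ := ih
        have hSpos : (0:ℝ) < ∑ j', (1/(m:ℝ)) * μ t j' x :=
          Finset.sum_pos (fun j' _ => mul_pos (by positivity) (hp j')) huniv
        refine ⟨fun j => by rw [hμx]; exact mul_pos (hℓpos j t) hSpos, ?_⟩
        calc ∑ j', (1/(m:ℝ)) * μ (t+1) j' x
            = ∑ j', (1/(m:ℝ)) * (ℓt j' t * ∑ j'', (1/(m:ℝ)) * μ t j'' x) :=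
              Finset.sum_congr rfl fun j' _ => by rw [hμx]
          _ = (∑ j', (1/(m:ℝ)) * ℓt j' t) * ∑ j'', (1/(m:ℝ)) * μ t j'' x := by
              rw [Finset.sum_mul]
              exact Finset.sum_congr rfl fun j' _ => by ring
          _ = Lx t * ∑ j'', (1/(m:ℝ)) * μ t j'' x := by
              congr 1
              simp [hLx, Finset.mul_sum]
          _ = ∏ τ ∈ range (t+1), Lx τ := by
              rw [Finset.prod_range_succ, hs]
              ring
    have hlog : ∀ t, Real.log (μ (t+1) i x) =
        Real.log (ℓt i t) + ∑ τ ∈ range t, Real.log (Lx τ) := by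
      intro t
      rw [hμx t i, Real.log_mul (hℓpos i t).ne'
        (by rw [(key t).2]; exact (Finset.prod_pos fun τ _ => hLpos τ).ne'),
        (key t).2, Real.log_prod (fun τ _ => (hLpos τ).ne')]
    set E : ℕ → ℝ := fun τ => ∑ j, ∑ k,
      |Real.log (((τ:ℝ)+K) * πstar j k / ((sigCount (X j) k τ x : ℝ)+1))| with hEdef
    have hLY : ∀ τ, |Real.log (Lx τ) - Y τ x| ≤ E τ := by
      intro τ
      have hbpos : ∀ j, (0:ℝ) < πθ j (X j τ x) / πstar j (X j τ x) :=
        fun j => div_pos (hθ_pos _ _) (hstar_pos _ _)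
      have hsum_pos : 0 < ∑ j, πθ j (X j τ x) / πstar j (X j τ x) :=
        Finset.sum_pos (fun j _ => hbpos j) huniv
      have e1 : Real.log (Lx τ) = Real.log (1/(m:ℝ)) + Real.log (∑ j', ℓt j' τ) := by
        rw [hLx]
        exact Real.log_mul (by positivity) (Finset.sum_pos (fun j' _ => hℓpos j' τ) huniv).ne'
      have e2 : Y τ x = Real.log (1/(m:ℝ)) +
          Real.log (∑ j, πθ j (X j τ x) / πstar j (X j τ x)) := by
        simp only [hY, hg, hV]
        exact Real.log_mul (by positivity) hsum_pos.ne'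
      rw [e1, e2, add_sub_add_left_eq_sub]
      refine aux_log_sum_close hm0 (fun j => ℓt j τ)
        (fun j => πθ j (X j τ x) / πstar j (X j τ x)) (E τ)
        (fun j => hℓpos j τ) hbpos ?_
      intro j
      have hτK : (0:ℝ) < (τ:ℝ)+K := by positivity
      have hcnt1 : (0:ℝ) < (sigCount (X j) (X j τ x) τ x : ℝ)+1 := by positivity
      have hlogdiff : Real.log (ℓt j τ) -
          Real.log (πθ j (X j τ x) / πstar j (X j τ x)) =
          Real.log (((τ:ℝ)+K) * πstar j (X j τ x) /
            ((sigCount (X j) (X j τ x) τ x : ℝ)+1)) := by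
        simp only [hℓt]
        rw [Real.log_div (mul_pos (hθ_pos _ _) hτK).ne' hcnt1.ne',
            Real.log_mul (hθ_pos _ _).ne' hτK.ne',
            Real.log_div (hθ_pos _ _).ne' (hstar_pos _ _).ne',
            Real.log_div (mul_pos hτK (hstar_pos _ _)).ne' hcnt1.ne',
            Real.log_mul hτK.ne' (hstar_pos _ _).ne']
        ring
      rw [hlogdiff]
      calc |Real.log (((τ:ℝ)+K) * πstar j (X j τ x) /
              ((sigCount (X j) (X j τ x) τ x : ℝ)+1))|
          ≤ ∑ k, |Real.log (((τ:ℝ)+K) * πstar j k /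
              ((sigCount (X j) k τ x : ℝ)+1))| :=
            Finset.single_le_sum
              (f := fun k => |Real.log (((τ:ℝ)+K) * πstar j k /
                ((sigCount (X j) k τ x : ℝ)+1))|)
              (fun k _ => abs_nonneg _) (Finset.mem_univ (X j τ x))
        _ ≤ E τ := by
            have hsle := Finset.single_le_sum
              (f := fun j' => ∑ k, |Real.log (((τ:ℝ)+K) * πstar j' k /
                ((sigCount (X j') k τ x : ℝ)+1))|)
              (fun j' _ => Finset.sum_nonneg fun k _ => abs_nonneg _)
              (Finset.mem_univ j)
            simpa [hEdef] using hsle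
    have hEtend : Tendsto E atTop (nhds 0) := by
      have h0 : (0:ℝ) = ∑ _j : Fin m, ∑ _k : Fin K, (0:ℝ) := by simp
      rw [hEdef, h0]
      refine tendsto_finset_sum _ fun j _ => tendsto_finset_sum _ fun k _ => ?_
      exact aux_ratio_tendsto K hK1 (πstar j k) (hstar_pos j k)
        (fun τ => sigCount (X j) k τ x) (h1 j k)
    set C : ℝ := ∑ k, |Real.log (πθ i k)| with hCdef
    have hbbound : ∀ t, |Real.log (ℓt i t)| ≤ C + Real.log ((t:ℝ)+K) := by
      intro t
      have hτK : (0:ℝ) < (t:ℝ)+K := by positivity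
      have hcnt1 : (0:ℝ) < (sigCount (X i) (X i t x) t x : ℝ)+1 := by positivity
      have hup : (sigCount (X i) (X i t x) t x : ℝ)+1 ≤ (t:ℝ)+K := by
        have hle := hcnt_le i (X i t x) t x
        have hKc : (1:ℝ) ≤ (K:ℝ) := by exact_mod_cast hK1
        have hle' : (sigCount (X i) (X i t x) t x : ℝ) ≤ t := by exact_mod_cast hle
        linarith
      have e3 : Real.log (ℓt i t) = Real.log (πθ i (X i t x)) +
          (Real.log ((t:ℝ)+K) - Real.log ((sigCount (X i) (X i t x) t x : ℝ)+1)) := by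
        simp only [hℓt]
        rw [Real.log_div (mul_pos (hθ_pos _ _) hτK).ne' hcnt1.ne',
          Real.log_mul (hθ_pos _ _).ne' hτK.ne']
        ring
      rw [e3]
      have h4 : 0 ≤ Real.log ((t:ℝ)+K) -
          Real.log ((sigCount (X i) (X i t x) t x : ℝ)+1) :=
        sub_nonneg.2 (Real.log_le_log hcnt1 hup)
      have h5 : 0 ≤ Real.log ((sigCount (X i) (X i t x) t x : ℝ)+1) :=
        Real.log_nonneg (by linarith [Nat.cast_nonneg (α := ℝ) (sigCount (X i) (X i t x) t x)])
      have h6 : |Real.log (πθ i (X i t x))| ≤ C := by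
        rw [hCdef]
        exact Finset.single_le_sum (f := fun k => |Real.log (πθ i k)|)
          (fun k _ => abs_nonneg _) (Finset.mem_univ (X i t x))
      calc |Real.log (πθ i (X i t x)) +
            (Real.log ((t:ℝ)+K) - Real.log ((sigCount (X i) (X i t x) t x : ℝ)+1))|
          ≤ |Real.log (πθ i (X i t x))| +
            |Real.log ((t:ℝ)+K) - Real.log ((sigCount (X i) (X i t x) t x : ℝ)+1)| :=
            abs_add_le _ _
        _ ≤ C + Real.log ((t:ℝ)+K) := by
            rw [abs_of_nonneg h4]
            have : Real.log ((t:ℝ)+K) -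
                Real.log ((sigCount (X i) (X i t x) t x : ℝ)+1) ≤ Real.log ((t:ℝ)+K) := by
              linarith
            linarith
    have hbtend := aux_logbound C K hK1 (fun t => Real.log (ℓt i t)) hbbound
    exact aux_det c (fun t => Real.log (ℓt i t)) (fun τ => Real.log (Lx τ))
      (fun τ => Y τ x) E (fun t => Real.log (μ t i x)) hbtend hLY hEtend h2 hlog
  -- conclude: convergence in probability
  have hmeasf : ∀ t : ℕ,
      AEStronglyMeasurable (fun x => (1/(t:ℝ)) * Real.log (μ t i x)) P :=
    fun t => ((Real.measurable_log.comp (hμmeas t i)).const_mul _).aestronglyMeasurable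
  have hTIM : TendstoInMeasure P (fun (t : ℕ) x => (1/(t:ℝ)) * Real.log (μ t i x)) atTop
      (fun _ => c) := tendstoInMeasure_of_tendsto_ae hmeasf hae
  have h := tendstoInMeasure_iff_dist.1 hTIM ε hε
  refine tendsto_of_tendsto_of_tendsto_of_le_of_le tendsto_const_nhds h
    (fun t => zero_le) (fun t => measure_mono ?_)
  intro x hx
  simp only [Set.mem_setOf_eq] at hx ⊢
  rw [Real.dist_eq]
  exact le_of_lt hx
end

section
/- Suppose the network is fully connected, i.e., A_{ij} = 1/m for all i, j, and there exists at least one agent i with π_{iθ} ≠ π*_i. Then for every agent i the DeGroot-style belief μ_{it} converges to 0 in probability as t → ∞. -/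
open MeasureTheory ProbabilityTheory Filter Finset

/- ### Auxiliary lemmas -/

lemma sigCount_cast {Ω : Type*} {K : ℕ} (X : ℕ → Ω → Fin K) (k : Fin K) (t : ℕ) (x : Ω) :
    ((sigCount X k t x : ℕ) : ℝ) = ∑ τ ∈ Finset.range t, if X τ x = k then (1:ℝ) else 0 := by
  rw [sigCount, Finset.card_filter]
  push_cast
  exact Finset.sum_congr rfl fun τ _ => by split <;> simp

lemma sigCount_le {Ω : Type*} {K : ℕ} (X : ℕ → Ω → Fin K) (k : Fin K) (t : ℕ) (x : Ω) :
    sigCount X k t x ≤ t := by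
  rw [sigCount]
  calc ((Finset.range t).filter (fun τ => X τ x = k)).card
      ≤ (Finset.range t).card := Finset.card_filter_le _ _
    _ = t := Finset.card_range t

lemma jensen_strict {α : Type*} [Fintype α] (w g : α → ℝ)
    (hw : ∀ v, 0 < w v) (hg : ∀ v, 0 < g v)
    (hw1 : ∑ v, w v = 1) (hwg : ∑ v, w v * g v = 1)
    (v0 : α) (hv0 : g v0 ≠ 1) :
    ∑ v, w v * Real.log (g v) < 0 := by
  have h1 : ∑ v, w v * Real.log (g v) < ∑ v, w v * (g v - 1) := by
    apply Finset.sum_lt_sum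
    · intro v _
      exact mul_le_mul_of_nonneg_left (Real.log_le_sub_one_of_pos (hg v)) (hw v).le
    · exact ⟨v0, Finset.mem_univ _,
        mul_lt_mul_of_pos_left (Real.log_lt_sub_one_of_pos (hg v0) hv0) (hw v0)⟩
  have h2 : ∑ v, w v * (g v - 1) = 0 := by
    simp only [mul_sub, mul_one, Finset.sum_sub_distrib, hw1, hwg]
    ring
  linarith

lemma abs_log_avg_sub_log_avg_le {ι : Type*} {s : Finset ι} (hs : s.Nonempty)
    (z r : ι → ℝ) (hz : ∀ i ∈ s, 0 < z i) (hr : ∀ i ∈ s, 0 < r i)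
    {b : ℝ} (hb : ∀ i ∈ s, |Real.log (r i)| ≤ b) :
    |Real.log (∑ i ∈ s, z i * r i) - Real.log (∑ i ∈ s, z i)| ≤ b := by
  have hzsum : 0 < ∑ i ∈ s, z i := Finset.sum_pos hz hs
  obtain ⟨i0, hi0⟩ := hs
  have hb0 : 0 ≤ b := le_trans (abs_nonneg _) (hb i0 hi0)
  have hrl : ∀ i ∈ s, Real.exp (-b) ≤ r i := by
    intro i hi
    have := (abs_le.1 (hb i hi)).1
    calc Real.exp (-b) ≤ Real.exp (Real.log (r i)) := Real.exp_le_exp.2 this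
      _ = r i := Real.exp_log (hr i hi)
  have hru : ∀ i ∈ s, r i ≤ Real.exp b := by
    intro i hi
    have := (abs_le.1 (hb i hi)).2
    calc r i = Real.exp (Real.log (r i)) := (Real.exp_log (hr i hi)).symm
      _ ≤ Real.exp b := Real.exp_le_exp.2 this
  have hlow : Real.exp (-b) * ∑ i ∈ s, z i ≤ ∑ i ∈ s, z i * r i := by
    rw [Finset.mul_sum]
    refine Finset.sum_le_sum fun i hi => ?_
    rw [mul_comm]
    exact mul_le_mul_of_nonneg_left (hrl i hi) (hz i hi).le
  have hup : ∑ i ∈ s, z i * r i ≤ Real.exp b * ∑ i ∈ s, z i := by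
    rw [Finset.mul_sum]
    refine Finset.sum_le_sum fun i hi => ?_
    rw [mul_comm (Real.exp b)]
    exact mul_le_mul_of_nonneg_left (hru i hi) (hz i hi).le
  have hsum_pos : 0 < ∑ i ∈ s, z i * r i :=
    lt_of_lt_of_le (by positivity) hlow
  rw [abs_le]
  constructor
  · have := Real.log_le_log (by positivity) hlow
    rw [Real.log_mul (Real.exp_ne_zero _) hzsum.ne', Real.log_exp] at this
    linarith
  · have := Real.log_le_log hsum_pos hup
    rw [Real.log_mul (Real.exp_ne_zero _) hzsum.ne', Real.log_exp] at this
    linarith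

lemma exp_log_avg_neg {m K : ℕ} (hm : 1 ≤ m) (hK : 2 ≤ K)
    (πstar πθ : Fin m → Fin K → ℝ)
    (hstar_pos : ∀ i k, 0 < πstar i k) (hstar_sum : ∀ i, ∑ k, πstar i k = 1)
    (hθ_pos : ∀ i k, 0 < πθ i k) (hθ_sum : ∀ i, ∑ k, πθ i k = 1)
    (hmismatch : ∃ i, πθ i ≠ πstar i) :
    ∑ v : Fin m → Fin K, (∏ i, πstar i (v i)) *
      Real.log (∑ j, (1/(m:ℝ)) * (πθ j (v j) / πstar j (v j))) < 0 := by
  classical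
  have hm0 : (0:ℝ) < m := by exact_mod_cast Nat.lt_of_lt_of_le Nat.zero_lt_one hm
  haveI : NeZero m := ⟨by omega⟩
  haveI : NeZero K := ⟨by omega⟩
  set G : (Fin m → Fin K) → ℝ := fun v => ∑ j, (1/(m:ℝ)) * (πθ j (v j) / πstar j (v j)) with hG
  set w : (Fin m → Fin K) → ℝ := fun v => ∏ i, πstar i (v i) with hw
  have hwpos : ∀ v, 0 < w v := fun v => Finset.prod_pos fun i _ => hstar_pos i (v i)
  have hGpos : ∀ v, 0 < G v := by
    intro v
    refine Finset.sum_pos (fun j _ => ?_) Finset.univ_nonempty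
    exact mul_pos (one_div_pos.2 hm0) (div_pos (hθ_pos _ _) (hstar_pos _ _))
  have hw1 : ∑ v, w v = 1 := by
    have hps := Finset.prod_univ_sum (fun _ : Fin m => (Finset.univ : Finset (Fin K)))
      (fun i k => πstar i k)
    rw [Fintype.piFinset_univ] at hps
    rw [hw, ← hps, Finset.prod_congr rfl (fun i _ => hstar_sum i), Finset.prod_const_one]
  have key : ∀ j : Fin m,
      ∑ v : Fin m → Fin K, w v * (πθ j (v j) / πstar j (v j)) = 1 := by
    intro j
    have hpt : ∀ v : Fin m → Fin K, w v * (πθ j (v j) / πstar j (v j))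
        = ∏ i, (if i = j then πθ i (v i) else πstar i (v i)) := by
      intro v
      simp only [hw]
      rw [← Finset.prod_erase_mul Finset.univ (fun i => πstar i (v i)) (Finset.mem_univ j),
          ← Finset.prod_erase_mul Finset.univ (fun i => if i = j then πθ i (v i)
            else πstar i (v i)) (Finset.mem_univ j)]
      rw [Finset.prod_congr rfl (fun i hi => if_neg (Finset.ne_of_mem_erase hi)), if_pos rfl]
      rw [mul_assoc, mul_comm (πstar j (v j)) _, div_mul_cancel₀ _ (hstar_pos j (v j)).ne']
    rw [Finset.sum_congr rfl (fun v _ => hpt v)]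
    have hps := Finset.prod_univ_sum (fun _ : Fin m => (Finset.univ : Finset (Fin K)))
      (fun i k => if i = j then πθ i k else πstar i k)
    rw [Fintype.piFinset_univ] at hps
    rw [← hps]
    have : ∀ i : Fin m, ∑ k, (if i = j then πθ i k else πstar i k) = 1 := by
      intro i
      by_cases h : i = j
      · simp only [if_pos h]; exact hθ_sum i
      · simp only [if_neg h]; exact hstar_sum i
    rw [Finset.prod_congr rfl (fun i _ => this i), Finset.prod_const_one]
  have hwG : ∑ v, w v * G v = 1 := by
    have h1 : ∀ v, w v * G v = ∑ j, (1/(m:ℝ)) * (w v * (πθ j (v j) / πstar j (v j))) := by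
      intro v
      rw [hG, Finset.mul_sum]
      exact Finset.sum_congr rfl fun j _ => by ring
    rw [Finset.sum_congr rfl (fun v _ => h1 v), Finset.sum_comm]
    have h2 : ∀ j : Fin m, ∑ v : Fin m → Fin K,
        (1/(m:ℝ)) * (w v * (πθ j (v j) / πstar j (v j))) = 1/(m:ℝ) := by
      intro j
      rw [← Finset.mul_sum, key j, mul_one]
    rw [Finset.sum_congr rfl (fun j _ => h2 j), Finset.sum_const, Finset.card_univ,
      Fintype.card_fin, nsmul_eq_mul]
    field_simp
  obtain ⟨i1, hi1⟩ := hmismatch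
  have hk : ∃ k1 k2 : Fin K, πθ i1 k1 / πstar i1 k1 ≠ πθ i1 k2 / πstar i1 k2 := by
    by_contra h
    push_neg at h
    apply hi1
    funext k
    have hconst : ∀ k', πθ i1 k' = (πθ i1 0 / πstar i1 0) * πstar i1 k' := by
      intro k'
      have h0 := h k' 0
      rw [div_eq_div_iff (hstar_pos i1 k').ne' (hstar_pos i1 0).ne'] at h0
      rw [div_mul_eq_mul_div, eq_div_iff (hstar_pos i1 0).ne']
      linarith
    have hsum : (1:ℝ) = (πθ i1 0 / πstar i1 0) * 1 := by
      calc (1:ℝ) = ∑ k', πθ i1 k' := (hθ_sum i1).symm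
        _ = ∑ k', (πθ i1 0 / πstar i1 0) * πstar i1 k' :=
            Finset.sum_congr rfl fun k' _ => hconst k'
        _ = (πθ i1 0 / πstar i1 0) * ∑ k', πstar i1 k' := by rw [Finset.mul_sum]
        _ = (πθ i1 0 / πstar i1 0) * 1 := by rw [hstar_sum i1]
    have hc1 : πθ i1 0 / πstar i1 0 = 1 := by linarith [hsum]
    rw [hconst k, hc1, one_mul]
  obtain ⟨k1, k2, hk12⟩ := hk
  set v1 : Fin m → Fin K := fun _ => k1 with hv1
  set v2 : Fin m → Fin K := Function.update v1 i1 k2 with hv2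
  have hGdiff : G v1 ≠ G v2 := by
    intro hEq
    apply hk12
    have h1 : G v1 - G v2 = ∑ j, (1/(m:ℝ)) *
        (πθ j (v1 j) / πstar j (v1 j) - πθ j (v2 j) / πstar j (v2 j)) := by
      rw [hG, ← Finset.sum_sub_distrib]
      exact Finset.sum_congr rfl fun j _ => by ring
    have h2 : G v1 - G v2 = (1/(m:ℝ)) *
        (πθ i1 (v1 i1) / πstar i1 (v1 i1) - πθ i1 (v2 i1) / πstar i1 (v2 i1)) := by
      rw [h1]
      apply Finset.sum_eq_single i1
      · intro j _ hj
        rw [hv2, Function.update_of_ne hj]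
        ring
      · intro h; exact absurd (Finset.mem_univ i1) h
    rw [hEq, sub_self] at h2
    have hne : (1/(m:ℝ)) ≠ 0 := ne_of_gt (one_div_pos.2 hm0)
    have h3 : πθ i1 (v1 i1) / πstar i1 (v1 i1) - πθ i1 (v2 i1) / πstar i1 (v2 i1) = 0 :=
      (mul_eq_zero.1 h2.symm).resolve_left hne
    have hv1i : v1 i1 = k1 := rfl
    have hv2i : v2 i1 = k2 := Function.update_self i1 k2 v1
    rw [hv1i, hv2i] at h3
    linarith
  have hv0 : G v1 ≠ 1 ∨ G v2 ≠ 1 := by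
    by_contra h
    push_neg at h
    exact hGdiff (h.1.trans h.2.symm)
  rcases hv0 with h | h
  · exact jensen_strict w G hwpos hGpos hw1 hwG v1 h
  · exact jensen_strict w G hwpos hGpos hw1 hwG v2 h

section ProbAux

variable {Ω : Type*} [MeasurableSpace Ω] (P : Measure Ω) [IsProbabilityMeasure P]
  {m K : ℕ} (πstar : Fin m → Fin K → ℝ)
  (X : Fin m → ℕ → Ω → Fin K)

lemma joint_law (hX_meas : ∀ i t, Measurable (X i t))
    (hX_indep : iIndepFun
      (fun p : Fin m × ℕ => X p.1 p.2) P)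
    (hX_law : ∀ i t k, P {x | X i t x = k} = ENNReal.ofReal (πstar i k))
    (s : ℕ) (v : Fin m → Fin K) :
    P ((fun x i => X i s x) ⁻¹' {v}) = ∏ i, ENNReal.ofReal (πstar i (v i)) := by
  have hset : (fun x i => X i s x) ⁻¹' {v}
      = ⋂ p ∈ Finset.univ.image (fun i : Fin m => (i, s)), (X p.1 p.2 ⁻¹' {v p.1}) := by
    ext x
    simp [funext_iff, eq_comm]
  rw [hset, hX_indep.meas_biInter (fun p _ => ⟨{v p.1}, measurableSet_singleton _, rfl⟩),
    Finset.prod_image (by intro a _ b _ h; exact (Prod.mk.injEq .. ▸ h).1)]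
  refine Finset.prod_congr rfl fun i _ => ?_
  rw [show X i s ⁻¹' {v i} = {x | X i s x = v i} from rfl, hX_law]

lemma vec_identDistrib (hX_meas : ∀ i t, Measurable (X i t))
    (hX_indep : iIndepFun
      (fun p : Fin m × ℕ => X p.1 p.2) P)
    (hX_law : ∀ i t k, P {x | X i t x = k} = ENNReal.ofReal (πstar i k))
    (s : ℕ) :
    IdentDistrib (fun x i => X i s x) (fun x i => X i 0 x) P P := by
  have hms : ∀ t, Measurable (fun x (i : Fin m) => X i t x) :=
    fun t => measurable_pi_lambda _ (fun i => hX_meas i t)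
  refine ⟨(hms s).aemeasurable, (hms 0).aemeasurable, ?_⟩
  refine Measure.ext_of_singleton fun v => ?_
  rw [Measure.map_apply (hms s) (measurableSet_singleton _),
    Measure.map_apply (hms 0) (measurableSet_singleton _),
    joint_law P πstar X hX_meas hX_indep hX_law s v,
    joint_law P πstar X hX_meas hX_indep hX_law 0 v]

lemma integral_vec (hpos : ∀ i k, 0 ≤ πstar i k)
    (hX_meas : ∀ i t, Measurable (X i t))
    (hX_indep : iIndepFun
      (fun p : Fin m × ℕ => X p.1 p.2) P)
    (hX_law : ∀ i t k, P {x | X i t x = k} = ENNReal.ofReal (πstar i k))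
    (s : ℕ) (g : (Fin m → Fin K) → ℝ) :
    ∫ x, g (fun i => X i s x) ∂P = ∑ v : Fin m → Fin K, (∏ i, πstar i (v i)) * g v := by
  have hms : Measurable (fun x (i : Fin m) => X i s x) :=
    measurable_pi_lambda _ (fun i => hX_meas i s)
  rw [← integral_map hms.aemeasurable (measurable_of_finite g).aestronglyMeasurable,
    integral_fintype Integrable.of_finite]
  refine Finset.sum_congr rfl fun v _ => ?_
  rw [measureReal_def, Measure.map_apply hms (measurableSet_singleton _),
    joint_law P πstar X hX_meas hX_indep hX_law s v, smul_eq_mul]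
  congr 1
  rw [ENNReal.toReal_prod]
  exact Finset.prod_congr rfl fun i _ => ENNReal.toReal_ofReal (hpos i (v i))

lemma single_identDistrib (hX_meas : ∀ i t, Measurable (X i t))
    (hX_law : ∀ i t k, P {x | X i t x = k} = ENNReal.ofReal (πstar i k))
    (i : Fin m) (τ : ℕ) : IdentDistrib (X i τ) (X i 0) P P := by
  refine ⟨(hX_meas i τ).aemeasurable, (hX_meas i 0).aemeasurable, ?_⟩
  refine Measure.ext_of_singleton fun k => ?_
  rw [Measure.map_apply (hX_meas i τ) (measurableSet_singleton _),
    Measure.map_apply (hX_meas i 0) (measurableSet_singleton _)]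
  show P {x | X i τ x = k} = P {x | X i 0 x = k}
  rw [hX_law, hX_law]

lemma count_slln (hpos : ∀ i k, 0 < πstar i k)
    (hX_meas : ∀ i t, Measurable (X i t))
    (hX_indep : iIndepFun
      (fun p : Fin m × ℕ => X p.1 p.2) P)
    (hX_law : ∀ i t k, P {x | X i t x = k} = ENNReal.ofReal (πstar i k))
    (i : Fin m) (k : Fin K) :
    ∀ᵐ x ∂P, Tendsto (fun t => (sigCount (X i) k t x : ℝ) / t) atTop (nhds (πstar i k)) := by
  classical
  set f : Fin K → ℝ := fun k' => if k' = k then 1 else 0 with hf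
  set Y : ℕ → Ω → ℝ := fun τ x => f (X i τ x) with hY
  have hYmeas : ∀ τ, Measurable (Y τ) := fun τ => (measurable_of_finite f).comp (hX_meas i τ)
  have hint : Integrable (Y 0) P := by
    refine (integrable_const (1:ℝ)).mono' (hYmeas 0).aestronglyMeasurable (ae_of_all _ fun x => ?_)
    simp only [hY, hf, Real.norm_eq_abs]
    split <;> norm_num
  have hindep : Pairwise (Function.onFun (IndepFun · · P) Y) := by
    intro τ τ' hne
    exact (hX_indep.indepFun (show ((i,τ) : Fin m × ℕ) ≠ (i,τ') by simp [hne])).comp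
      (measurable_of_finite f) (measurable_of_finite f)
  have hident : ∀ τ, IdentDistrib (Y τ) (Y 0) P P := fun τ =>
    (single_identDistrib P πstar X hX_meas hX_law i τ).comp (measurable_of_finite f)
  have hmean : ∫ x, Y 0 x ∂P = πstar i k := by
    have h1 : ∫ x, Y 0 x ∂P = ∫ k', f k' ∂(P.map (X i 0)) :=
      (integral_map (hX_meas i 0).aemeasurable
        (measurable_of_finite f).aestronglyMeasurable).symm
    rw [h1, integral_fintype Integrable.of_finite]
    have : ∀ k' : Fin K, (P.map (X i 0)) {k'} = ENNReal.ofReal (πstar i k') := by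
      intro k'
      rw [Measure.map_apply (hX_meas i 0) (measurableSet_singleton _)]
      exact hX_law i 0 k'
    simp only [measureReal_def, this, hf, smul_eq_mul, mul_ite, mul_one, mul_zero]
    rw [Finset.sum_ite_eq' Finset.univ k (fun k' => (ENNReal.ofReal (πstar i k')).toReal)]
    simp [ENNReal.toReal_ofReal (hpos i k).le]
  have hslln := strong_law_ae_real Y hint hindep hident
  filter_upwards [hslln] with x hx
  have hcnt : ∀ t, (sigCount (X i) k t x : ℝ) = ∑ τ ∈ Finset.range t, Y τ x := by
    intro t
    rw [sigCount_cast]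
  rw [hmean] at hx
  simp only [hcnt]
  exact hx

lemma time_indep (hX_meas : ∀ i t, Measurable (X i t))
    (hX_indep : iIndepFun
      (fun p : Fin m × ℕ => X p.1 p.2) P)
    {s s' : ℕ} (hss : s ≠ s') (g g' : (Fin m → Fin K) → ℝ) :
    IndepFun (fun x => g (fun i => X i s x)) (fun x => g' (fun i => X i s' x)) P := by
  classical
  set S : Finset (Fin m × ℕ) := Finset.univ.image (fun i : Fin m => (i, s)) with hS
  set T : Finset (Fin m × ℕ) := Finset.univ.image (fun i : Fin m => (i, s')) with hT
  have hST : Disjoint S T := by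
    rw [Finset.disjoint_left]
    rintro p hp hp'
    simp only [hS, hT, Finset.mem_image, Finset.mem_univ, true_and] at hp hp'
    obtain ⟨a, rfl⟩ := hp
    obtain ⟨b, hb⟩ := hp'
    exact hss ((Prod.mk.injEq .. ▸ hb).2.symm)
  have base := hX_indep.indepFun_finset S T hST (fun p => hX_meas p.1 p.2)
  have := base.comp
    (φ := fun u : (↥S → Fin K) => g (fun i => u ⟨(i,s), by simp [hS]⟩))
    (ψ := fun u : (↥T → Fin K) => g' (fun i => u ⟨(i,s'), by simp [hT]⟩))
    (measurable_of_finite _) (measurable_of_finite _)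
  exact this

lemma time_avg_slln (hX_meas : ∀ i t, Measurable (X i t))
    (hX_indep : iIndepFun
      (fun p : Fin m × ℕ => X p.1 p.2) P)
    (hX_law : ∀ i t k, P {x | X i t x = k} = ENNReal.ofReal (πstar i k))
    (g : (Fin m → Fin K) → ℝ) :
    ∀ᵐ x ∂P, Tendsto (fun t => (∑ s ∈ Finset.range t, g (fun i => X i s x)) / t)
      atTop (nhds (∫ x, g (fun i => X i 0 x) ∂P)) := by
  classical
  set Y : ℕ → Ω → ℝ := fun s x => g (fun i => X i s x) with hY
  have hms : ∀ t, Measurable (fun x (i : Fin m) => X i t x) :=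
    fun t => measurable_pi_lambda _ (fun i => hX_meas i t)
  have hYmeas : ∀ s, Measurable (Y s) := fun s => (measurable_of_finite g).comp (hms s)
  have hint : Integrable (Y 0) P := by
    refine (integrable_const (∑ v : Fin m → Fin K, |g v|)).mono'
      (hYmeas 0).aestronglyMeasurable (ae_of_all _ fun x => ?_)
    exact Finset.single_le_sum (f := fun v => |g v|) (fun v _ => abs_nonneg _) (Finset.mem_univ _)
  have hindep : Pairwise (Function.onFun (IndepFun · · P) Y) := fun s s' hss =>
    time_indep P X hX_meas hX_indep hss g g
  have hident : ∀ s, IdentDistrib (Y s) (Y 0) P P := fun s =>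
    (vec_identDistrib P πstar X hX_meas hX_indep hX_law s).comp (measurable_of_finite g)
  exact strong_law_ae_real Y hint hindep hident

end ProbAux

/-- On the fully connected network, with certain models and at least one agent whose
model is mismatched with the ground truth, the DeGroot-style beliefs converge
to `0` in probability. -/
theorem degroot_fully_connected_beliefs_tendsto_zero_in_prob
    {Ω : Type*} [MeasurableSpace Ω] (P : Measure Ω) [IsProbabilityMeasure P]
    (m : ℕ) (hm : 1 ≤ m) (K : ℕ) (hK : 2 ≤ K)
    (πstar πθ : Fin m → Fin K → ℝ)
    (hstar_pos : ∀ i k, 0 < πstar i k) (hstar_sum : ∀ i, ∑ k, πstar i k = 1)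
    (hθ_pos : ∀ i k, 0 < πθ i k) (hθ_sum : ∀ i, ∑ k, πθ i k = 1)
    (X : Fin m → ℕ → Ω → Fin K) (hX_meas : ∀ i t, Measurable (X i t))
    (hX_indep : iIndepFun
      (fun p : Fin m × ℕ => X p.1 p.2) P)
    (hX_law : ∀ i t k, P {x | X i t x = k} = ENNReal.ofReal (πstar i k))
    (μ : ℕ → Fin m → Ω → ℝ)
    (hμ0 : ∀ i x, μ 0 i x = 1)
    (hμ : ∀ t i x, μ (t + 1) i x =
      πθ i (X i t x) * (((t + 1 + K - 1 : ℕ)) : ℝ) /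
          (((sigCount (X i) (X i t x) t x + 1 : ℕ)) : ℝ) *
        ∑ j, (1 / (m : ℝ)) * μ t j x)
    (hmismatch : ∃ i, πθ i ≠ πstar i) :
    ∀ i : Fin m, ∀ ε : ℝ, 0 < ε →
      Tendsto (fun t => P {x | ε < |μ t i x - 0|}) atTop (nhds 0) := by
  classical
  have hm0 : (0:ℝ) < m := by exact_mod_cast (by omega : 0 < m)
  have hK0 : (0:ℝ) < K := by exact_mod_cast (by omega : 0 < K)
  haveI : NeZero m := ⟨by omega⟩
  haveI : Nonempty (Fin m) := ⟨⟨0, by omega⟩⟩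
  haveI : Nonempty (Fin K) := ⟨⟨0, by omega⟩⟩
  set L : ℕ → Fin m → Ω → ℝ := fun s j x =>
    πθ j (X j s x) * ((s:ℝ) + K) / ((sigCount (X j) (X j s x) s x : ℝ) + 1) with hL
  set S : ℕ → Ω → ℝ := fun t x => ∑ j, (1/(m:ℝ)) * μ t j x with hSdef
  have hμ' : ∀ t i x, μ (t+1) i x = L t i x * S t x := by
    intro t i x
    rw [hμ t i x]
    have h1 : ((t + 1 + K - 1 : ℕ) : ℝ) = (t:ℝ) + K := by
      have h : t + 1 + K - 1 = t + K := by omega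
      rw [h]; push_cast; ring
    have h2 : ((sigCount (X i) (X i t x) t x + 1 : ℕ) : ℝ)
        = (sigCount (X i) (X i t x) t x : ℝ) + 1 := by push_cast; ring
    rw [h1, h2]
  have hdenpos : ∀ (j : Fin m) (k : Fin K) (s : ℕ) (x : Ω),
      (0:ℝ) < (sigCount (X j) k s x : ℝ) + 1 := fun j k s x => by positivity
  have htKpos : ∀ s : ℕ, (0:ℝ) < (s:ℝ) + K :=
    fun s => add_pos_of_nonneg_of_pos (Nat.cast_nonneg s) hK0
  have hLpos : ∀ s j x, 0 < L s j x := by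
    intro s j x
    exact div_pos (mul_pos (hθ_pos _ _) (htKpos s)) (hdenpos j _ s x)
  have hμpos : ∀ t i x, 0 < μ t i x := by
    intro t
    induction t with
    | zero => intro i x; rw [hμ0]; norm_num
    | succ t ih =>
      intro i x
      rw [hμ' t i x]
      refine mul_pos (hLpos t i x) ?_
      exact Finset.sum_pos (fun j _ => mul_pos (one_div_pos.2 hm0) (ih j x))
        Finset.univ_nonempty
  have hSpos : ∀ t x, 0 < S t x := fun t x =>
    Finset.sum_pos (fun j _ => mul_pos (one_div_pos.2 hm0) (hμpos t j x)) Finset.univ_nonempty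
  set A : ℕ → Ω → ℝ := fun s x => ∑ j, (1/(m:ℝ)) * L s j x with hA
  have hApos : ∀ s x, 0 < A s x := fun s x =>
    Finset.sum_pos (fun j _ => mul_pos (one_div_pos.2 hm0) (hLpos s j x)) Finset.univ_nonempty
  have hSrec : ∀ t x, S (t+1) x = A t x * S t x := by
    intro t x
    simp only [hSdef, hA]
    rw [Finset.sum_mul]
    refine Finset.sum_congr rfl fun j _ => ?_
    rw [hμ' t j x]; ring
  have hS0 : ∀ x, S 0 x = 1 := by
    intro x
    simp only [hSdef, hμ0, mul_one]
    rw [Finset.sum_const, Finset.card_univ, Fintype.card_fin, nsmul_eq_mul]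
    field_simp
  have hlogSsum : ∀ t x, Real.log (S t x) = ∑ s ∈ Finset.range t, Real.log (A s x) := by
    intro t x
    induction t with
    | zero => simp [hS0 x]
    | succ t ih =>
      rw [hSrec t x, Real.log_mul (hApos t x).ne' (hSpos t x).ne', ih,
        Finset.sum_range_succ]
      ring
  set Z : ℕ → Fin m → Ω → ℝ := fun s j x => πθ j (X j s x) / πstar j (X j s x) with hZ
  set B : ℕ → Ω → ℝ := fun s x => ∑ j, (1/(m:ℝ)) * Z s j x with hB
  set g : (Fin m → Fin K) → ℝ :=
    fun v => Real.log (∑ j, (1/(m:ℝ)) * (πθ j (v j) / πstar j (v j))) with hg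
  set c : ℝ := ∫ x, g (fun i => X i 0 x) ∂P with hc
  have hZpos : ∀ s j x, 0 < Z s j x := fun s j x => div_pos (hθ_pos _ _) (hstar_pos _ _)
  have hBpos : ∀ s x, 0 < B s x := fun s x =>
    Finset.sum_pos (fun j _ => mul_pos (one_div_pos.2 hm0) (hZpos s j x)) Finset.univ_nonempty
  have hcneg : c < 0 := by
    rw [hc, integral_vec P πstar X (fun i k => (hstar_pos i k).le) hX_meas hX_indep hX_law 0 g]
    exact exp_log_avg_neg hm hK πstar πθ hstar_pos hstar_sum hθ_pos hθ_sum hmismatch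
  have ae1 : ∀ᵐ x ∂P, ∀ p : Fin m × Fin K,
      Tendsto (fun t => (sigCount (X p.1) p.2 t x : ℝ) / t) atTop (nhds (πstar p.1 p.2)) :=
    (ae_all_iff).2 fun p => count_slln P πstar X hstar_pos hX_meas hX_indep hX_law p.1 p.2
  have ae2 : ∀ᵐ x ∂P,
      Tendsto (fun t => (∑ s ∈ Finset.range t, g (fun i => X i s x)) / t) atTop (nhds c) :=
    time_avg_slln P πstar X hX_meas hX_indep hX_law g
  have key : ∀ᵐ x ∂P, ∀ i, Tendsto (fun t => μ t i x) atTop (nhds 0) := by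
    filter_upwards [ae1, ae2] with x h1 h2
    set rr : ℕ → Fin m → Fin K → ℝ := fun s j k =>
      πstar j k * ((s:ℝ) + K) / ((sigCount (X j) k s x : ℝ) + 1) with hrrdef
    have hrrpos : ∀ s j k, 0 < rr s j k := fun s j k =>
      div_pos (mul_pos (hstar_pos j k) (htKpos s)) (hdenpos j k s x)
    have hrrlim : ∀ j k, Tendsto (fun s => rr s j k) atTop (nhds 1) := by
      intro j k
      have hden : Tendsto (fun s : ℕ => ((sigCount (X j) k s x : ℝ) + 1) / ((s:ℝ) + K))
          atTop (nhds (πstar j k)) := by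
        have e1 : Tendsto (fun s : ℕ => (sigCount (X j) k s x : ℝ)/s + 1/s)
            atTop (nhds (πstar j k + 0)) :=
          (h1 (j,k)).add tendsto_one_div_atTop_nhds_zero_nat
        have e2 : Tendsto (fun s : ℕ => 1 + (K:ℝ) * (1/s)) atTop (nhds (1 + (K:ℝ) * 0)) :=
          tendsto_const_nhds.add (tendsto_const_nhds.mul tendsto_one_div_atTop_nhds_zero_nat)
        have e3 := e1.div e2 (by norm_num)
        rw [add_zero, mul_zero, add_zero, div_one] at e3
        refine e3.congr' ?_
        filter_upwards [eventually_ge_atTop 1] with s hs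
        have hs0 : ((s:ℕ):ℝ) ≠ 0 := by
          have : (0:ℝ) < s := by exact_mod_cast hs
          exact this.ne'
        have hsK : ((s:ℕ):ℝ) + K ≠ 0 := (htKpos s).ne'
        rw [Pi.div_apply]
        field_simp
        try ring
      have e4 : Tendsto (fun s : ℕ => πstar j k / (((sigCount (X j) k s x : ℝ) + 1) / ((s:ℝ) + K)))
          atTop (nhds (πstar j k / πstar j k)) := tendsto_const_nhds.div hden (hstar_pos j k).ne'
      rw [div_self (hstar_pos j k).ne'] at e4
      refine e4.congr fun s => ?_
      simp only [hrrdef]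
      rw [div_div_eq_mul_div]
    set D : ℕ → ℝ := fun s => ∑ j, ∑ k, |Real.log (rr s j k)| with hDdef
    have hD : Tendsto D atTop (nhds 0) := by
      have hterm : ∀ (j : Fin m) (k : Fin K),
          Tendsto (fun s => |Real.log (rr s j k)|) atTop (nhds 0) := by
        intro j k
        have := ((Real.continuousAt_log one_ne_zero).tendsto.comp (hrrlim j k)).abs
        rw [Real.log_one, abs_zero] at this
        exact this
      have := tendsto_finset_sum (Finset.univ : Finset (Fin m)) fun j _ =>
        tendsto_finset_sum (Finset.univ : Finset (Fin K)) fun k _ => hterm j k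
      simpa using this
    have hLZr : ∀ s j, L s j x = Z s j x * rr s j (X j s x) := by
      intro s j
      have hst : πstar j (X j s x) ≠ 0 := (hstar_pos j (X j s x)).ne'
      have hden : ((sigCount (X j) (X j s x) s x : ℝ) + 1) ≠ 0 :=
        (hdenpos j (X j s x) s x).ne'
      simp only [hL, hZ, hrrdef]
      field_simp
      try ring
    have hAB : ∀ s, |Real.log (A s x) - Real.log (B s x)| ≤ D s := by
      intro s
      have hform : A s x = ∑ j, ((1/(m:ℝ)) * Z s j x) * rr s j (X j s x) := by
        simp only [hA]
        exact Finset.sum_congr rfl fun j _ => by rw [hLZr s j]; ring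
      have hform2 : B s x = ∑ j, (1/(m:ℝ)) * Z s j x := rfl
      rw [hform, hform2]
      refine abs_log_avg_sub_log_avg_le Finset.univ_nonempty _ _
        (fun j _ => mul_pos (one_div_pos.2 hm0) (hZpos s j x))
        (fun j _ => hrrpos s j _) (fun j _ => ?_)
      calc |Real.log (rr s j (X j s x))| ≤ ∑ k, |Real.log (rr s j k)| :=
          Finset.single_le_sum (f := fun k => |Real.log (rr s j k)|)
            (fun k _ => abs_nonneg _) (Finset.mem_univ _)
        _ ≤ D s := Finset.single_le_sum
            (f := fun j' => ∑ k, |Real.log (rr s j' k)|)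
            (fun j' _ => Finset.sum_nonneg fun k _ => abs_nonneg _) (Finset.mem_univ j)
    have hDc : Tendsto (fun t => (∑ s ∈ Finset.range t, D s) / t) atTop (nhds 0) := by
      have h := hD.cesaro
      refine h.congr fun n => ?_
      rw [inv_mul_eq_div]
    have hdiff : Tendsto
        (fun t => (∑ s ∈ Finset.range t, (Real.log (A s x) - Real.log (B s x))) / t)
        atTop (nhds 0) := by
      apply squeeze_zero_norm (a := fun t => (∑ s ∈ Finset.range t, D s) / t) (fun t => ?_) hDc
      rcases Nat.eq_zero_or_pos t with ht | ht
      · simp [ht]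
      · have ht' : (0:ℝ) < t := by exact_mod_cast ht
        rw [Real.norm_eq_abs, abs_div, abs_of_pos ht']
        refine (div_le_div_iff_of_pos_right ht').2 ?_
        exact (Finset.abs_sum_le_sum_abs _ _).trans (Finset.sum_le_sum fun s _ => hAB s)
    have hlogA : Tendsto (fun t => (∑ s ∈ Finset.range t, Real.log (A s x)) / t)
        atTop (nhds c) := by
      have hEq : (fun t => (∑ s ∈ Finset.range t, Real.log (A s x)) / t)
          = fun t => (∑ s ∈ Finset.range t, Real.log (B s x)) / t
            + (∑ s ∈ Finset.range t, (Real.log (A s x) - Real.log (B s x))) / t := by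
        funext t
        rw [← add_div, ← Finset.sum_add_distrib]
        congr 1
        exact Finset.sum_congr rfl fun s _ => by ring
      rw [hEq]
      have h2' : Tendsto (fun t => (∑ s ∈ Finset.range t, Real.log (B s x)) / t)
          atTop (nhds c) := h2
      have hsum := h2'.add hdiff
      rw [add_zero] at hsum
      exact hsum
    have hlogS2 : Tendsto (fun t => Real.log (S t x) / t) atTop (nhds c) := by
      refine hlogA.congr fun t => ?_
      rw [hlogSsum t x]
    intro i
    set Cθ : ℝ := ∑ p : Fin m × Fin K, |Real.log (πθ p.1 p.2)| with hCθ
    have hθabs : ∀ j k, |Real.log (πθ j k)| ≤ Cθ :=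
      fun j k => Finset.single_le_sum (f := fun p : Fin m × Fin K => |Real.log (πθ p.1 p.2)|)
        (fun p _ => abs_nonneg _) (Finset.mem_univ (j,k))
    have hK1 : (1:ℝ) ≤ (K:ℝ) := by exact_mod_cast (by omega : 1 ≤ K)
    have hlogtK : ∀ t : ℕ, 0 ≤ Real.log ((t:ℝ) + K) := by
      intro t
      apply Real.log_nonneg
      have := Nat.cast_nonneg (α := ℝ) t
      linarith
    have hLbound : ∀ t, |Real.log (L t i x)| ≤ Cθ + 2 * Real.log ((t:ℝ) + K) := by
      intro t
      have hlogL : Real.log (L t i x) = Real.log (πθ i (X i t x)) + Real.log ((t:ℝ)+K)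
          - Real.log ((sigCount (X i) (X i t x) t x : ℝ) + 1) := by
        simp only [hL]
        rw [Real.log_div (mul_pos (hθ_pos _ _) (htKpos t)).ne' (hdenpos i _ t x).ne',
          Real.log_mul (hθ_pos _ _).ne' (htKpos t).ne']
      have hcnt0 : 0 ≤ Real.log ((sigCount (X i) (X i t x) t x : ℝ) + 1) := by
        apply Real.log_nonneg
        have := Nat.cast_nonneg (α := ℝ) (sigCount (X i) (X i t x) t x)
        linarith
      have hcnt1 : Real.log ((sigCount (X i) (X i t x) t x : ℝ) + 1)
          ≤ Real.log ((t:ℝ) + K) := by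
        apply Real.log_le_log (by positivity)
        have h1 : (sigCount (X i) (X i t x) t x : ℝ) ≤ t := by
          exact_mod_cast sigCount_le (X i) (X i t x) t x
        linarith
      have habs := abs_le.1 (hθabs i (X i t x))
      rw [hlogL, abs_le]
      constructor <;> [linarith [hlogtK t]; linarith [hlogtK t]]
    have hlogdiv : Tendsto (fun t : ℕ => (Cθ + 2 * Real.log ((t:ℝ) + K)) / t)
        atTop (nhds 0) := by
      have l1 : Tendsto (fun y : ℝ => Real.log y / y) atTop (nhds 0) :=
        Real.isLittleO_log_id_atTop.tendsto_div_nhds_zero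
      have l2 : Tendsto (fun t : ℕ => (t:ℝ) + K) atTop atTop :=
        tendsto_atTop_add_const_right atTop (K:ℝ) tendsto_natCast_atTop_atTop
      have l3 : Tendsto (fun t : ℕ => Real.log ((t:ℝ)+K) / ((t:ℝ)+K)) atTop (nhds 0) :=
        l1.comp l2
      have l4 : Tendsto (fun t : ℕ => ((t:ℝ)+K) / t) atTop (nhds 1) := by
        have e2 : Tendsto (fun t : ℕ => 1 + (K:ℝ) * (1/t)) atTop (nhds (1 + (K:ℝ) * 0)) :=
          tendsto_const_nhds.add (tendsto_const_nhds.mul tendsto_one_div_atTop_nhds_zero_nat)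
        rw [mul_zero, add_zero] at e2
        refine e2.congr' ?_
        filter_upwards [eventually_ge_atTop 1] with t ht
        have ht0 : ((t:ℕ):ℝ) ≠ 0 := by
          have : (0:ℝ) < t := by exact_mod_cast ht
          exact this.ne'
        field_simp
        try ring
      have l5 : Tendsto (fun t : ℕ => Real.log ((t:ℝ)+K)/t) atTop (nhds 0) := by
        have l35 := l3.mul l4
        rw [zero_mul] at l35
        refine l35.congr' ?_
        filter_upwards [eventually_ge_atTop 1] with t ht
        have ht0 : ((t:ℕ):ℝ) ≠ 0 := by
          have : (0:ℝ) < t := by exact_mod_cast ht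
          exact this.ne'
        rw [div_mul_div_comm, mul_comm ((t:ℝ)+K) (t:ℝ), mul_div_mul_right _ _ (htKpos t).ne']
      have l6 : Tendsto (fun t : ℕ => Cθ / t) atTop (nhds 0) :=
        tendsto_const_div_atTop_nhds_zero_nat Cθ
      have l7 := l6.add (l5.const_mul (2:ℝ))
      rw [mul_zero, add_zero] at l7
      refine l7.congr fun t => ?_
      rw [← mul_div_assoc, ← add_div]
    have hratio : Tendsto (fun t : ℕ => Real.log (L t i x) / t) atTop (nhds 0) := by
      apply squeeze_zero_norm (fun t => ?_) hlogdiv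
      rcases Nat.eq_zero_or_pos t with ht | ht
      · simp [ht]
      · have ht' : (0:ℝ) < t := by exact_mod_cast ht
        rw [Real.norm_eq_abs, abs_div, abs_of_pos ht']
        exact (div_le_div_iff_of_pos_right ht').2 (hLbound t)
    have hlogμ : Tendsto (fun t : ℕ => Real.log (μ (t+1) i x) / t) atTop (nhds c) := by
      have hsum := hratio.add hlogS2
      rw [zero_add] at hsum
      refine hsum.congr fun t => ?_
      rw [hμ' t i x, Real.log_mul (hLpos t i x).ne' (hSpos t x).ne', add_div]
    have hev : ∀ᶠ t : ℕ in atTop, Real.log (μ (t+1) i x) ≤ (c/2) * t := by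
      have h3 : ∀ᶠ t : ℕ in atTop, Real.log (μ (t+1) i x)/t < c/2 :=
        hlogμ.eventually_lt_const (by linarith)
      filter_upwards [h3, eventually_ge_atTop 1] with t ht ht1
      have ht0 : (0:ℝ) < t := by exact_mod_cast ht1
      have := (div_lt_iff₀ ht0).1 ht
      linarith
    have hbot0 : Tendsto (fun t : ℕ => (c/2) * (t:ℝ)) atTop atBot := by
      have hpos : 0 < -(c/2) := by linarith
      have hup : Tendsto (fun t : ℕ => (-(c/2)) * (t:ℝ)) atTop atTop :=
        Tendsto.const_mul_atTop hpos tendsto_natCast_atTop_atTop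
      have hdown := tendsto_neg_atTop_atBot.comp hup
      refine hdown.congr fun t => ?_
      show -((-(c/2)) * (t:ℝ)) = (c/2) * (t:ℝ)
      ring
    have hbot : Tendsto (fun t : ℕ => Real.log (μ (t+1) i x)) atTop atBot :=
      tendsto_atBot_mono' atTop hev hbot0
    have hshift : Tendsto (fun t : ℕ => Real.log (μ t i x)) atTop atBot :=
      (tendsto_add_atTop_iff_nat 1).1 hbot
    have hexp : Tendsto (fun t => Real.exp (Real.log (μ t i x))) atTop (nhds 0) :=
      Real.tendsto_exp_atBot.comp hshift
    exact hexp.congr fun t => Real.exp_log (hμpos t i x)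
  have hmeas : ∀ t i, Measurable (μ t i) := by
    intro t
    induction t with
    | zero =>
      intro i
      have h : μ 0 i = fun _ => (1:ℝ) := funext (hμ0 i)
      rw [h]
      exact measurable_const
    | succ t ih =>
      intro i
      have hLmeas : Measurable (fun x => L t i x) := by
        have hLeq : (fun x => L t i x) = fun x => ∑ k, if X i t x = k then
            πθ i k * ((t:ℝ)+K) / ((sigCount (X i) k t x : ℝ) + 1) else 0 := by
          funext x
          rw [Finset.sum_ite_eq (Finset.univ : Finset (Fin K)) (X i t x)
            (fun k => πθ i k * ((t:ℝ)+K) / ((sigCount (X i) k t x : ℝ) + 1))]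
          simp [hL]
        rw [hLeq]
        refine Finset.measurable_sum _ fun k _ => ?_
        have hset : MeasurableSet {x | X i t x = k} := hX_meas i t (measurableSet_singleton k)
        refine Measurable.ite hset ?_ measurable_const
        refine Measurable.div measurable_const ?_
        have hcnt : (fun x => (sigCount (X i) k t x : ℝ) + 1)
            = fun x => (∑ τ ∈ Finset.range t, if X i τ x = k then (1:ℝ) else 0) + 1 :=
          funext fun x => by rw [sigCount_cast]
        rw [hcnt]
        exact (Finset.measurable_sum _ fun τ _ => Measurable.ite
          (hX_meas i τ (measurableSet_singleton k)) measurable_const measurable_const).add_const 1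
      have hSmeas : Measurable (fun x => S t x) :=
        Finset.measurable_sum _ fun j _ => measurable_const.mul (ih j)
      have h : μ (t+1) i = fun x => L t i x * S t x := funext (hμ' t i)
      rw [h]
      exact hLmeas.mul hSmeas
  intro i ε hε
  have htim : TendstoInMeasure P (fun t => μ t i) atTop 0 :=
    tendstoInMeasure_of_tendsto_ae (fun t => (hmeas t i).aestronglyMeasurable)
      (key.mono fun x hx => hx i)
  have h0 := tendstoInMeasure_iff_dist.1 htim ε hε
  refine tendsto_of_tendsto_of_tendsto_of_le_of_le tendsto_const_nhds h0
    (fun t => zero_le) (fun t => measure_mono fun x hx => ?_)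
  simp only [Set.mem_setOf_eq] at hx ⊢
  rw [Pi.zero_apply, Real.dist_eq]
  exact le_of_lt hx
end
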